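/- arXiv:2112.02545 — 11 statements merged into one kernel-verified Lean document; each statement's English description precedes it below -/
import Mathlib

section
/- Let N ≥ 3 be an integer, α = π/N, t a real number, and for each integer k set ν_k = 2αk + t. Then the sum over k = 1, …, N of cos(ν_k)·cos(ν_{k−1}) equals (N/2)·cos(2α). -/
open Real Finset

lemma aux_sum_exp (N : ℕ) (d c : ℝ)
    (h1 : Complex.exp (d * Complex.I) ≠ 1)
    (hN : Complex.exp (d * Complex.I) ^ N = 1) :
    ∑ k ∈ Finset.Icc 1 N, Complex.exp ((d * k + c) * Complex.I) = 0 := by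
  have : ∑ k ∈ Finset.Icc 1 N, Complex.exp ((d * k + c) * Complex.I)
      = Complex.exp (c * Complex.I) * Complex.exp (d * Complex.I) *
        ∑ k ∈ Finset.range N, (Complex.exp (d * Complex.I)) ^ k := by
    rw [Finset.mul_sum, show Finset.Icc 1 N = Finset.Ico 1 (N+1) by
      rw [Finset.Ico_add_one_right_eq_Icc], Finset.sum_Ico_eq_sum_range]
    simp only [Nat.add_sub_cancel]
    refine Finset.sum_congr rfl fun k _ => ?_
    rw [← Complex.exp_nat_mul, ← Complex.exp_add, ← Complex.exp_add]
    congr 1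
    push_cast
    ring
  rw [this, geom_sum_eq h1, hN]
  simp

lemma aux_sum_cos (N : ℕ) (d c : ℝ)
    (h1 : Complex.exp (d * Complex.I) ≠ 1)
    (hN : Complex.exp (d * Complex.I) ^ N = 1) :
    ∑ k ∈ Finset.Icc 1 N, Real.cos (d * k + c) = 0 := by
  have h0 := aux_sum_exp N d c h1 hN
  have h2 : ∑ k ∈ Finset.Icc 1 N, Real.cos (d * k + c)
      = (∑ k ∈ Finset.Icc 1 N, Complex.exp ((d * k + c) * Complex.I)).re := by
    rw [Complex.re_sum]
    refine Finset.sum_congr rfl fun k _ => ?_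
    rw [show ((d : ℂ) * k + c) = ((d * k + c : ℝ) : ℂ) by push_cast; ring,
      Complex.exp_ofReal_mul_I_re]
  rw [h2, h0, Complex.zero_re]

/-- For `N ≥ 3`, `α = π/N`, `ν_k = 2αk + t`, the sum over `k = 1, …, N` of
`cos(ν_k)·cos(ν_{k−1})` equals `(N/2)·cos(2α)`. -/
theorem sum_cos_mul_cos_pred (N : ℕ) (hN : 3 ≤ N) (t : ℝ) :
    ∑ k ∈ Finset.Icc 1 N,
      Real.cos (2 * (Real.pi / N) * (k : ℝ) + t) *
        Real.cos (2 * (Real.pi / N) * ((k : ℝ) - 1) + t) =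
      ((N : ℝ) / 2) * Real.cos (2 * (Real.pi / N)) := by
  have hNpos : (0 : ℝ) < N := by positivity
  set α := Real.pi / N with hα
  have key : ∀ k : ℝ,
      Real.cos (2 * α * k + t) * Real.cos (2 * α * (k - 1) + t)
        = (Real.cos ((4 * α) * k + (2 * t - 2 * α)) + Real.cos (2 * α)) / 2 := by
    intro k
    have h := Real.two_mul_cos_mul_cos (2 * α * k + t) (2 * α * (k - 1) + t)
    have e1 : 2 * α * k + t - (2 * α * (k - 1) + t) = 2 * α := by ring
    have e2 : 2 * α * k + t + (2 * α * (k - 1) + t) = (4 * α) * k + (2 * t - 2 * α) := by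
      ring
    rw [e1, e2] at h
    linarith
  have hsum0 : ∑ k ∈ Finset.Icc 1 N, Real.cos ((4 * α) * k + (2 * t - 2 * α)) = 0 := by
    apply aux_sum_cos
    · intro h
      rw [Complex.exp_eq_one_iff] at h
      obtain ⟨n, hn⟩ := h
      have h2 : (4 * α : ℝ) = n * (2 * Real.pi) := by
        have him := congrArg Complex.im hn
        push_cast at him
        simpa using him
      have hπ := Real.pi_pos
      rw [hα] at h2
      have hNne : (N : ℝ) ≠ 0 := ne_of_gt hNpos
      have h3 : (2 : ℝ) = n * N := by
        field_simp at h2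
        nlinarith [h2]
      have hN3 : (3:ℝ) ≤ (N:ℝ) := by exact_mod_cast hN
      have h0 : (0:ℝ) ≤ (n:ℝ) := by
        by_contra hneg
        push_neg at hneg
        have : (n:ℝ) ≤ -1 := by
          have : n < 0 := by exact_mod_cast hneg
          exact_mod_cast Int.le_of_lt_add_one (by omega : n < -1 + 1)
        nlinarith
      have hn1 : (1:ℝ) ≤ (n:ℝ) := by
        rcases eq_or_lt_of_le h0 with h|h
        · exfalso; rw [← h] at h3; norm_num at h3
        · have : 0 < n := by exact_mod_cast h
          exact_mod_cast this
      nlinarith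
    · rw [← Complex.exp_nat_mul]
      have hNC : (N : ℂ) ≠ 0 := by
        exact_mod_cast ne_of_gt hNpos
      have he : (N : ℂ) * ((4 * α : ℝ) * Complex.I) = (2:ℤ) * (2 * Real.pi * Complex.I) := by
        rw [hα]
        push_cast
        field_simp
        ring
      rw [he, Complex.exp_int_mul_two_pi_mul_I]
  calc ∑ k ∈ Finset.Icc 1 N,
      Real.cos (2 * α * (k : ℝ) + t) * Real.cos (2 * α * ((k : ℝ) - 1) + t)
      = ∑ k ∈ Finset.Icc 1 N,
        (Real.cos ((4 * α) * k + (2 * t - 2 * α)) + Real.cos (2 * α)) / 2 := by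
        exact Finset.sum_congr rfl fun k _ => key k
    _ = (∑ k ∈ Finset.Icc 1 N, Real.cos ((4 * α) * k + (2 * t - 2 * α))) / 2
        + (N : ℝ) * Real.cos (2 * α) / 2 := by
        rw [← Finset.sum_div, Finset.sum_add_distrib, Finset.sum_const, Nat.card_Icc]
        simp only [Nat.add_sub_cancel, nsmul_eq_mul, add_div]
    _ = ((N : ℝ) / 2) * Real.cos (2 * α) := by rw [hsum0]; ring
end

section
/- The sum over k = 1, …, N of 1/s_k² equals N·(d²·cos²α + (d⁴ + 1)/4)/((1 − d²)²·sin²α); in particular it does not depend on t. -/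
open Real Finset

private lemma sum_range_cos_eq_zero (N : ℕ) (β c : ℝ)
    (h1 : Complex.exp ((β : ℂ) * Complex.I) ≠ 1)
    (h2 : Complex.exp ((β : ℂ) * Complex.I) ^ N = 1) :
    ∑ j ∈ Finset.range N, Real.cos (β * (j + 1) + c) = 0 := by
  have key : ∑ j ∈ Finset.range N,
      Complex.exp (((β * (j + 1) + c : ℝ) : ℂ) * Complex.I) = 0 := by
    have h3 : ∀ j ∈ Finset.range N,
        Complex.exp (((β * (j + 1) + c : ℝ) : ℂ) * Complex.I)
          = Complex.exp (((c + β : ℝ) : ℂ) * Complex.I) *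
              (Complex.exp ((β : ℂ) * Complex.I)) ^ j := by
      intro j _
      rw [← Complex.exp_nat_mul, ← Complex.exp_add]
      congr 1
      push_cast
      ring
    rw [Finset.sum_congr rfl h3, ← Finset.mul_sum, geom_sum_eq h1, h2]
    simp
  have h4 := congrArg Complex.re key
  rw [Complex.re_sum] at h4
  simp only [Complex.exp_ofReal_mul_I_re] at h4
  simpa using h4

private lemma exp_mul_I_ne_one (x : ℝ) (hx0 : 0 < x) (hx1 : x < 2 * Real.pi) :
    Complex.exp ((x : ℂ) * Complex.I) ≠ 1 := by
  intro h
  rw [Complex.exp_eq_one_iff] at h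
  obtain ⟨n, hn⟩ := h
  have him := congrArg Complex.im hn
  simp [Complex.mul_im, Complex.mul_re] at him
  -- him : x = n * (2 * π)  (roughly)
  have hπ := Real.pi_pos
  have hn0 : (0:ℝ) < (n : ℝ) := by nlinarith
  have hn1 : (1:ℝ) ≤ (n : ℝ) := by
    have : (0:ℤ) < n := by exact_mod_cast hn0
    exact_mod_cast this
  nlinarith

/-- Over the Poncelet family of harmonic polygons, the sum of inverse squared
sidelengths is invariant and given by
`N·(d²·cos²α + (d⁴ + 1)/4)/((1 − d²)²·sin²α)`; in particular it does not
depend on `t`. -/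
theorem sum_inv_sq_sidelengths (N : ℕ) (hN : 3 ≤ N) (d t : ℝ) (hd : |d| < 1)
    (z w : ℤ → ℂ) (s : ℤ → ℝ)
    (hz : ∀ k : ℤ, z k = Complex.exp (Complex.I *
      ((2 * (Real.pi / N) * (k : ℝ) + t : ℝ) : ℂ)))
    (hw : ∀ k : ℤ, w k = ((d : ℂ) * (starRingEnd ℂ) (z k) - 1) /
      ((starRingEnd ℂ) (z k) - (d : ℂ)))
    (hs : ∀ k : ℤ, s k = ‖w k - w (k - 1)‖) :
    ∑ k ∈ Finset.Icc (1 : ℤ) N, 1 / (s k) ^ 2 =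
      (N : ℝ) * (d ^ 2 * Real.cos (Real.pi / N) ^ 2 + (d ^ 4 + 1) / 4) /
        ((1 - d ^ 2) ^ 2 * Real.sin (Real.pi / N) ^ 2) := by
  have hπ := Real.pi_pos
  have hN0 : (0:ℝ) < (N : ℝ) := by
    have : 0 < N := by omega
    exact_mod_cast this
  have hN3 : (3:ℝ) ≤ (N : ℝ) := by exact_mod_cast hN
  set α := Real.pi / N with hαdef
  have hα0 : 0 < α := by positivity
  have hαlt : α < Real.pi := by
    rw [hαdef, div_lt_iff₀ hN0]; nlinarith
  have hsin : 0 < Real.sin α := Real.sin_pos_of_pos_of_lt_pi hα0 hαlt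
  have hdlt := abs_lt.mp hd
  have hd2 : (0:ℝ) < 1 - d ^ 2 := by nlinarith [hdlt.1, hdlt.2]
  set θ : ℤ → ℝ := fun k => 2 * α * k + t with hθdef
  have hz' : ∀ k : ℤ, z k = Complex.exp ((θ k : ℝ) * Complex.I) := by
    intro k
    rw [hz k, mul_comm]
  have hre : ∀ k, (z k).re = Real.cos (θ k) := fun k => by
    rw [hz' k, Complex.exp_ofReal_mul_I_re]
  have him : ∀ k, (z k).im = Real.sin (θ k) := fun k => by
    rw [hz' k, Complex.exp_ofReal_mul_I_im]
  have hone : ∀ u : ℝ, Real.sin u ^ 2 + Real.cos u ^ 2 = 1 :=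
    fun u => Real.sin_sq_add_cos_sq u
  have hnormSq : ∀ k, Complex.normSq (z k) = 1 := by
    intro k
    rw [Complex.normSq_apply, hre, him]
    nlinarith [hone (θ k)]
  have hz0 : ∀ k, z k ≠ 0 := by
    intro k h
    have := hnormSq k
    rw [h] at this
    simp at this
  have hconj : ∀ k, (starRingEnd ℂ) (z k) * z k = 1 := by
    intro k
    rw [mul_comm, Complex.mul_conj, hnormSq]
    norm_num
  have hden : ∀ k, (1:ℂ) - (d:ℂ) * z k ≠ 0 := by
    intro k h
    have h1 : (d:ℂ) * z k = 1 := by linear_combination -h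
    have h2 := congrArg (‖·‖) h1
    rw [norm_mul, Complex.norm_real, Real.norm_eq_abs] at h2
    have habs : ‖z k‖ = 1 := by
      have := hnormSq k; rw [Complex.normSq_eq_norm_sq] at this
      exact (pow_eq_one_iff_of_nonneg (norm_nonneg _) two_ne_zero).mp this
    rw [habs, mul_one, norm_one] at h2
    linarith [hd, le_of_eq h2]
  have hdenconj : ∀ k, (starRingEnd ℂ) (z k) - (d:ℂ) ≠ 0 := by
    intro k h
    apply hden k
    have : (1:ℂ) - (d:ℂ) * z k = ((starRingEnd ℂ) (z k) - (d:ℂ)) * z k := by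
      rw [sub_mul, hconj k]
    rw [this, h, zero_mul]
  set Q : ℤ → ℝ := fun k => 1 - 2 * d * Real.cos (θ k) + d ^ 2 with hQdef
  have hQ : ∀ k, Complex.normSq ((1:ℂ) - (d:ℂ) * z k) = Q k := by
    intro k
    rw [Complex.normSq_apply]
    simp only [Complex.sub_re, Complex.sub_im, Complex.mul_re, Complex.mul_im,
      Complex.one_re, Complex.one_im, Complex.ofReal_re, Complex.ofReal_im,
      hre k, him k, hQdef]
    nlinarith [hone (θ k)]
  have hQpos : ∀ k, 0 < Q k := by
    intro k
    rw [← hQ k]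
    exact Complex.normSq_pos.mpr (hden k)
  have hconj' : ∀ k, (starRingEnd ℂ) (z k) = (z k)⁻¹ := by
    intro k
    exact eq_inv_of_mul_eq_one_left (hconj k)
  have hwk : ∀ k, w k = ((d:ℂ) - z k) / (1 - (d:ℂ) * z k) := by
    intro k
    rw [hw k, div_eq_div_iff (hdenconj k) (hden k)]
    linear_combination (1 - (d:ℂ)^2) * hconj k
  have hwdiff : ∀ k : ℤ, w k - w (k - 1) =
      ((1 - d ^ 2 : ℝ) : ℂ) * (z (k - 1) - z k) /
        ((1 - (d:ℂ) * z k) * (1 - (d:ℂ) * z (k - 1))) := by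
    intro k
    rw [hwk k, hwk (k - 1), div_sub_div _ _ (hden k) (hden (k - 1))]
    congr 1
    push_cast
    ring
  have hzz : ∀ k : ℤ, Complex.normSq (z (k - 1) - z k) = 4 * Real.sin α ^ 2 := by
    intro k
    rw [Complex.normSq_apply, Complex.sub_re, Complex.sub_im, hre, hre, him, him]
    have hth : θ k - θ (k - 1) = 2 * α := by
      simp only [hθdef]
      push_cast
      ring
    have hcos : Real.cos (θ k) * Real.cos (θ (k - 1)) +
        Real.sin (θ k) * Real.sin (θ (k - 1)) = Real.cos (2 * α) := by
      rw [← Real.cos_sub, hth]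
    have hc2 : Real.cos (2 * α) = 1 - 2 * Real.sin α ^ 2 := by
      rw [Real.cos_two_mul]
      nlinarith [hone α]
    linear_combination hone (θ (k - 1)) + hone (θ k) - 2 * hcos - 2 * hc2
  have hterm : ∀ k : ℤ, 1 / (s k) ^ 2 =
      Q k * Q (k - 1) / (4 * Real.sin α ^ 2 * (1 - d ^ 2) ^ 2) := by
    intro k
    have hs2 : (s k) ^ 2 = (1 - d ^ 2) ^ 2 * (4 * Real.sin α ^ 2) / (Q k * Q (k - 1)) := by
      rw [hs k, Complex.sq_norm, hwdiff k, Complex.normSq_div, Complex.normSq_mul,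
        Complex.normSq_mul, hQ, hQ, hzz, Complex.normSq_ofReal]
      ring
    rw [hs2, one_div_div]
    congr 1
    ring
  -- reindex the sum
  have hinj : Function.Injective (fun j : ℕ => (j:ℤ) + 1) := by
    intro a b h; dsimp only at h; omega
  have hmap : Finset.Icc (1:ℤ) (N:ℤ) =
      Finset.map ⟨fun j : ℕ => (j:ℤ) + 1, hinj⟩ (Finset.range N) := by
    ext x
    simp only [Finset.mem_Icc, Finset.mem_map, Finset.mem_range,
      Function.Embedding.coeFn_mk]
    constructor
    · rintro ⟨h1, h2⟩
      exact ⟨(x - 1).toNat, by omega, by omega⟩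
    · rintro ⟨a, ha, rfl⟩
      omega
  rw [hmap, Finset.sum_map]
  simp only [Function.Embedding.coeFn_mk]
  -- trig sums vanish
  have hNC : ((N:ℕ):ℂ) ≠ 0 := by
    exact_mod_cast ne_of_gt hN0
  have e1 : Complex.exp (((2*α : ℝ) : ℂ) * Complex.I) ^ N = 1 := by
    rw [← Complex.exp_nat_mul]
    have harg : ((N:ℕ):ℂ) * (((2*α : ℝ) : ℂ) * Complex.I) = 2 * Real.pi * Complex.I := by
      push_cast [hαdef]
      field_simp
    rw [harg, Complex.exp_two_pi_mul_I]
  have e2 : Complex.exp (((4*α : ℝ) : ℂ) * Complex.I) ^ N = 1 := by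
    rw [← Complex.exp_nat_mul]
    have harg : ((N:ℕ):ℂ) * (((4*α : ℝ) : ℂ) * Complex.I) = ((2:ℕ):ℂ) * (2 * Real.pi * Complex.I) := by
      push_cast [hαdef]
      field_simp
      ring
    rw [harg, Complex.exp_nat_mul, Complex.exp_two_pi_mul_I, one_pow]
  have hα3 : α * 3 ≤ Real.pi := by
    rw [hαdef, div_mul_eq_mul_div, div_le_iff₀ hN0]
    nlinarith
  have hne1 : Complex.exp (((2*α : ℝ) : ℂ) * Complex.I) ≠ 1 :=
    exp_mul_I_ne_one (2*α) (by positivity) (by nlinarith)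
  have hne2 : Complex.exp (((4*α : ℝ) : ℂ) * Complex.I) ≠ 1 :=
    exp_mul_I_ne_one (4*α) (by positivity) (by nlinarith)
  have S0 := sum_range_cos_eq_zero N (2*α) t hne1 e1
  have S1 := sum_range_cos_eq_zero N (2*α) (t - 2*α) hne1 e1
  have S2 := sum_range_cos_eq_zero N (4*α) (2*t - 2*α) hne2 e2
  -- termwise expansion
  have hexp : ∀ j ∈ Finset.range N, Q ((j:ℤ) + 1) * Q ((j:ℤ) + 1 - 1) =
      ((1 + d ^ 2) ^ 2 + 2 * d ^ 2 * Real.cos (2*α))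
      + 2 * d ^ 2 * Real.cos (4*α * ((j:ℝ) + 1) + (2*t - 2*α))
      - 2 * d * (1 + d ^ 2) * Real.cos (2*α * ((j:ℝ) + 1) + t)
      - 2 * d * (1 + d ^ 2) * Real.cos (2*α * ((j:ℝ) + 1) + (t - 2*α)) := by
    intro j _
    have eθ1 : θ ((j:ℤ) + 1) = 2*α * ((j:ℝ) + 1) + t := by
      simp only [hθdef]
      push_cast
      ring
    have eθ2 : θ ((j:ℤ) + 1 - 1) = 2*α * ((j:ℝ) + 1) + (t - 2*α) := by
      simp only [hθdef]
      push_cast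
      ring
    have h5 := Real.cos_sub (2*α * ((j:ℝ) + 1) + t) (2*α * ((j:ℝ) + 1) + (t - 2*α))
    have h6 := Real.cos_add (2*α * ((j:ℝ) + 1) + t) (2*α * ((j:ℝ) + 1) + (t - 2*α))
    have hxy : (2*α * ((j:ℝ) + 1) + t) - (2*α * ((j:ℝ) + 1) + (t - 2*α)) = 2*α := by ring
    have hxy2 : (2*α * ((j:ℝ) + 1) + t) + (2*α * ((j:ℝ) + 1) + (t - 2*α))
        = 4*α * ((j:ℝ) + 1) + (2*t - 2*α) := by ring
    rw [hxy] at h5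
    rw [hxy2] at h6
    simp only [hQdef, eθ1, eθ2]
    linear_combination (-2*d^2) * h5 + (-2*d^2) * h6
  simp only [hterm]
  rw [← Finset.sum_div]
  calc (∑ j ∈ Finset.range N, Q ((j:ℤ) + 1) * Q ((j:ℤ) + 1 - 1)) /
          (4 * Real.sin α ^ 2 * (1 - d ^ 2) ^ 2)
      = ((N:ℝ) * ((1 + d ^ 2) ^ 2 + 2 * d ^ 2 * Real.cos (2*α))) /
          (4 * Real.sin α ^ 2 * (1 - d ^ 2) ^ 2) := by
        rw [Finset.sum_congr rfl hexp]
        simp only [Finset.sum_sub_distrib, Finset.sum_add_distrib, ← Finset.mul_sum,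
          S0, S1, S2, mul_zero, sub_zero, add_zero, Finset.sum_const,
          Finset.card_range, nsmul_eq_mul]
        ring
    _ = (N : ℝ) * (d ^ 2 * Real.cos α ^ 2 + (d ^ 4 + 1) / 4) /
          ((1 - d ^ 2) ^ 2 * Real.sin α ^ 2) := by
        have hA : (0:ℝ) < Real.sin α ^ 2 := pow_pos hsin 2
        have hB : (0:ℝ) < (1 - d ^ 2) ^ 2 := pow_pos hd2 2
        have hc1 : (0:ℝ) < 4 * Real.sin α ^ 2 * (1 - d ^ 2) ^ 2 :=
          mul_pos (mul_pos (by norm_num) hA) hB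
        have hc2 : (0:ℝ) < (1 - d ^ 2) ^ 2 * Real.sin α ^ 2 := mul_pos hB hA
        rw [Real.cos_two_mul α, div_eq_div_iff (ne_of_gt hc1) (ne_of_gt hc2)]
        ring
end

section
/- Assume d ≠ 0 and that z_k has nonzero imaginary part (i.e., sin(2αk + t) ≠ 0). Then the four points 0, w_k, 1/d, and z_k are concyclic: there exist a point c ∈ ℂ and a radius r > 0 with |0 − c| = |w_k − c| = |1/d − c| = |z_k − c| = r. -/
open Real

/-- If `d ≠ 0` and `z_k` has nonzero imaginary part, then the four points
`0`, `w_k`, `1/d`, `z_k` are concyclic. -/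
theorem concyclic_zero_w_invd_z (N : ℕ) (hN : 3 ≤ N) (d t : ℝ) (hd : |d| < 1)
    (hd0 : d ≠ 0) (z w : ℤ → ℂ)
    (hz : ∀ k : ℤ, z k = Complex.exp (Complex.I *
      ((2 * (Real.pi / N) * (k : ℝ) + t : ℝ) : ℂ)))
    (hw : ∀ k : ℤ, w k = ((d : ℂ) * (starRingEnd ℂ) (z k) - 1) /
      ((starRingEnd ℂ) (z k) - (d : ℂ)))
    (k : ℤ) (hk : Real.sin (2 * (Real.pi / N) * (k : ℝ) + t) ≠ 0) :
    ∃ (c : ℂ) (r : ℝ), 0 < r ∧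
      ‖0 - c‖ = r ∧
      ‖w k - c‖ = r ∧
      ‖(1 / d : ℝ) - c‖ = r ∧
      ‖z k - c‖ = r := by
  set θ : ℝ := 2 * (Real.pi / N) * (k : ℝ) + t with hθ
  set x : ℝ := Real.cos θ with hx
  set y : ℝ := Real.sin θ with hy0
  have hy : y ≠ 0 := hk
  have h1 : x ^ 2 + y ^ 2 = 1 := by
    rw [hx, hy0]; exact Real.cos_sq_add_sin_sq θ
  have hzk : z k = (x : ℂ) + (y : ℂ) * Complex.I := by
    rw [hz k, mul_comm, Complex.exp_mul_I, ← Complex.ofReal_cos, ← Complex.ofReal_sin]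
  have hzb : (starRingEnd ℂ) (z k) = (x : ℂ) - (y : ℂ) * Complex.I := by
    rw [hzk]; simp [Complex.conj_ofReal, sub_eq_add_neg]
  have hden : (x : ℂ) - (y : ℂ) * Complex.I - (d : ℂ) ≠ 0 := by
    intro h
    have := congrArg Complex.im h
    simp at this
    exact hy this
  set a : ℝ := 1 / (2 * d) with ha
  set b : ℝ := (d - x) / (2 * d * y) with hb
  have habs : ∀ u v : ℂ, Complex.normSq u = Complex.normSq v →
      ‖u‖ = ‖v‖ := fun u v h => by
    rw [Complex.norm_def, Complex.norm_def, h]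
  refine ⟨(a : ℂ) + (b : ℂ) * Complex.I, ‖(a : ℂ) + (b : ℂ) * Complex.I‖, ?_, ?_, ?_, ?_, ?_⟩
  · rw [norm_pos_iff]
    intro h
    have := congrArg Complex.re h
    simp [ha] at this
    exact hd0 this
  · rw [zero_sub, norm_neg]
  · -- w
    have hwc : w k - ((a : ℂ) + (b : ℂ) * Complex.I) =
        (((d : ℂ) * ((x : ℂ) - (y : ℂ) * Complex.I) - 1) -
          ((a : ℂ) + (b : ℂ) * Complex.I) * ((x : ℂ) - (y : ℂ) * Complex.I - (d : ℂ))) /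
          ((x : ℂ) - (y : ℂ) * Complex.I - (d : ℂ)) := by
      rw [hw k, hzb]
      field_simp
    apply habs
    rw [hwc, map_div₀, div_eq_iff (by simpa using hden)]
    simp only [Complex.normSq_apply, Complex.sub_re, Complex.sub_im, Complex.add_re,
      Complex.add_im, Complex.mul_re, Complex.mul_im, Complex.ofReal_re, Complex.ofReal_im,
      Complex.I_re, Complex.I_im, Complex.one_re, Complex.one_im]
    rw [ha, hb]
    field_simp
    linear_combination (4*d^2*y^2*(d^2-1)) * h1
  · apply habs
    simp only [Complex.normSq_apply, Complex.sub_re, Complex.sub_im, Complex.add_re,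
      Complex.add_im, Complex.mul_re, Complex.mul_im, Complex.ofReal_re, Complex.ofReal_im,
      Complex.I_re, Complex.I_im]
    rw [ha]
    field_simp
    ring
  · apply habs
    rw [hzk]
    simp only [Complex.normSq_apply, Complex.sub_re, Complex.sub_im, Complex.add_re,
      Complex.add_im, Complex.mul_re, Complex.mul_im, Complex.ofReal_re, Complex.ofReal_im,
      Complex.I_re, Complex.I_im]
    rw [ha, hb]
    field_simp
    linear_combination (4*d^2*y^2) * h1
end

section
/- Assume d ≠ 0 and sin(2αk + t) ≠ 0 for every k = 1, …, N. For each k, let c_k ∈ ℂ and r_k > 0 satisfy |w_k − c_k| = |d − c_k| = |1/d − c_k| = r_k (so the circle of center c_k and radius r_k is the generalized Apollonius circle through w_k and the two limiting points d and 1/d). Then the sum over k = 1, …, N of 1/r_k² equals 2N/(1/d − d)²; in particular it does not depend on t. -/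
open Real Finset

private lemma key_algebra (d a b x y r u v : ℝ) (hd0 : d ≠ 0) (hd2 : 1 - d^2 ≠ 0) (hb : b ≠ 0)
    (hab : a^2 + b^2 = 1)
    (hD : (1+d^2-2*d*a) ≠ 0)
    (hu : u = (2*d - (1+d^2)*a)/(1+d^2-2*d*a))
    (hv : v = -((1-d^2)*b)/(1+d^2-2*d*a))
    (E1 : (u - x)^2 + (v - y)^2 = r^2)
    (E2 : (d - x)^2 + y^2 = r^2)
    (E3 : (1/d - x)^2 + y^2 = r^2) :
    1/r^2 = 4*d^2*b^2/(1-d^2)^2 := by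
  have hx : 2*d*x = 1 + d^2 := by
    have h2 : (d - 1/d) * (d + 1/d - 2*x) = 0 := by linear_combination E2 - E3
    have hdd : d - 1/d ≠ 0 := by
      intro h
      apply hd2
      field_simp at h
      nlinarith [h]
    have h3 := (mul_eq_zero.mp h2).resolve_left hdd
    have hx' : d + 1/d = 2*x := by linarith
    field_simp at hx'
    linarith
  have huv : u^2 + v^2 = 1 := by
    rw [hu, hv]
    field_simp
    linear_combination (1-d^2)^2 * hab
  have hr2 : r^2 = x^2 + y^2 - 1 := by linear_combination -E2 - hx
  have hwc : u*x + v*y = 1 := by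
    linear_combination (-1/2)*E1 + (-1/2)*hr2 + (1/2)*huv
  have hy : y = -(a*(1-d^2))/(2*d*b) := by
    rw [hu, hv] at hwc
    field_simp at hwc ⊢
    have h5 : (1-d^2) * (y*(2*d*b) + a*(1-d^2)) = 0 := by
      linear_combination (-(2*d))*hwc + (2*d-(1+d^2)*a)*hx
    have h6 := (mul_eq_zero.mp h5).resolve_left hd2
    linarith
  have hrr : r^2 = (1-d^2)^2/(4*d^2*b^2) := by
    have h4 : 4*d^2*x^2 = (1+d^2)^2 := by nlinarith [hx]
    rw [hr2, hy]
    field_simp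
    linear_combination (4*b^2)*h4 + (4*(1-d^2)^2)*hab
  rw [hrr, one_div_div]

private lemma w_re_im (a b d : ℝ) (hb : b ≠ 0) (w : ℂ)
    (hD : 1 + d^2 - 2*d*a ≠ 0) (hab : a^2+b^2 = 1)
    (hw : w = ((d:ℂ) * ((a:ℂ) - (b:ℂ)*Complex.I) - 1) / (((a:ℂ) - (b:ℂ)*Complex.I) - (d:ℂ))) :
    w.re = (2*d-(1+d^2)*a)/(1+d^2-2*d*a) ∧ w.im = -((1-d^2)*b)/(1+d^2-2*d*a) := by
  have hQ : (a-d)*(a-d)+b*b ≠ 0 :=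
    ne_of_gt (by nlinarith [mul_self_nonneg (a-d), mul_self_pos.mpr hb])
  rw [hw]
  constructor
  · simp only [Complex.div_re, Complex.normSq_apply]
    simp
    rw [← add_div, div_eq_div_iff hQ hD]
    linear_combination (d*(1+d^2-2*d*a) - (2*d-(1+d^2)*a)) * hab
  · simp only [Complex.div_im, Complex.normSq_apply]
    simp
    rw [← sub_div, div_eq_div_iff hQ hD]
    linear_combination ((1-d^2)*b) * hab

private lemma icc_map' (N : ℕ) (f : ℤ → ℂ) :
    ∑ k ∈ Finset.Icc (1:ℤ) N, f k = ∑ j ∈ Finset.range N, f ((j:ℤ)+1) := by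
  refine Finset.sum_nbij' (fun k : ℤ => (k-1).toNat) (fun j : ℕ => (j:ℤ)+1) ?_ ?_ ?_ ?_ ?_
  · intro a ha; simp only [Finset.mem_Icc] at ha; simp only [Finset.mem_range]; omega
  · intro a ha; simp only [Finset.mem_range] at ha; simp only [Finset.mem_Icc]; omega
  · intro a ha; simp only [Finset.mem_Icc] at ha; omega
  · intro a ha; simp only [Finset.mem_range] at ha; omega
  · intro a ha; simp only [Finset.mem_Icc] at ha; congr 1; omega

private lemma sum_cos_zero' (N : ℕ) (hN : 3 ≤ N) (s : ℝ) :
    ∑ k ∈ Finset.Icc (1:ℤ) N, Real.cos (4 * π / N * (k:ℝ) + s) = 0 := by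
  have hN0 : (N:ℝ) ≠ 0 := by positivity
  have hNC : (N:ℂ) ≠ 0 := by exact_mod_cast hN0
  set ζ : ℂ := Complex.exp ((4 * π / N : ℝ) * Complex.I) with hζ
  have hζN : ζ ^ N = 1 := by
    rw [hζ, ← Complex.exp_nat_mul]
    rw [show (N:ℂ) * ((4 * π / N : ℝ) * Complex.I) = (2:ℕ) * (2 * π * Complex.I) by
      push_cast; field_simp [hNC]; ring]
    rw [Complex.exp_nat_mul, Complex.exp_two_pi_mul_I, one_pow]
  have hζ1 : ζ ≠ 1 := by
    rw [hζ, Ne, Complex.exp_eq_one_iff]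
    rintro ⟨n, hn⟩
    have him := congrArg Complex.im hn
    have hπ := Real.pi_pos
    simp [Complex.ofReal_mul] at him
    have h1 : (n:ℝ) * N = 2 := by
      field_simp at him
      nlinarith [him]
    have h2 : n * (N:ℤ) = 2 := by exact_mod_cast h1
    have h3 : (N:ℤ) ≤ 2 := Int.le_of_dvd (by norm_num) ⟨n, by linarith [h2]⟩
    omega
  have hgeom : ∑ j ∈ Finset.range N, ζ ^ j = 0 := by
    rw [geom_sum_eq hζ1, hζN]; simp
  have hterm : ∀ j : ℕ, Complex.exp (((4*π/N*((j:ℝ)+1) + s : ℝ)) * Complex.I)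
      = Complex.exp ((s:ℝ)*Complex.I) * ζ^(j+1) := by
    intro j
    rw [hζ, ← Complex.exp_nat_mul, ← Complex.exp_add]
    congr 1
    push_cast
    ring
  have hsum : ∑ k ∈ Finset.Icc (1:ℤ) N,
      Complex.exp (((4*π/N*(k:ℝ) + s : ℝ)) * Complex.I) = 0 := by
    rw [icc_map' N (fun k => Complex.exp (((4*π/N*(k:ℝ) + s : ℝ)) * Complex.I))]
    calc ∑ j ∈ Finset.range N, Complex.exp (((4*π/N*(((j:ℤ)+1 : ℤ):ℝ) + s : ℝ)) * Complex.I)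
        = ∑ j ∈ Finset.range N, Complex.exp ((s:ℝ)*Complex.I) * ζ * ζ^j := by
          apply Finset.sum_congr rfl
          intro j _
          have h := hterm j
          push_cast at h ⊢
          rw [h, pow_succ']
          ring
      _ = 0 := by rw [← Finset.mul_sum, hgeom, mul_zero]
  calc ∑ k ∈ Finset.Icc (1:ℤ) N, Real.cos (4 * π / N * (k:ℝ) + s)
      = (∑ k ∈ Finset.Icc (1:ℤ) N,
          Complex.exp (((4*π/N*(k:ℝ) + s : ℝ)) * Complex.I)).re := by
        rw [Complex.re_sum]
        exact Finset.sum_congr rfl fun k _ => (Complex.exp_ofReal_mul_I_re _).symm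
    _ = 0 := by rw [hsum]; rfl

private lemma sum_sin_sq' (N : ℕ) (hN : 3 ≤ N) (t : ℝ) :
    ∑ k ∈ Finset.Icc (1:ℤ) N, Real.sin (2 * (π / N) * (k:ℝ) + t) ^ 2 = N / 2 := by
  have h := sum_cos_zero' N hN (2*t)
  have hcard : (Finset.Icc (1:ℤ) N).card = N := by
    rw [Int.card_Icc]; simp
  calc ∑ k ∈ Finset.Icc (1:ℤ) N, Real.sin (2 * (π / N) * (k:ℝ) + t) ^ 2
      = ∑ k ∈ Finset.Icc (1:ℤ) N, (1/2 - Real.cos (4 * π / N * (k:ℝ) + 2*t)/2) := by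
        apply Finset.sum_congr rfl
        intro k _
        have harg : 4*π/N*(k:ℝ) + 2*t = 2*(2*(π/N)*(k:ℝ) + t) := by ring
        rw [harg, Real.cos_two_mul]
        have := Real.sin_sq_add_cos_sq (2*(π/N)*(k:ℝ) + t)
        linarith
    _ = N / 2 := by
        rw [Finset.sum_sub_distrib, Finset.sum_const, hcard, ← Finset.sum_div, h]
        simp
        ring

/-- Over the Poncelet family of harmonic polygons, the sum of the inverse squared
radii of the generalized Apollonius circles (through `w_k` and the two limiting
points `d` and `1/d`) is invariant and given by `2N/(1/d − d)²`; in particular it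
does not depend on `t`. -/
theorem sum_inv_sq_apollonius_radii (N : ℕ) (hN : 3 ≤ N) (d t : ℝ) (hd : |d| < 1)
    (hd0 : d ≠ 0) (z w : ℤ → ℂ)
    (hz : ∀ k : ℤ, z k = Complex.exp (Complex.I *
      ((2 * (Real.pi / N) * (k : ℝ) + t : ℝ) : ℂ)))
    (hw : ∀ k : ℤ, w k = ((d : ℂ) * (starRingEnd ℂ) (z k) - 1) /
      ((starRingEnd ℂ) (z k) - (d : ℂ)))
    (hsin : ∀ k ∈ Finset.Icc (1 : ℤ) N,
      Real.sin (2 * (Real.pi / N) * (k : ℝ) + t) ≠ 0)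
    (c : ℤ → ℂ) (r : ℤ → ℝ) (hr : ∀ k ∈ Finset.Icc (1 : ℤ) N, 0 < r k)
    (hc : ∀ k ∈ Finset.Icc (1 : ℤ) N,
      ‖w k - c k‖ = r k ∧
      ‖(d : ℂ) - c k‖ = r k ∧
      ‖((1 / d : ℝ) : ℂ) - c k‖ = r k) :
    ∑ k ∈ Finset.Icc (1 : ℤ) N, 1 / (r k) ^ 2 =
      2 * (N : ℝ) / (1 / d - d) ^ 2 := by
  have hd2 : (1:ℝ) - d^2 ≠ 0 := by
    have h := abs_lt.mp hd
    nlinarith [h.1, h.2]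
  have key : ∀ k ∈ Finset.Icc (1:ℤ) N,
      1/(r k)^2 = 4*d^2/(1-d^2)^2 * Real.sin (2*(π/N)*(k:ℝ)+t)^2 := by
    intro k hk
    have hb : Real.sin (2*(π/N)*(k:ℝ)+t) ≠ 0 := hsin k hk
    have hab : Real.cos (2*(π/N)*(k:ℝ)+t)^2 + Real.sin (2*(π/N)*(k:ℝ)+t)^2 = 1 := by
      have := Real.sin_sq_add_cos_sq (2*(π/N)*(k:ℝ)+t)
      linarith
    have hb2 : 0 < Real.sin (2*(π/N)*(k:ℝ)+t)^2 := by positivity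
    have hD0 : 0 < 1+d^2-2*d*Real.cos (2*(π/N)*(k:ℝ)+t) := by
      nlinarith [sq_nonneg (Real.cos (2*(π/N)*(k:ℝ)+t)-d), hb2, hab]
    have hD : (1+d^2-2*d*Real.cos (2*(π/N)*(k:ℝ)+t)) ≠ 0 := ne_of_gt hD0
    have hzc : (starRingEnd ℂ) (z k) = ((Real.cos (2*(π/N)*(k:ℝ)+t) : ℝ):ℂ)
        - ((Real.sin (2*(π/N)*(k:ℝ)+t) : ℝ):ℂ)*Complex.I := by
      rw [hz k, mul_comm, Complex.exp_mul_I, ← Complex.ofReal_cos, ← Complex.ofReal_sin]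
      simp only [map_add, map_mul, Complex.conj_ofReal, Complex.conj_I]
      ring
    have hwri := w_re_im (Real.cos (2*(π/N)*(k:ℝ)+t)) (Real.sin (2*(π/N)*(k:ℝ)+t)) d
      hb (w k) hD hab (by rw [hw k, hzc])
    obtain ⟨h1, h2, h3⟩ := hc k hk
    have e1 : ((w k).re - (c k).re)^2 + ((w k).im - (c k).im)^2 = (r k)^2 := by
      have e1' : ‖w k - c k‖^2 = (r k)^2 := by rw [h1]
      rw [Complex.sq_norm, Complex.normSq_apply] at e1'
      simp only [Complex.sub_re, Complex.sub_im] at e1'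
      linear_combination e1'
    have e2 : (d - (c k).re)^2 + ((c k).im)^2 = (r k)^2 := by
      have e2' : ‖(d:ℂ) - c k‖^2 = (r k)^2 := by rw [h2]
      rw [Complex.sq_norm, Complex.normSq_apply] at e2'
      simp at e2'
      linear_combination e2'
    have e3 : (1/d - (c k).re)^2 + ((c k).im)^2 = (r k)^2 := by
      have e3' : ‖((1/d : ℝ):ℂ) - c k‖^2 = (r k)^2 := by rw [h3]
      rw [Complex.sq_norm, Complex.normSq_apply] at e3'
      simp at e3'
      linear_combination e3'
    have hres := key_algebra d (Real.cos (2*(π/N)*(k:ℝ)+t)) (Real.sin (2*(π/N)*(k:ℝ)+t))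
      ((c k).re) ((c k).im) (r k) ((w k).re) ((w k).im)
      hd0 hd2 hb hab hD hwri.1 hwri.2 e1 e2 e3
    rw [hres]
    ring
  rw [Finset.sum_congr rfl key, ← Finset.mul_sum, sum_sin_sq' N hN t]
  have hN0 : (N:ℝ) ≠ 0 := by positivity
  have h5 : (1/d - d)^2 = (1-d^2)^2/d^2 := by
    field_simp
  have h6 : ((1-d^2)^2) ≠ 0 := pow_ne_zero 2 hd2
  rw [h5, div_div_eq_mul_div]
  field_simp [h6]
  ring
end

section
/- For every index k, the cotangent of the interior angle θ_k of the harmonic N-gon at w_k is given by cot(θ_k) = −2d·cos(2αk + t)/((d² − 1)·sin(2α)) + ρ·cot(2α). -/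
open Real

set_option maxHeartbeats 1000000 in
theorem aux_cot (d cφ cβ sβ : ℝ) (hd2 : d^2 < 1) (hcφ : cφ^2 ≤ 1)
    (hsβ : 0 < sβ) (hcβ : cβ < 1) (ζ em x y : ℂ)
    (hζu : ζ * (starRingEnd ℂ) ζ = 1)
    (hζsum : ζ + (starRingEnd ℂ) ζ = 2*(cφ:ℂ))
    (hemu : em * (starRingEnd ℂ) em = 1)
    (hemsum : em + (starRingEnd ℂ) em = 2*(cβ:ℂ))
    (hemdiff : em - (starRingEnd ℂ) em = 2*(sβ:ℂ)*Complex.I)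
    (hx : x = ((d:ℂ) - ζ*(starRingEnd ℂ) em)/(1 - (d:ℂ)*(ζ*(starRingEnd ℂ) em)) - ((d:ℂ)-ζ)/(1-(d:ℂ)*ζ))
    (hy : y = ((d:ℂ) - ζ*em)/(1 - (d:ℂ)*(ζ*em)) - ((d:ℂ)-ζ)/(1-(d:ℂ)*ζ)) :
    Real.cos (InnerProductGeometry.angle x y) / Real.sin (InnerProductGeometry.angle x y)
      = ((1+d^2)*cβ - 2*d*cφ) / ((d^2-1)*sβ) := by
  have hem0 : em ≠ 0 := left_ne_zero_of_mul_eq_one hemu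
  have hnζ : Complex.normSq ζ = 1 := by
    have h := Complex.mul_conj ζ
    rw [hζu] at h
    exact_mod_cast h.symm
  have hnem : Complex.normSq em = 1 := by
    have h := Complex.mul_conj em
    rw [hemu] at h
    exact_mod_cast h.symm
  have hden : ∀ u : ℂ, Complex.normSq u = 1 → (1:ℂ) - (d:ℂ)*u ≠ 0 := by
    intro u hu h
    have h1 : (d:ℂ)*u = 1 := by linear_combination -h
    have h2 : Complex.normSq ((d:ℂ)*u) = 1 := by rw [h1]; simp
    rw [map_mul, hu, mul_one, Complex.normSq_ofReal] at h2
    nlinarith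
  have hn1 : (1:ℂ) - (d:ℂ)*(ζ*(starRingEnd ℂ) em) ≠ 0 :=
    hden _ (by rw [map_mul, hnζ, Complex.normSq_conj, hnem, mul_one])
  have hn2 : (1:ℂ) - (d:ℂ)*ζ ≠ 0 := hden _ hnζ
  have hn3 : (1:ℂ) - (d:ℂ)*(ζ*em) ≠ 0 := hden _ (by rw [map_mul, hnζ, hnem, mul_one])
  have hcn1 : (1:ℂ) - (d:ℂ)*((starRingEnd ℂ) ζ*em) ≠ 0 :=
    hden _ (by rw [map_mul, Complex.normSq_conj, hnζ, hnem, mul_one])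
  have hcn2 : (1:ℂ) - (d:ℂ)*((starRingEnd ℂ) ζ) ≠ 0 := hden _ (by rw [Complex.normSq_conj]; exact hnζ)
  -- explicit form of x and y
  have hx2 : x = ((1:ℂ)-(d:ℂ)^2)*(ζ - ζ*(starRingEnd ℂ) em) /
      ((1 - (d:ℂ)*(ζ*(starRingEnd ℂ) em))*(1-(d:ℂ)*ζ)) := by
    rw [hx, div_sub_div _ _ hn1 hn2, div_eq_div_iff (mul_ne_zero hn1 hn2) (mul_ne_zero hn1 hn2)]
    ring
  have hy2 : y = ((1:ℂ)-(d:ℂ)^2)*(ζ - ζ*em) / ((1 - (d:ℂ)*(ζ*em))*(1-(d:ℂ)*ζ)) := by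
    rw [hy, div_sub_div _ _ hn3 hn2, div_eq_div_iff (mul_ne_zero hn3 hn2) (mul_ne_zero hn3 hn2)]
    ring
  have hxc : (starRingEnd ℂ) x = ((1:ℂ)-(d:ℂ)^2)*((starRingEnd ℂ) ζ - (starRingEnd ℂ) ζ*em) /
      ((1 - (d:ℂ)*((starRingEnd ℂ) ζ*em))*(1-(d:ℂ)*((starRingEnd ℂ) ζ))) := by
    rw [hx2]
    simp only [map_div₀, map_mul, map_sub, map_one, map_pow, Complex.conj_conj,
      Complex.conj_ofReal]
  have hABden : (((1:ℂ) - (d:ℂ)*((starRingEnd ℂ) ζ*em))*(1-(d:ℂ)*((starRingEnd ℂ) ζ))) *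
      ((1 - (d:ℂ)*(ζ*em))*(1-(d:ℂ)*ζ)) ≠ 0 :=
    mul_ne_zero (mul_ne_zero hcn1 hcn2) (mul_ne_zero hn3 hn2)
  have hmain : (starRingEnd ℂ) x * y *
      ((((1:ℂ) - (d:ℂ)*((starRingEnd ℂ) ζ*em))*(1-(d:ℂ)*((starRingEnd ℂ) ζ))) *
        ((1 - (d:ℂ)*(ζ*em))*(1-(d:ℂ)*ζ))) = ((1:ℂ)-(d:ℂ)^2)^2*(1-em)^2 := by
    rw [hxc, hy2, div_mul_div_comm, div_mul_cancel₀ _ hABden]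
    linear_combination ((1-(d:ℂ)^2)^2*(1-em)^2) * hζu
  have hfac : (((1:ℂ) - (d:ℂ)*((starRingEnd ℂ) ζ*em))*(1-(d:ℂ)*((starRingEnd ℂ) ζ))) *
      ((1 - (d:ℂ)*(ζ*em))*(1-(d:ℂ)*ζ)) =
      ((1+(d:ℂ)^2-2*d*cφ)) * ((((1+(d:ℂ)^2)*cβ - 2*d*cφ) + ((d:ℂ)^2-1)*sβ*Complex.I)*em) := by
    linear_combination
      (((1+(d:ℂ)^2-2*d*cφ))*(d:ℂ)^2*em^2 +
        (d:ℂ)^2*((1-(d:ℂ)*((starRingEnd ℂ) ζ*em))*(1-(d:ℂ)*(ζ*em)))) * hζu +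
      (-(((1+(d:ℂ)^2-2*d*cφ))*(d:ℂ)*em) -
        (d:ℂ)*((1-(d:ℂ)*((starRingEnd ℂ) ζ*em))*(1-(d:ℂ)*(ζ*em)))) * hζsum +
      (-((1+(d:ℂ)^2-2*d*cφ))) * hemu +
      (((1+(d:ℂ)^2-2*d*cφ))*((1+(d:ℂ)^2)/2)*em) * hemsum +
      (-(((1+(d:ℂ)^2-2*d*cφ))*((1-(d:ℂ)^2)/2))*em) * hemdiff
  have hmain2 : (starRingEnd ℂ) x * y *
      (((1+(d:ℂ)^2-2*d*cφ)) * ((((1+(d:ℂ)^2)*cβ - 2*d*cφ) + ((d:ℂ)^2-1)*sβ*Complex.I)*em)) =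
      (((1:ℝ)-d^2)^2*(2*cβ-2) : ℝ) * em := by
    rw [← hfac, hmain]
    push_cast
    linear_combination ((1-(d:ℂ)^2)^2*em) * hemsum - ((1-(d:ℂ)^2)^2) * hemu
  -- abbreviate the real quantities
  set P : ℝ := 1+d^2-2*d*cφ with hPdef
  set D : ℝ := (1+d^2)*cβ - 2*d*cφ with hDdef
  set E : ℝ := (d^2-1)*sβ with hEdef
  set Q : ℝ := (1-d^2)^2*(2*cβ-2) with hQdef
  have hPc : ((P:ℝ):ℂ) = 1+(d:ℂ)^2-2*d*cφ := by rw [hPdef]; push_cast; ring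
  have hDEc : ((D:ℝ):ℂ) + (E:ℂ)*Complex.I =
      (((1+(d:ℂ)^2)*cβ - 2*d*cφ) + ((d:ℂ)^2-1)*sβ*Complex.I) := by
    rw [hDdef, hEdef]; push_cast; ring
  rw [← hPc, ← hDEc] at hmain2
  -- positivity facts
  have hPpos : 0 < P := by rw [hPdef]; nlinarith [sq_nonneg (d-cφ), sq_nonneg (d+cφ)]
  have hEneg : E < 0 := by rw [hEdef]; nlinarith
  have h1d : (0:ℝ) < 1 - d^2 := by linarith
  have hQneg : Q < 0 := by
    rw [hQdef]
    nlinarith [mul_pos (mul_pos h1d h1d) (show (0:ℝ) < 2-2*cβ by linarith)]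
  have hDE2 : 0 < D^2 + E^2 := by nlinarith [sq_nonneg D, sq_nonneg E]
  have hfacne : ((P:ℂ) * ((((D:ℝ):ℂ) + (E:ℂ)*Complex.I))*em) ≠ 0 := by
    refine mul_ne_zero (mul_ne_zero ?_ ?_) hem0
    · exact_mod_cast Complex.ofReal_ne_zero.mpr hPpos.ne'
    · intro h
      have h2 := congrArg Complex.im h
      simp at h2
      exact hEneg.ne h2
  -- the normal form of conj x * y
  have hsub : (((Q*D/(P*(D^2+E^2)) : ℝ):ℂ) + ((-(Q*E)/(P*(D^2+E^2)) : ℝ):ℂ)*Complex.I) *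
      ((P:ℂ) * (((D:ℝ):ℂ) + (E:ℂ)*Complex.I)) = (Q:ℂ) := by
    rw [Complex.ext_iff]
    constructor <;>
      simp only [Complex.mul_re, Complex.mul_im, Complex.add_re, Complex.add_im,
        Complex.ofReal_re, Complex.ofReal_im, Complex.I_re, Complex.I_im] <;>
      (field_simp; ring)
  have hprod3 : (starRingEnd ℂ) x * y =
      ((Q*D/(P*(D^2+E^2)) : ℝ):ℂ) + ((-(Q*E)/(P*(D^2+E^2)) : ℝ):ℂ)*Complex.I := by
    apply mul_right_cancel₀ hfacne
    calc (starRingEnd ℂ) x * y * ((P:ℂ) * (((D:ℝ):ℂ) + (E:ℂ)*Complex.I)*em)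
        = (starRingEnd ℂ) x * y * ((P:ℂ) * ((((D:ℝ):ℂ) + (E:ℂ)*Complex.I)*em)) := by ring
      _ = (Q:ℂ) * em := hmain2
      _ = (((Q*D/(P*(D^2+E^2)) : ℝ):ℂ) + ((-(Q*E)/(P*(D^2+E^2)) : ℝ):ℂ)*Complex.I) *
            ((P:ℂ) * (((D:ℝ):ℂ) + (E:ℂ)*Complex.I)*em) := by
        rw [show (((Q*D/(P*(D^2+E^2)) : ℝ):ℂ) + ((-(Q*E)/(P*(D^2+E^2)) : ℝ):ℂ)*Complex.I) *
            ((P:ℂ) * (((D:ℝ):ℂ) + (E:ℂ)*Complex.I)*em) =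
            (((Q*D/(P*(D^2+E^2)) : ℝ):ℂ) + ((-(Q*E)/(P*(D^2+E^2)) : ℝ):ℂ)*Complex.I) *
            ((P:ℂ) * (((D:ℝ):ℂ) + (E:ℂ)*Complex.I))*em from by ring, hsub]
  -- inner product, norms, angle
  have hinner : (inner ℝ x y : ℝ) = Q*D/(P*(D^2+E^2)) := by
    rw [Complex.inner, mul_comm y, hprod3]
    simp only [Complex.add_re, Complex.mul_re, Complex.ofReal_re, Complex.ofReal_im,
      Complex.I_re, Complex.I_im]
    ring
  have hnormsq : (‖x‖*‖y‖)^2 = (Q*D/(P*(D^2+E^2)))^2 + (-(Q*E)/(P*(D^2+E^2)))^2 := by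
    have h1 : (‖x‖*‖y‖)^2 = Complex.normSq ((starRingEnd ℂ) x * y) := by
      rw [map_mul, Complex.normSq_conj, mul_pow,
        Complex.sq_norm, Complex.sq_norm]
    rw [h1, hprod3]
    simp only [Complex.normSq_apply, Complex.add_re, Complex.add_im, Complex.mul_re,
      Complex.mul_im, Complex.ofReal_re, Complex.ofReal_im, Complex.I_re, Complex.I_im]
    ring
  have hcos : Real.cos (InnerProductGeometry.angle x y) = (Q*D/(P*(D^2+E^2))) / (‖x‖*‖y‖) := by
    rw [InnerProductGeometry.cos_angle, hinner]
  have hQE : 0 < Q*E := mul_pos_of_neg_of_neg hQneg hEneg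
  have hR2neg : -(Q*E)/(P*(D^2+E^2)) < 0 :=
    div_neg_of_neg_of_pos (by linarith) (by positivity)
  have hsinmul : Real.sin (InnerProductGeometry.angle x y) * (‖x‖*‖y‖) =
      -(-(Q*E)/(P*(D^2+E^2))) := by
    rw [InnerProductGeometry.sin_angle_mul_norm_mul_norm,
      real_inner_self_eq_norm_mul_norm, real_inner_self_eq_norm_mul_norm, hinner,
      show ‖x‖*‖x‖*(‖y‖*‖y‖) - (Q*D/(P*(D^2+E^2)))*(Q*D/(P*(D^2+E^2))) =
        (-(Q*E)/(P*(D^2+E^2)))^2 from by nlinarith [hnormsq],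
      Real.sqrt_sq_eq_abs, abs_of_neg hR2neg]
  have hnxy : 0 < ‖x‖ * ‖y‖ := by
    by_contra h
    push_neg at h
    have h0 : ‖x‖*‖y‖ = 0 := le_antisymm h (mul_nonneg (norm_nonneg x) (norm_nonneg y))
    rw [h0, mul_zero] at hsinmul
    nlinarith
  have hsin : Real.sin (InnerProductGeometry.angle x y) =
      (-(-(Q*E)/(P*(D^2+E^2)))) / (‖x‖*‖y‖) := (eq_div_iff hnxy.ne').mpr hsinmul
  rw [hcos, hsin]
  rw [div_div_div_eq, show -(-(Q*E)/(P*(D^2+E^2))) = Q*E/(P*(D^2+E^2)) from by ring]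
  rw [div_eq_div_iff (by positivity) (by intro h; exact hEneg.ne (by nlinarith))]
  field_simp

set_option maxHeartbeats 1000000 in
/-- The cotangent of the interior angle `θ_k` of the harmonic `N`-gon at `w_k` is
`cot(θ_k) = −2d·cos(2αk + t)/((d² − 1)·sin(2α)) + ρ·cot(2α)`, where
`ρ = (1 + d²)/(d² − 1)`. -/
theorem cot_interior_angle (N : ℕ) (hN : 3 ≤ N) (d t : ℝ) (hd : |d| < 1)
    (z w : ℤ → ℂ) (θ : ℤ → ℝ)
    (hz : ∀ k : ℤ, z k = Complex.exp (Complex.I *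
      ((2 * (Real.pi / N) * (k : ℝ) + t : ℝ) : ℂ)))
    (hw : ∀ k : ℤ, w k = ((d : ℂ) * (starRingEnd ℂ) (z k) - 1) /
      ((starRingEnd ℂ) (z k) - (d : ℂ)))
    (hθ : ∀ k : ℤ, θ k = EuclideanGeometry.angle (w (k - 1)) (w k) (w (k + 1)))
    (k : ℤ) :
    Real.cos (θ k) / Real.sin (θ k) =
      (-2 * d * Real.cos (2 * (Real.pi / N) * (k : ℝ) + t)) /
        ((d ^ 2 - 1) * Real.sin (2 * (Real.pi / N))) +
      ((1 + d ^ 2) / (d ^ 2 - 1)) *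
        (Real.cos (2 * (Real.pi / N)) / Real.sin (2 * (Real.pi / N))) := by
  have hdd := abs_lt.mp hd
  have hd2 : d^2 < 1 := by nlinarith [hdd.1, hdd.2]
  have h3 : (3:ℝ) ≤ (N:ℝ) := by exact_mod_cast hN
  have hNpos : (0:ℝ) < (N:ℝ) := by linarith
  have hq : 0 < Real.pi/(N:ℝ) := by positivity
  have hqN : Real.pi/(N:ℝ)*(N:ℝ) = Real.pi := div_mul_cancel₀ Real.pi (ne_of_gt hNpos)
  have hβpos : 0 < 2*(Real.pi/(N:ℝ)) := by positivity
  have hβlt : 2*(Real.pi/(N:ℝ)) < Real.pi := by nlinarith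
  have hsβ : 0 < Real.sin (2*(Real.pi/(N:ℝ))) := Real.sin_pos_of_pos_of_lt_pi hβpos hβlt
  have hcβ : Real.cos (2*(Real.pi/(N:ℝ))) < 1 := by
    nlinarith [mul_pos hsβ hsβ, Real.sin_sq_add_cos_sq (2*(Real.pi/(N:ℝ))),
      Real.neg_one_le_cos (2*(Real.pi/(N:ℝ)))]
  have hcφ : (Real.cos (2 * (Real.pi / N) * (k : ℝ) + t))^2 ≤ 1 := by
    nlinarith [Real.neg_one_le_cos (2 * (Real.pi / N) * (k : ℝ) + t),
      Real.cos_le_one (2 * (Real.pi / N) * (k : ℝ) + t)]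
  -- complex exponential facts
  have hzj : ∀ j : ℤ, z j = Complex.exp (((2 * (Real.pi / N) * (j : ℝ) + t : ℝ) : ℂ) * Complex.I) := by
    intro j; rw [hz j]; congr 1; ring
  have hnz : ∀ j : ℤ, Complex.normSq (z j) = 1 := by
    intro j
    rw [hzj j, Complex.normSq_apply, Complex.exp_ofReal_mul_I_re, Complex.exp_ofReal_mul_I_im]
    linear_combination Real.sin_sq_add_cos_sq (2 * (Real.pi / N) * (j : ℝ) + t)
  have hu : ∀ j : ℤ, z j * (starRingEnd ℂ) (z j) = 1 := by
    intro j; rw [Complex.mul_conj, hnz j, Complex.ofReal_one]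
  have hwj : ∀ j : ℤ, w j = ((d:ℂ) - z j)/(1 - (d:ℂ) * z j) := by
    intro j
    have hc1 : (starRingEnd ℂ) (z j) - (d:ℂ) ≠ 0 := by
      intro h
      have h2 : (starRingEnd ℂ) (z j) = (d:ℂ) := by linear_combination h
      apply_fun Complex.normSq at h2
      rw [Complex.normSq_conj, hnz j, Complex.normSq_ofReal] at h2
      nlinarith
    have hc2 : (1:ℂ) - (d:ℂ) * z j ≠ 0 := by
      intro h
      have h2 : (d:ℂ) * z j = 1 := by linear_combination -h
      apply_fun Complex.normSq at h2
      rw [map_mul, Complex.normSq_ofReal, hnz j, map_one, mul_one] at h2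
      nlinarith
    rw [hw j, div_eq_div_iff hc1 hc2]
    linear_combination (1-(d:ℂ)^2) * hu j
  set em : ℂ := Complex.exp (((2*(Real.pi/(N:ℝ)) : ℝ) : ℂ) * Complex.I) with hemdef
  have hnem : Complex.normSq em = 1 := by
    rw [hemdef, Complex.normSq_apply, Complex.exp_ofReal_mul_I_re, Complex.exp_ofReal_mul_I_im]
    linear_combination Real.sin_sq_add_cos_sq (2*(Real.pi/(N:ℝ)))
  have hemu : em * (starRingEnd ℂ) em = 1 := by
    rw [Complex.mul_conj, hnem, Complex.ofReal_one]
  have hemsum : em + (starRingEnd ℂ) em = 2*((Real.cos (2*(Real.pi/(N:ℝ))) : ℝ) : ℂ) := by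
    rw [Complex.add_conj, hemdef, Complex.exp_ofReal_mul_I_re]
    push_cast; ring
  have hemdiff : em - (starRingEnd ℂ) em = 2*((Real.sin (2*(Real.pi/(N:ℝ))) : ℝ) : ℂ)*Complex.I := by
    rw [Complex.sub_conj, hemdef, Complex.exp_ofReal_mul_I_im]
    push_cast; ring
  have hζu := hu k
  have hζsum : z k + (starRingEnd ℂ) (z k) =
      2*((Real.cos (2 * (Real.pi / N) * (k : ℝ) + t) : ℝ) : ℂ) := by
    rw [Complex.add_conj, hzj k, Complex.exp_ofReal_mul_I_re]
    push_cast; ring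
  have hcem : (starRingEnd ℂ) em = Complex.exp ((( -(2*(Real.pi/(N:ℝ))) : ℝ) : ℂ) * Complex.I) := by
    rw [hemdef, ← Complex.exp_conj, map_mul, Complex.conj_I, Complex.conj_ofReal]
    push_cast; ring_nf
  have hzkm : z (k-1) = z k * (starRingEnd ℂ) em := by
    rw [hzj (k-1), hzj k, hcem, ← Complex.exp_add]
    congr 1
    push_cast; ring
  have hzkp : z (k+1) = z k * em := by
    rw [hzj (k+1), hzj k, hemdef, ← Complex.exp_add]
    congr 1
    push_cast; ring
  have hx : w (k-1) - w k = ((d:ℂ) - z k*(starRingEnd ℂ) em)/(1 - (d:ℂ)*(z k*(starRingEnd ℂ) em))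
      - ((d:ℂ)- z k)/(1-(d:ℂ)* z k) := by
    rw [hwj (k-1), hwj k, hzkm]
  have hy : w (k+1) - w k = ((d:ℂ) - z k*em)/(1 - (d:ℂ)*(z k*em))
      - ((d:ℂ)- z k)/(1-(d:ℂ)* z k) := by
    rw [hwj (k+1), hwj k, hzkp]
  have hθk : θ k = InnerProductGeometry.angle (w (k-1) - w k) (w (k+1) - w k) := by
    rw [hθ k]; rfl
  have key := aux_cot d (Real.cos (2 * (Real.pi / N) * (k : ℝ) + t))
    (Real.cos (2*(Real.pi/(N:ℝ)))) (Real.sin (2*(Real.pi/(N:ℝ)))) hd2 hcφ hsβ hcβ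
    (z k) em (w (k-1) - w k) (w (k+1) - w k) hζu hζsum hemu hemsum hemdiff hx hy
  rw [hθk, key]
  have hd1 : d^2 - 1 ≠ 0 := by nlinarith
  field_simp
  ring
end

section
/- The sum over k = 1, …, N of cot(θ_k) equals N·ρ·cot(2α); in particular it does not depend on t. -/
open Real Finset

private lemma abs_exp_I' (x : ℝ) : ‖Complex.exp (Complex.I * (x : ℂ))‖ = 1 := by
  rw [Complex.norm_exp]; simp

private lemma conj_eq_inv_of_abs_one {x : ℂ} (hx : ‖x‖ = 1) :
    (starRingEnd ℂ) x = x⁻¹ := by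
  have h : x * (starRingEnd ℂ) x = 1 := by
    rw [Complex.mul_conj, Complex.normSq_eq_norm_sq, hx]; norm_num
  exact (inv_eq_of_mul_eq_one_right h).symm

private lemma ne_zero_of_abs_one {x : ℂ} (hx : ‖x‖ = 1) : x ≠ 0 := by
  intro h; rw [h] at hx; simp at hx

private lemma one_sub_mul_ne {d : ℝ} (hd : |d| < 1) {x : ℂ} (hx : ‖x‖ = 1) :
    (1 : ℂ) - (d : ℂ) * x ≠ 0 := by
  intro h
  have h1 : (d : ℂ) * x = 1 := by linear_combination -h
  have h2 := congrArg (‖·‖) h1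
  rw [norm_mul, Complex.norm_real, Real.norm_eq_abs, hx, mul_one, norm_one] at h2
  rw [h2] at hd; exact lt_irrefl 1 hd

private lemma conj_sub_ne {d : ℝ} (hd : |d| < 1) {x : ℂ} (hx : ‖x‖ = 1) :
    (starRingEnd ℂ) x - (d : ℂ) ≠ 0 := by
  intro h
  have h1 : (starRingEnd ℂ) x = (d : ℂ) := by linear_combination h
  have h2 := congrArg (‖·‖) h1
  rw [Complex.norm_conj, hx, Complex.norm_real, Real.norm_eq_abs] at h2
  rw [← h2] at hd; exact lt_irrefl 1 hd

private lemma unit_sub_unit_mul_ne {d : ℝ} (hd : |d| < 1) {x y : ℂ}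
    (hx : ‖x‖ = 1) (hy : ‖y‖ = 1) : x - (d : ℂ) * y ≠ 0 := by
  intro h
  have h1 : x = (d : ℂ) * y := by linear_combination h
  have h2 := congrArg (‖·‖) h1
  rw [hx, norm_mul, Complex.norm_real, Real.norm_eq_abs, hy, mul_one] at h2
  rw [← h2] at hd; exact lt_irrefl 1 hd

private lemma unit_sub_real_ne {d : ℝ} (hd : |d| < 1) {x : ℂ} (hx : ‖x‖ = 1) :
    x - (d : ℂ) ≠ 0 := by
  have h := unit_sub_unit_mul_ne hd hx norm_one
  simpa using h

private lemma conj_w {d : ℝ} (hd : |d| < 1) {x : ℂ} (hx : ‖x‖ = 1) :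
    (starRingEnd ℂ) (((d : ℂ) - x) / (1 - (d : ℂ) * x))
      = ((d : ℂ) * x - 1) / (x - (d : ℂ)) := by
  have hx0 : x ≠ 0 := ne_zero_of_abs_one hx
  have hxx : x * x⁻¹ = 1 := mul_inv_cancel₀ hx0
  rw [map_div₀, map_sub, map_sub, map_mul, Complex.conj_ofReal, map_one,
    conj_eq_inv_of_abs_one hx]
  rw [div_eq_div_iff (by
      have := one_sub_mul_ne hd (by rw [norm_inv, hx]; norm_num : ‖x⁻¹‖ = 1)
      exact this) (unit_sub_real_ne hd hx)]
  linear_combination ((d : ℂ) ^ 2 - 1) * hxx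

private lemma w_formula {d : ℝ} (hd : |d| < 1) {x : ℂ} (hx : ‖x‖ = 1) :
    ((d : ℂ) * (starRingEnd ℂ) x - 1) / ((starRingEnd ℂ) x - (d : ℂ))
      = ((d : ℂ) - x) / (1 - (d : ℂ) * x) := by
  have hx0 : x ≠ 0 := ne_zero_of_abs_one hx
  have hxx : x * x⁻¹ = 1 := mul_inv_cancel₀ hx0
  have h2 : (starRingEnd ℂ) x - (d : ℂ) ≠ 0 := conj_sub_ne hd hx
  have h3 : (1 : ℂ) - (d : ℂ) * x ≠ 0 := one_sub_mul_ne hd hx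
  rw [conj_eq_inv_of_abs_one hx] at h2 ⊢
  rw [div_eq_div_iff h2 h3]
  linear_combination (1 - (d : ℂ) ^ 2) * hxx

private lemma pyth_c (x : ℝ) :
    ((Real.cos x : ℝ) : ℂ) ^ 2 + ((Real.sin x : ℝ) : ℂ) ^ 2 = 1 := by
  rw [← Complex.ofReal_pow, ← Complex.ofReal_pow, ← Complex.ofReal_add,
    Real.cos_sq_add_sin_sq, Complex.ofReal_one]

private lemma trig_eval (d ca sa cb sb : ℝ)
    (hA : (ca : ℂ) ^ 2 + (sa : ℂ) ^ 2 = 1) (hB : (cb : ℂ) ^ 2 + (sb : ℂ) ^ 2 = 1) :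
    (1 - ((ca : ℂ) + (sa : ℂ) * Complex.I)) ^ 2
      * (((cb : ℂ) + (sb : ℂ) * Complex.I) * ((ca : ℂ) + (sa : ℂ) * Complex.I) ^ 2
        - (d : ℂ) * (((cb : ℂ) + (sb : ℂ) * Complex.I) ^ 2 + 1)
            * ((ca : ℂ) + (sa : ℂ) * Complex.I)
        + (d : ℂ) ^ 2 * ((cb : ℂ) + (sb : ℂ) * Complex.I))
    = (((2 * (1 - ca) * (2 * d * cb - (1 + d ^ 2) * ca) : ℝ) : ℂ)
        + ((-(2 * sa * (1 - ca) * (1 - d ^ 2)) : ℝ) : ℂ) * Complex.I)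
      * (((cb : ℂ) + (sb : ℂ) * Complex.I) * ((ca : ℂ) + (sa : ℂ) * Complex.I) ^ 2) := by
  have hI : Complex.I ^ 2 = -1 := Complex.I_sq
  push_cast
  linear_combination (- (2:ℂ)*(sa:ℂ)*(sb:ℂ)*(d:ℂ)^2 - (1:ℂ)*(sa:ℂ)*(sb:ℂ)^2*(d:ℂ)*Complex.I - (2:ℂ)*(sa:ℂ)*(cb:ℂ)*(sb:ℂ)*(d:ℂ) + (2:ℂ)*(sa:ℂ)^2*(d:ℂ) + (1:ℂ)*(sa:ℂ)^2*(sb:ℂ)*Complex.I + (1:ℂ)*(sa:ℂ)^2*(sb:ℂ)*(d:ℂ)^2*Complex.I - (2:ℂ)*(sa:ℂ)^2*(sb:ℂ)^2*(d:ℂ) + (2:ℂ)*(sa:ℂ)^2*(sb:ℂ)^2*(d:ℂ)*Complex.I^2 + (1:ℂ)*(sa:ℂ)^2*(cb:ℂ) + (1:ℂ)*(sa:ℂ)^2*(cb:ℂ)*(d:ℂ)^2 - (2:ℂ)*(sa:ℂ)^2*(cb:ℂ)^2*(d:ℂ) - (1:ℂ)*(sa:ℂ)^3*(d:ℂ)*Complex.I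 + (2:ℂ)*(sa:ℂ)^3*(sb:ℂ)*(d:ℂ)^2 - (2:ℂ)*(sa:ℂ)^3*(sb:ℂ)*(d:ℂ)^2*Complex.I^2 + (1:ℂ)*(sa:ℂ)^3*(sb:ℂ)^2*(d:ℂ)*Complex.I - (1:ℂ)*(sa:ℂ)^3*(sb:ℂ)^2*(d:ℂ)*Complex.I^3 - (2:ℂ)*(sa:ℂ)^3*(cb:ℂ)*(d:ℂ)^2*Complex.I + (2:ℂ)*(sa:ℂ)^3*(cb:ℂ)*(sb:ℂ)*(d:ℂ) - (2:ℂ)*(sa:ℂ)^3*(cb:ℂ)*(sb:ℂ)*(d:ℂ)*Complex.I^2 - (1:ℂ)*(sa:ℂ)^3*(cb:ℂ)^2*(d:ℂ)*Complex.I - (1:ℂ)*(sa:ℂ)^4*(sb:ℂ)*Complex.I + (1:ℂ)*(sa:ℂ)^4*(sb:ℂ)*Complex.I^3 - (1:ℂ)*(sa:ℂ)^4*(cb:ℂ) + (1:ℂ)*(sa:ℂ)^4*(cb:ℂ)*Complex.I^2 - (1:ℂ)*(ca:ℂ)*(sb:ℂ)^2*(d:ℂ) + (2:ℂ)*(ca:ℂ)*(sa:ℂ)*(sb:ℂ)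 + (2:ℂ)*(ca:ℂ)*(sa:ℂ)*(sb:ℂ)*(d:ℂ)^2 + (4:ℂ)*(ca:ℂ)*(sa:ℂ)*(sb:ℂ)^2*(d:ℂ)*Complex.I - (3:ℂ)*(ca:ℂ)*(sa:ℂ)^2*(d:ℂ) - (2:ℂ)*(ca:ℂ)*(sa:ℂ)^2*(sb:ℂ)*(d:ℂ)^2*Complex.I + (3:ℂ)*(ca:ℂ)*(sa:ℂ)^2*(sb:ℂ)^2*(d:ℂ) - (3:ℂ)*(ca:ℂ)*(sa:ℂ)^2*(sb:ℂ)^2*(d:ℂ)*Complex.I^2 - (2:ℂ)*(ca:ℂ)*(sa:ℂ)^2*(cb:ℂ)*(d:ℂ)^2 - (2:ℂ)*(ca:ℂ)*(sa:ℂ)^2*(cb:ℂ)*(sb:ℂ)*(d:ℂ)*Complex.I + (1:ℂ)*(ca:ℂ)*(sa:ℂ)^2*(cb:ℂ)^2*(d:ℂ) - (2:ℂ)*(ca:ℂ)*(sa:ℂ)^3*(sb:ℂ) + (2:ℂ)*(ca:ℂ)*(sa:ℂ)^3*(sb:ℂ)*Complex.I^2 - (2:ℂ)*(ca:ℂ)*(sa:ℂ)^3*(sb:ℂ)*(d:ℂ)^2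 + (2:ℂ)*(ca:ℂ)*(sa:ℂ)^3*(sb:ℂ)*(d:ℂ)^2*Complex.I^2 + (2:ℂ)*(ca:ℂ)*(sa:ℂ)^3*(cb:ℂ)*Complex.I + (2:ℂ)*(ca:ℂ)*(sa:ℂ)^3*(cb:ℂ)*(d:ℂ)^2*Complex.I + (2:ℂ)*(ca:ℂ)^2*(sb:ℂ)^2*(d:ℂ) + (2:ℂ)*(ca:ℂ)^2*(sa:ℂ)*(sb:ℂ)*(d:ℂ)^2 - (3:ℂ)*(ca:ℂ)^2*(sa:ℂ)*(sb:ℂ)^2*(d:ℂ)*Complex.I + (2:ℂ)*(ca:ℂ)^2*(sa:ℂ)*(cb:ℂ)*(sb:ℂ)*(d:ℂ) + (2:ℂ)*(ca:ℂ)^2*(sa:ℂ)^2*(sb:ℂ)*(d:ℂ)^2*Complex.I + (2:ℂ)*(ca:ℂ)^2*(sa:ℂ)^2*(cb:ℂ)*(d:ℂ)^2 - (1:ℂ)*(ca:ℂ)^3*(sb:ℂ)^2*(d:ℂ) - (2:ℂ)*(ca:ℂ)^3*(sa:ℂ)*(sb:ℂ) - (2:ℂ)*(ca:ℂ)^3*(sa:ℂ)*(sb:ℂ)*(d:ℂ)^2)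 * hI + (- (2:ℂ)*(d:ℂ) - (1:ℂ)*(sb:ℂ)*(d:ℂ)^2*Complex.I + (2:ℂ)*(sb:ℂ)^2*(d:ℂ) - (1:ℂ)*(cb:ℂ)*(d:ℂ)^2 + (2:ℂ)*(cb:ℂ)^2*(d:ℂ) + (1:ℂ)*(sa:ℂ)*(d:ℂ)*Complex.I - (2:ℂ)*(sa:ℂ)*(sb:ℂ)*(d:ℂ)^2 - (1:ℂ)*(sa:ℂ)*(sb:ℂ)^2*(d:ℂ)*Complex.I + (2:ℂ)*(sa:ℂ)*(cb:ℂ)*(d:ℂ)^2*Complex.I - (2:ℂ)*(sa:ℂ)*(cb:ℂ)*(sb:ℂ)*(d:ℂ) + (1:ℂ)*(sa:ℂ)*(cb:ℂ)^2*(d:ℂ)*Complex.I + (1:ℂ)*(sa:ℂ)^2*(sb:ℂ)*Complex.I + (1:ℂ)*(sa:ℂ)^2*(cb:ℂ) + (3:ℂ)*(ca:ℂ)*(d:ℂ) + (2:ℂ)*(ca:ℂ)*(sb:ℂ)*(d:ℂ)^2*Complex.I - (3:ℂ)*(ca:ℂ)*(sb:ℂ)^2*(d:ℂ) + (2:ℂ)*(ca:ℂ)*(cb:ℂ)*(d:ℂ)^2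 + (2:ℂ)*(ca:ℂ)*(cb:ℂ)*(sb:ℂ)*(d:ℂ)*Complex.I - (1:ℂ)*(ca:ℂ)*(cb:ℂ)^2*(d:ℂ) + (2:ℂ)*(ca:ℂ)*(sa:ℂ)*(sb:ℂ) + (2:ℂ)*(ca:ℂ)*(sa:ℂ)*(sb:ℂ)*(d:ℂ)^2 - (2:ℂ)*(ca:ℂ)*(sa:ℂ)*(cb:ℂ)*Complex.I - (2:ℂ)*(ca:ℂ)*(sa:ℂ)*(cb:ℂ)*(d:ℂ)^2*Complex.I - (1:ℂ)*(ca:ℂ)^2*(sb:ℂ)*Complex.I - (2:ℂ)*(ca:ℂ)^2*(sb:ℂ)*(d:ℂ)^2*Complex.I - (1:ℂ)*(ca:ℂ)^2*(cb:ℂ) - (2:ℂ)*(ca:ℂ)^2*(cb:ℂ)*(d:ℂ)^2) * hA + ((2:ℂ)*(d:ℂ) - (2:ℂ)*(ca:ℂ)*(d:ℂ) - (4:ℂ)*(ca:ℂ)*(sa:ℂ)*(d:ℂ)*Complex.I - (4:ℂ)*(ca:ℂ)^2*(d:ℂ) + (4:ℂ)*(ca:ℂ)^2*(sa:ℂ)*(d:ℂ)*Complex.I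 + (4:ℂ)*(ca:ℂ)^3*(d:ℂ)) * hB

/-- cotangent of the angle between two complex vectors. -/
private lemma cot_angle_aux (u v : ℂ) (h : ((starRingEnd ℂ) u * v).im ≠ 0) :
    Real.cos (InnerProductGeometry.angle u v) / Real.sin (InnerProductGeometry.angle u v)
      = ((starRingEnd ℂ) u * v).re / |((starRingEnd ℂ) u * v).im| := by
  have hu : u ≠ 0 := by rintro rfl; simp at h
  have hv : v ≠ 0 := by rintro rfl; simp at h
  have hn : 0 < ‖u‖ * ‖v‖ := mul_pos (norm_pos_iff.mpr hu) (norm_pos_iff.mpr hv)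
  have hcos := InnerProductGeometry.cos_angle_mul_norm_mul_norm u v
  have hsin := InnerProductGeometry.sin_angle_mul_norm_mul_norm u v
  rw [Complex.inner] at hcos
  rw [Complex.inner, Complex.inner, Complex.inner] at hsin
  rw [mul_comm v ((starRingEnd ℂ) u)] at hcos
  rw [mul_comm u ((starRingEnd ℂ) u), mul_comm v ((starRingEnd ℂ) v),
    mul_comm v ((starRingEnd ℂ) u)] at hsin
  have hkey : ((starRingEnd ℂ) u * u).re * ((starRingEnd ℂ) v * v).re
      - ((starRingEnd ℂ) u * v).re * ((starRingEnd ℂ) u * v).re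
      = ((starRingEnd ℂ) u * v).im ^ 2 := by
    simp only [Complex.mul_re, Complex.mul_im, Complex.conj_re, Complex.conj_im]
    ring
  rw [hkey, Real.sqrt_sq_eq_abs] at hsin
  have hs0 : Real.sin (InnerProductGeometry.angle u v) ≠ 0 := by
    intro h0
    rw [h0, zero_mul] at hsin
    exact h (abs_eq_zero.mp hsin.symm)
  have him : |((starRingEnd ℂ) u * v).im| ≠ 0 := abs_ne_zero.mpr h
  rw [div_eq_div_iff hs0 him]
  apply mul_right_cancel₀ (ne_of_gt hn)
  linear_combination |((starRingEnd ℂ) u * v).im| * hcos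
    - ((starRingEnd ℂ) u * v).re * hsin

set_option maxHeartbeats 1000000 in
/-- Over the Poncelet family of harmonic polygons, the sum of the cotangents of
the interior angles is invariant and given by `N·ρ·cot(2α)`, where
`ρ = (1 + d²)/(d² − 1)`; in particular it does not depend on `t`. -/
theorem sum_cot_interior_angles (N : ℕ) (hN : 3 ≤ N) (d t : ℝ) (hd : |d| < 1)
    (z w : ℤ → ℂ) (θ : ℤ → ℝ)
    (hz : ∀ k : ℤ, z k = Complex.exp (Complex.I *
      ((2 * (Real.pi / N) * (k : ℝ) + t : ℝ) : ℂ)))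
    (hw : ∀ k : ℤ, w k = ((d : ℂ) * (starRingEnd ℂ) (z k) - 1) /
      ((starRingEnd ℂ) (z k) - (d : ℂ)))
    (hθ : ∀ k : ℤ, θ k = EuclideanGeometry.angle (w (k - 1)) (w k) (w (k + 1))) :
    ∑ k ∈ Finset.Icc (1 : ℤ) N, Real.cos (θ k) / Real.sin (θ k) =
      (N : ℝ) * ((1 + d ^ 2) / (d ^ 2 - 1)) *
        (Real.cos (2 * (Real.pi / N)) / Real.sin (2 * (Real.pi / N))) := by
  have hπ := Real.pi_pos
  have hNR : (3 : ℝ) ≤ (N : ℝ) := by exact_mod_cast hN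
  have hNpos : (0 : ℝ) < (N : ℝ) := by linarith
  set A : ℝ := 2 * (Real.pi / N) with hAdef
  have hApos : 0 < A := by rw [hAdef]; positivity
  have hAlt : A < Real.pi := by
    rw [hAdef, mul_div_assoc', div_lt_iff₀ hNpos]
    nlinarith
  have hsinA : 0 < Real.sin A := Real.sin_pos_of_pos_of_lt_pi hApos hAlt
  have hcosA : Real.cos A < 1 := by
    have h := Real.cos_lt_cos_of_nonneg_of_le_pi (le_refl 0) hAlt.le hApos
    rwa [Real.cos_zero] at h
  have hd2 : d ^ 2 < 1 := by nlinarith [sq_abs d, abs_nonneg d]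
  have hd2' : (0 : ℝ) < 1 - d ^ 2 := by linarith
  set q : ℂ := Complex.exp (Complex.I * (A : ℂ)) with hqdef
  have hq0 : q ≠ 0 := Complex.exp_ne_zero _
  have hqabs : ‖q‖ = 1 := abs_exp_I' A
  have hconjq : (starRingEnd ℂ) q = q⁻¹ := conj_eq_inv_of_abs_one hqabs
  have hqq : q * q⁻¹ = 1 := mul_inv_cancel₀ hq0
  have hq_eq : q = ((Real.cos A : ℝ) : ℂ) + ((Real.sin A : ℝ) : ℂ) * Complex.I := by
    rw [hqdef, mul_comm Complex.I ((A : ℝ) : ℂ), Complex.exp_mul_I,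
      ← Complex.ofReal_cos, ← Complex.ofReal_sin]
  -- the key per-vertex formula
  have key : ∀ k : ℤ, Real.cos (θ k) / Real.sin (θ k)
      = (2 * d * Real.cos (A * (k : ℝ) + t) - (1 + d ^ 2) * Real.cos A)
        / ((1 - d ^ 2) * Real.sin A) := by
    intro k
    have hZ : z k = Complex.exp (Complex.I * ((A * (k : ℝ) + t : ℝ) : ℂ)) := hz k
    have hZabs : ‖z k‖ = 1 := by rw [hZ]; exact abs_exp_I' _
    have hZ0 : z k ≠ 0 := ne_zero_of_abs_one hZabs
    have hZZ : z k * (z k)⁻¹ = 1 := mul_inv_cancel₀ hZ0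
    have hconjZ : (starRingEnd ℂ) (z k) = (z k)⁻¹ := conj_eq_inv_of_abs_one hZabs
    have hZ_eq : z k = ((Real.cos (A * (k : ℝ) + t) : ℝ) : ℂ)
        + ((Real.sin (A * (k : ℝ) + t) : ℝ) : ℂ) * Complex.I := by
      rw [hZ, mul_comm Complex.I, Complex.exp_mul_I,
        ← Complex.ofReal_cos, ← Complex.ofReal_sin]
    have hZm : z (k - 1) = z k * q⁻¹ := by
      rw [hz (k - 1), hZ, hqdef, ← Complex.exp_neg, ← Complex.exp_add]
      congr 1
      push_cast
      ring
    have hZp : z (k + 1) = z k * q := by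
      rw [hz (k + 1), hZ, hqdef, ← Complex.exp_add]
      congr 1
      push_cast
      ring
    have habsm : ‖z k * q⁻¹‖ = 1 := by
      rw [norm_mul, norm_inv, hZabs, hqabs]; norm_num
    have habsp : ‖z k * q‖ = 1 := by rw [norm_mul, hZabs, hqabs]; norm_num
    -- w formulas
    have hwk : w k = ((d : ℂ) - z k) / (1 - (d : ℂ) * z k) := by
      rw [hw k, w_formula hd hZabs]
    have hwm : w (k - 1) = ((d : ℂ) - z k * q⁻¹) / (1 - (d : ℂ) * (z k * q⁻¹)) := by
      rw [hw (k - 1), hZm, w_formula hd habsm]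
    have hwp : w (k + 1) = ((d : ℂ) - z k * q) / (1 - (d : ℂ) * (z k * q)) := by
      rw [hw (k + 1), hZp, w_formula hd habsp]
    -- abbreviations
    set u : ℂ := w (k - 1) - w k with hudef
    set v : ℂ := w (k + 1) - w k with hvdef
    set p : ℂ := (starRingEnd ℂ) u * v with hpdef
    set T : ℂ := (1 - (d : ℂ) * (z k * q⁻¹)) * (1 - (d : ℂ) * z k)
      * (1 - (d : ℂ) * (z k * q)) with hTdef
    have hDm : (1 : ℂ) - (d : ℂ) * (z k * q⁻¹) ≠ 0 := one_sub_mul_ne hd habsm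
    have hD0 : (1 : ℂ) - (d : ℂ) * z k ≠ 0 := one_sub_mul_ne hd hZabs
    have hDp : (1 : ℂ) - (d : ℂ) * (z k * q) ≠ 0 := one_sub_mul_ne hd habsp
    have hMd : z k * q⁻¹ - (d : ℂ) ≠ 0 := unit_sub_real_ne hd habsm
    have h0d : z k - (d : ℂ) ≠ 0 := unit_sub_real_ne hd hZabs
    have hZdq : z k - (d : ℂ) * q ≠ 0 := unit_sub_unit_mul_ne hd hZabs hqabs
    -- conjugate of u
    have hconju : (starRingEnd ℂ) u
        = ((d : ℂ) * z k - q) / (z k - (d : ℂ) * q)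
          - ((d : ℂ) * z k - 1) / (z k - (d : ℂ)) := by
      rw [hudef, map_sub, hwm, hwk, conj_w hd habsm, conj_w hd hZabs]
      congr 1
      rw [div_eq_div_iff hMd hZdq]
      linear_combination ((1 - (d : ℂ) ^ 2) * z k) * hqq
    -- the factorizations of T and its conjugate
    have hT' : T = (q - (d : ℂ) * z k) * (1 - (d : ℂ) * z k) * (1 - (d : ℂ) * (z k * q)) / q := by
      rw [hTdef, eq_div_iff hq0]
      linear_combination (-(d : ℂ) * z k * (1 - (d : ℂ) * z k) * (1 - (d : ℂ) * (z k * q))) * hqq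
    have hCT' : (starRingEnd ℂ) T
        = (z k - (d : ℂ) * q) * (z k - (d : ℂ)) * (z k * q - (d : ℂ)) / ((z k) ^ 3 * q) := by
      rw [hTdef]
      simp only [map_mul, map_sub, map_one, map_inv₀, Complex.conj_ofReal, hconjZ, hconjq,
        inv_inv]
      rw [eq_div_iff (mul_ne_zero (pow_ne_zero 3 hZ0) hq0)]
      field_simp
    -- master identity
    have hC1 : p * (T * (starRingEnd ℂ) T)
        = (((1 - d ^ 2) ^ 2 : ℝ) : ℂ) * ((1 - q) ^ 2
          * ((z k * q ^ 2 - (d : ℂ) * ((z k) ^ 2 + 1) * q + (d : ℂ) ^ 2 * z k)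
              / (z k * q ^ 2))) := by
      rw [hpdef, hconju, hvdef, hwp, hwk, hCT', hT']
      rw [div_sub_div _ _ hZdq h0d, div_sub_div _ _ hDp hD0, div_mul_div_comm,
        div_mul_div_comm, div_mul_div_comm, ← mul_div_assoc, ← mul_div_assoc]
      rw [div_eq_div_iff
        (mul_ne_zero (mul_ne_zero (mul_ne_zero hZdq h0d) (mul_ne_zero hDp hD0))
          (mul_ne_zero hq0 (mul_ne_zero (pow_ne_zero 3 hZ0) hq0)))
        (mul_ne_zero hZ0 (pow_ne_zero 2 hq0))]
      push_cast
      ring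
    -- trigonometric evaluation
    have hC2 : (1 - q) ^ 2
          * ((z k * q ^ 2 - (d : ℂ) * ((z k) ^ 2 + 1) * q + (d : ℂ) ^ 2 * z k)
              / (z k * q ^ 2))
        = ((2 * (1 - Real.cos A) * (2 * d * Real.cos (A * (k : ℝ) + t)
              - (1 + d ^ 2) * Real.cos A) : ℝ) : ℂ)
          + ((-(2 * Real.sin A * (1 - Real.cos A) * (1 - d ^ 2)) : ℝ) : ℂ) * Complex.I := by
      rw [← mul_div_assoc, div_eq_iff (mul_ne_zero hZ0 (pow_ne_zero 2 hq0)), hq_eq, hZ_eq]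
      exact trig_eval d (Real.cos A) (Real.sin A) (Real.cos (A * (k : ℝ) + t))
        (Real.sin (A * (k : ℝ) + t)) (pyth_c A) (pyth_c (A * (k : ℝ) + t))
    -- extract real and imaginary parts
    have hT0 : T ≠ 0 := by
      rw [hTdef]
      exact mul_ne_zero (mul_ne_zero hDm hD0) hDp
    have hnT : 0 < Complex.normSq T := Complex.normSq_pos.mpr hT0
    have hTT : T * (starRingEnd ℂ) T = ((Complex.normSq T : ℝ) : ℂ) := Complex.mul_conj T
    set nT : ℝ := Complex.normSq T with hnTdef
    have hE : p * ((nT : ℝ) : ℂ)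
        = (((1 - d ^ 2) ^ 2 : ℝ) : ℂ)
          * (((2 * (1 - Real.cos A) * (2 * d * Real.cos (A * (k : ℝ) + t)
                - (1 + d ^ 2) * Real.cos A) : ℝ) : ℂ)
            + ((-(2 * Real.sin A * (1 - Real.cos A) * (1 - d ^ 2)) : ℝ) : ℂ) * Complex.I) := by
      rw [← hTT, hC1, hC2]
    have hre : p.re * nT = (1 - d ^ 2) ^ 2
        * (2 * (1 - Real.cos A) * (2 * d * Real.cos (A * (k : ℝ) + t)
            - (1 + d ^ 2) * Real.cos A)) := by
      have h := congrArg Complex.re hE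
      simp only [Complex.mul_re, Complex.mul_im, Complex.add_re, Complex.add_im,
        Complex.ofReal_re, Complex.ofReal_im, Complex.I_re, Complex.I_im, mul_zero, zero_mul,
        mul_one, sub_zero, add_zero, zero_add, neg_zero] at h
      linear_combination h
    have him : p.im * nT = (1 - d ^ 2) ^ 2
        * (-(2 * Real.sin A * (1 - Real.cos A) * (1 - d ^ 2))) := by
      have h := congrArg Complex.im hE
      simp only [Complex.mul_re, Complex.mul_im, Complex.add_re, Complex.add_im,
        Complex.ofReal_re, Complex.ofReal_im, Complex.I_re, Complex.I_im, mul_zero, zero_mul,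
        mul_one, sub_zero, add_zero, zero_add, neg_zero] at h
      linear_combination h
    have hpim : p.im < 0 := by
      have hpos : 0 < (1 - d ^ 2) ^ 2 * (2 * Real.sin A * (1 - Real.cos A) * (1 - d ^ 2)) := by
        have h1 : 0 < 2 * Real.sin A * (1 - Real.cos A) * (1 - d ^ 2) :=
          mul_pos (mul_pos (by linarith) (by linarith)) hd2'
        positivity
      nlinarith
    -- put everything together
    have hθk : θ k = InnerProductGeometry.angle u v := by
      rw [hθ k, EuclideanGeometry.angle, vsub_eq_sub, vsub_eq_sub, hudef, hvdef]
    rw [hθk, cot_angle_aux u v (by rw [← hpdef]; exact ne_of_lt hpim), ← hpdef]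
    rw [abs_of_neg hpim]
    rw [div_eq_div_iff (by linarith) (by positivity)]
    apply mul_right_cancel₀ (ne_of_gt hnT)
    linear_combination ((1 - d ^ 2) * Real.sin A) * hre
      + (2 * d * Real.cos (A * (k : ℝ) + t) - (1 + d ^ 2) * Real.cos A) * him
  -- now sum up
  rw [Finset.sum_congr rfl fun k _ => key k]
  have himg : Finset.Icc (1 : ℤ) (N : ℤ)
      = Finset.image (fun i : ℕ => (i : ℤ) + 1) (Finset.range N) := by
    ext x
    simp only [Finset.mem_Icc, Finset.mem_image, Finset.mem_range]
    constructor
    · intro hx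
      refine ⟨(x - 1).toNat, ?_, ?_⟩ <;> omega
    · rintro ⟨i, hi, rfl⟩
      omega
  have hq1 : q ≠ 1 := by
    intro h
    have h2 := congrArg Complex.re h
    rw [hqdef, mul_comm Complex.I (((A : ℝ) : ℂ)), Complex.exp_ofReal_mul_I_re] at h2
    simp only [Complex.one_re] at h2
    linarith
  have hqN : q ^ N = 1 := by
    rw [hqdef, ← Complex.exp_nat_mul]
    have hNA : (N : ℂ) * (Complex.I * (A : ℂ)) = 2 * Real.pi * Complex.I := by
      have h : (N : ℝ) * A = 2 * Real.pi := by
        rw [hAdef]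
        field_simp
      calc (N : ℂ) * (Complex.I * (A : ℂ)) = (((N : ℝ) * A : ℝ) : ℂ) * Complex.I := by
            push_cast; ring
        _ = 2 * Real.pi * Complex.I := by rw [h]; push_cast; ring
    rw [hNA, Complex.exp_two_pi_mul_I]
  have hsum0 : ∑ k ∈ Finset.Icc (1 : ℤ) (N : ℤ), Real.cos (A * (k : ℝ) + t) = 0 := by
    have hS : ∑ k ∈ Finset.Icc (1 : ℤ) (N : ℤ),
        Complex.exp (Complex.I * ((A * (k : ℝ) + t : ℝ) : ℂ)) = 0 := by
      rw [himg, Finset.sum_image (by intro a _ b _ hab; simp only at hab; omega)]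
      have hterm : ∀ i : ℕ, Complex.exp (Complex.I * ((A * (((i : ℤ) + 1 : ℤ) : ℝ) + t : ℝ) : ℂ))
          = Complex.exp (Complex.I * ((A + t : ℝ) : ℂ)) * q ^ i := by
        intro i
        rw [hqdef, ← Complex.exp_nat_mul, ← Complex.exp_add]
        congr 1
        push_cast
        ring
      calc ∑ i ∈ Finset.range N,
            Complex.exp (Complex.I * ((A * (((i : ℤ) + 1 : ℤ) : ℝ) + t : ℝ) : ℂ))
          = ∑ i ∈ Finset.range N, Complex.exp (Complex.I * ((A + t : ℝ) : ℂ)) * q ^ i :=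
            Finset.sum_congr rfl fun i _ => hterm i
        _ = Complex.exp (Complex.I * ((A + t : ℝ) : ℂ)) * ∑ i ∈ Finset.range N, q ^ i := by
            rw [Finset.mul_sum]
        _ = 0 := by
            rw [geom_sum_eq hq1, hqN]
            simp
    have hcos : ∀ k : ℤ, Real.cos (A * (k : ℝ) + t)
        = (Complex.exp (Complex.I * ((A * (k : ℝ) + t : ℝ) : ℂ))).re := by
      intro k
      rw [mul_comm Complex.I (((A * (k : ℝ) + t : ℝ) : ℂ)), Complex.exp_ofReal_mul_I_re]
    rw [Finset.sum_congr rfl fun k _ => hcos k, ← Complex.re_sum, hS]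
    simp
  have hcard : (Finset.Icc (1 : ℤ) (N : ℤ)).card = N := by
    rw [Int.card_Icc]
    omega
  rw [← Finset.sum_div]
  have hnum : ∑ k ∈ Finset.Icc (1 : ℤ) (N : ℤ),
      (2 * d * Real.cos (A * (k : ℝ) + t) - (1 + d ^ 2) * Real.cos A)
      = -((N : ℝ) * ((1 + d ^ 2) * Real.cos A)) := by
    rw [Finset.sum_sub_distrib, ← Finset.mul_sum, hsum0, Finset.sum_const, hcard]
    ring
  rw [hnum]
  have hsA : Real.sin A ≠ 0 := ne_of_gt hsinA
  have hdd : d ^ 2 - 1 ≠ 0 := by linarith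
  field_simp
  ring
end

section
/- The sum over k = 1, …, N of cot²(θ_k) equals N·(ρ²·(2 + cos(4α)) − 1)/(1 − cos(4α)); in particular it does not depend on t. -/
open Real Finset

lemma aux_sum_zpow (N : ℕ) (hN : 0 < N) (ζ : ℂ) (h1 : ζ ≠ 1) (hζ : ζ ^ N = 1) :
    ∑ k ∈ Finset.Icc (1 : ℤ) (N : ℤ), ζ ^ k = 0 := by
  have hζ0 : ζ ≠ 0 := by
    intro h; rw [h, zero_pow hN.ne'] at hζ; exact zero_ne_one hζ
  have hmap : Finset.Icc (1 : ℤ) (N : ℤ) =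
      (Finset.range N).map ⟨fun n : ℕ => (n : ℤ) + 1,
        by intro a b h; exact_mod_cast add_right_cancel h⟩ := by
    ext x
    simp only [Finset.mem_Icc, Finset.mem_map, Finset.mem_range, Function.Embedding.coeFn_mk]
    constructor
    · rintro ⟨h1, h2⟩; exact ⟨(x - 1).toNat, by omega, show (((x - 1).toNat : ℕ) : ℤ) + 1 = x by omega⟩
    · rintro ⟨a, ha, rfl⟩; show 1 ≤ (a : ℤ) + 1 ∧ (a : ℤ) + 1 ≤ N; omega
  rw [hmap, Finset.sum_map]
  show ∑ n ∈ Finset.range N, ζ ^ ((n : ℤ) + 1) = 0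
  have : ∀ n ∈ Finset.range N, ζ ^ ((n : ℤ) + 1) = ζ * ζ ^ n := by
    intro n _
    rw [zpow_add₀ hζ0, zpow_natCast, zpow_one, mul_comm]
  rw [Finset.sum_congr rfl this, ← Finset.mul_sum, geom_sum_eq h1, hζ]
  simp

lemma aux_cot_sq (x y : ℂ) (him : ((starRingEnd ℂ) x * y).im ≠ 0) :
    (Real.cos (InnerProductGeometry.angle x y) / Real.sin (InnerProductGeometry.angle x y)) ^ 2
      = ((starRingEnd ℂ) x * y).re ^ 2 / ((starRingEnd ℂ) x * y).im ^ 2 := by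
  set X := (starRingEnd ℂ) x * y with hX
  have hX0 : X ≠ 0 := by intro h; rw [h] at him; simp at him
  have hx : x ≠ 0 := by rintro rfl; simp [hX] at hX0
  have hy : y ≠ 0 := by rintro rfl; simp [hX] at hX0
  have hn : ‖x‖ * ‖y‖ = ‖X‖ := by
    rw [hX, norm_mul, Complex.norm_conj]
  have hnpos : 0 < ‖x‖ * ‖y‖ := mul_pos (norm_pos_iff.2 hx) (norm_pos_iff.2 hy)
  have hn2 : (‖x‖ * ‖y‖) ^ 2 = X.re ^ 2 + X.im ^ 2 := by
    rw [hn, Complex.sq_norm, Complex.normSq_apply]; ring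
  have hinner : (inner ℝ x y : ℝ) = X.re := by rw [Complex.inner, mul_comm]
  have hcos : Real.cos (InnerProductGeometry.angle x y) = X.re / (‖x‖ * ‖y‖) := by
    rw [InnerProductGeometry.cos_angle, hinner]
  have hne : (‖x‖ * ‖y‖) ^ 2 ≠ 0 := by positivity
  have hratio : 1 - (X.re / (‖x‖ * ‖y‖)) ^ 2 = X.im ^ 2 / (‖x‖ * ‖y‖) ^ 2 := by
    rw [div_pow, eq_div_iff hne, sub_mul, one_mul, div_mul_cancel₀ _ hne]
    linarith [hn2]
  have hsin : Real.sin (InnerProductGeometry.angle x y) ^ 2 = X.im ^ 2 / (‖x‖ * ‖y‖) ^ 2 := by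
    rw [InnerProductGeometry.angle, Real.sin_arccos, hinner, ← hratio,
      Real.sq_sqrt]
    rw [hratio]; positivity
  rw [div_pow, hcos, hsin, div_pow]
  rw [div_div_div_cancel_right₀]
  exact hne

set_option maxHeartbeats 1000000 in
lemma aux_core (d a b c E : ℂ) (hb : b = a * E) (hc : c = b * E)
    (h1 : a - d ≠ 0) (h2 : b - d ≠ 0) (h3 : 1 - d * c ≠ 0) (h4 : 1 - d * b ≠ 0) :
    ((d * a - 1) / (a - d) - (d * b - 1) / (b - d)) *
        ((d - c) / (1 - d * c) - (d - b) / (1 - d * b)) *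
        ((d ^ 2 * E ^ 2 * b + b - d * E * (b ^ 2 + 1)) *
          ((1 + d ^ 2) * b - d * (b ^ 2 + 1)))
      = (1 - d ^ 2) ^ 2 * (E - 1) ^ 2 * b ^ 2 := by
  rw [div_sub_div _ _ h1 h2, div_sub_div _ _ h3 h4, div_mul_div_comm, div_mul_eq_mul_div,
    div_eq_iff (mul_ne_zero (mul_ne_zero h1 h2) (mul_ne_zero h3 h4))]
  subst hc; subst hb
  ring

lemma aux_exp_ne_one (s : ℝ) (hs1 : 0 < s) (hs2 : s < 2 * Real.pi) :
    Complex.exp (Complex.I * (s : ℂ)) ≠ 1 := by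
  intro h
  rw [Complex.exp_eq_one_iff] at h
  obtain ⟨n, hn⟩ := h
  have hsc : (s : ℂ) = ((n * (2 * Real.pi) : ℝ) : ℂ) := by
    apply mul_left_cancel₀ Complex.I_ne_zero
    rw [hn]; push_cast; ring
  have hs : s = n * (2 * Real.pi) := by exact_mod_cast hsc
  have hpi := Real.pi_pos
  rcases le_or_gt (n : ℝ) 0 with h' | h'
  · nlinarith
  · have hn0 : (0 : ℤ) < n := by exact_mod_cast h'
    have hn1 : (1 : ℤ) ≤ n := by omega
    have : (1 : ℝ) ≤ (n : ℝ) := by exact_mod_cast hn1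
    nlinarith

set_option maxHeartbeats 2000000 in
/-- Over the Poncelet family of harmonic polygons, the sum of the squared
cotangents of the interior angles is invariant and given by
`N·(ρ²·(2 + cos(4α)) − 1)/(1 − cos(4α))`, where `ρ = (1 + d²)/(d² − 1)`;
in particular it does not depend on `t`. -/
theorem sum_cot_sq_interior_angles (N : ℕ) (hN : 3 ≤ N) (d t : ℝ) (hd : |d| < 1)
    (z w : ℤ → ℂ) (θ : ℤ → ℝ)
    (hz : ∀ k : ℤ, z k = Complex.exp (Complex.I *
      ((2 * (Real.pi / N) * (k : ℝ) + t : ℝ) : ℂ)))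
    (hw : ∀ k : ℤ, w k = ((d : ℂ) * (starRingEnd ℂ) (z k) - 1) /
      ((starRingEnd ℂ) (z k) - (d : ℂ)))
    (hθ : ∀ k : ℤ, θ k = EuclideanGeometry.angle (w (k - 1)) (w k) (w (k + 1))) :
    ∑ k ∈ Finset.Icc (1 : ℤ) N, (Real.cos (θ k) / Real.sin (θ k)) ^ 2 =
      (N : ℝ) * (((1 + d ^ 2) / (d ^ 2 - 1)) ^ 2 * (2 + Real.cos (4 * (Real.pi / N))) - 1) /
        (1 - Real.cos (4 * (Real.pi / N))) := by
  have hN0 : 0 < N := by omega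
  have hNR : (0 : ℝ) < (N : ℝ) := by exact_mod_cast hN0
  have hNR3 : (3 : ℝ) ≤ (N : ℝ) := by exact_mod_cast hN
  have hpi := Real.pi_pos
  have hβpos : 0 < 2 * (Real.pi / N) := by positivity
  have hβlt : 2 * (Real.pi / N) < Real.pi := by
    have h1 : Real.pi / (N : ℝ) ≤ Real.pi / 3 :=
      div_le_div_of_nonneg_left hpi.le (by norm_num) hNR3
    linarith
  have hd2 : d ^ 2 < 1 := by nlinarith [abs_nonneg d, sq_abs d]
  have hz0 : ∀ k : ℤ, z k ≠ 0 := fun k => by rw [hz k]; exact Complex.exp_ne_zero _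
  have habs : ∀ k : ℤ, ‖z k‖ = 1 := by
    intro k; rw [hz k, mul_comm, Complex.norm_exp_ofReal_mul_I]
  have hconj : ∀ k : ℤ, (starRingEnd ℂ) (z k) = (z k)⁻¹ := by
    intro k
    rw [hz k, ← Complex.exp_conj, ← Complex.exp_neg]
    congr 1
    rw [map_mul, Complex.conj_I, Complex.conj_ofReal]
    ring
  set E : ℂ := Complex.exp (Complex.I * ((2 * (Real.pi / N) : ℝ) : ℂ)) with hEdef
  have hE0 : E ≠ 0 := Complex.exp_ne_zero _
  have hzk : ∀ k : ℤ, z k = Complex.exp (Complex.I * (t : ℂ)) * E ^ k := by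
    intro k
    rw [hz k, hEdef, ← Complex.exp_int_mul, ← Complex.exp_add]
    congr 1
    push_cast
    ring
  have hrec : ∀ k : ℤ, z k * E = z (k + 1) := by
    intro k
    rw [hz k, hz (k + 1), hEdef, ← Complex.exp_add]
    congr 1
    push_cast
    ring
  have hNC : ((N : ℕ) : ℂ) ≠ 0 := by exact_mod_cast hN0.ne'
  have hEN : E ^ N = 1 := by
    rw [hEdef, ← Complex.exp_nat_mul]
    rw [show ((N : ℕ) : ℂ) * (Complex.I * ((2 * (Real.pi / N) : ℝ) : ℂ))
        = 2 * Real.pi * Complex.I * (((N : ℕ) : ℂ) * (((N : ℕ) : ℂ))⁻¹) by push_cast; ring,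
      mul_inv_cancel₀ hNC, mul_one, Complex.exp_two_pi_mul_I]
  have hE1 : E ≠ 1 := aux_exp_ne_one _ hβpos (by linarith)
  have hE1' : E⁻¹ ≠ 1 := fun h => hE1 (by rw [← inv_inv E, h, inv_one])
  have hEN' : E⁻¹ ^ N = 1 := by rw [inv_pow, hEN, inv_one]
  have hE2N : (E ^ 2) ^ N = 1 := by rw [← pow_mul, mul_comm, pow_mul, hEN, one_pow]
  have hE2 : E ^ 2 ≠ 1 := by
    have : E ^ 2 = Complex.exp (Complex.I * ((2 * (2 * (Real.pi / N)) : ℝ) : ℂ)) := by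
      rw [hEdef, ← Complex.exp_nat_mul]
      congr 1
      push_cast
      ring
    rw [this]
    apply aux_exp_ne_one _ (by positivity)
    linarith
  have hE2' : (E ^ 2)⁻¹ ≠ 1 := fun h => hE2 (by rw [← inv_inv (E ^ 2), h, inv_one])
  have hE2N' : (E ^ 2)⁻¹ ^ N = 1 := by rw [inv_pow, hE2N, inv_one]
  -- per-vertex cotangent formula
  have hzd : ∀ j : ℤ, z j - (d : ℂ) ≠ 0 := by
    intro j h
    rw [sub_eq_zero] at h
    have h2 : ‖z j‖ = ‖((d : ℂ))‖ := by rw [h]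
    rw [habs j, Complex.norm_real, Real.norm_eq_abs] at h2
    exact absurd h2.symm (ne_of_lt hd)
  have hdz : ∀ j : ℤ, 1 - (d : ℂ) * z j ≠ 0 := by
    intro j h
    rw [sub_eq_zero] at h
    have h2 := congrArg (‖·‖) h
    rw [norm_one, norm_mul, Complex.norm_real, Real.norm_eq_abs, habs j, mul_one] at h2
    exact absurd h2 (ne_of_gt hd)
  have hid : ∀ j : ℤ, (z j)⁻¹ - (d : ℂ) ≠ 0 := by
    intro j
    have h3 : (z j)⁻¹ - (d : ℂ) = (1 - (d : ℂ) * z j) * (z j)⁻¹ := by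
      rw [sub_mul, one_mul, mul_assoc, mul_inv_cancel₀ (hz0 j), mul_one]
    rw [h3]
    exact mul_ne_zero (hdz j) (inv_ne_zero (hz0 j))
  have hwj : ∀ j : ℤ, w j = ((d : ℂ) - z j) / (1 - (d : ℂ) * z j) := by
    intro j
    rw [hw j, hconj j, div_eq_div_iff (hid j) (hdz j)]
    field_simp [hz0 j]
  have hcw : ∀ j : ℤ, (starRingEnd ℂ) (w j) = ((d : ℂ) * z j - 1) / (z j - (d : ℂ)) := by
    intro j
    rw [hw j, map_div₀, map_sub, map_sub, map_mul, Complex.conj_conj, Complex.conj_ofReal,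
      map_one]
  have hsinβpos : 0 < Real.sin (2 * (Real.pi / N)) := Real.sin_pos_of_pos_of_lt_pi hβpos hβlt
  have hQpos : 0 < (1 - d ^ 2) * Real.sin (2 * (Real.pi / N)) :=
    mul_pos (by nlinarith) hsinβpos
  have hcosβlt : Real.cos (2 * (Real.pi / N)) < 1 := by
    nlinarith [mul_pos hsinβpos hsinβpos, Real.sin_sq (2 * (Real.pi / N))]
  have hcosβ : ((Real.cos (2 * (Real.pi / N)) : ℝ) : ℂ) * (2 * E) = E ^ 2 + 1 := by
    rw [hEdef, mul_comm Complex.I, Complex.exp_mul_I, Complex.ofReal_cos]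
    linear_combination Complex.sin_sq_add_cos_sq ((2 * (Real.pi / N) : ℝ) : ℂ)
      - Complex.sin ((2 * (Real.pi / N) : ℝ) : ℂ) ^ 2 * Complex.I_sq
  have hsinβ : ((Real.sin (2 * (Real.pi / N)) : ℝ) : ℂ) * (2 * Complex.I * E) = E ^ 2 - 1 := by
    rw [hEdef, mul_comm Complex.I, Complex.exp_mul_I, Complex.ofReal_sin]
    linear_combination (-1 : ℂ) * Complex.sin_sq_add_cos_sq ((2 * (Real.pi / N) : ℝ) : ℂ)
      + Complex.sin ((2 * (Real.pi / N) : ℝ) : ℂ) ^ 2 * Complex.I_sq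
  have hk : ∀ k : ℤ, (Real.cos (θ k) / Real.sin (θ k)) ^ 2
      = ((1 + d ^ 2) * Real.cos (2 * (Real.pi / N))
            - 2 * d * Real.cos (2 * (Real.pi / N) * (k : ℝ) + t)) ^ 2
          / ((1 - d ^ 2) * Real.sin (2 * (Real.pi / N))) ^ 2 := by
    intro k
    have hcosψ : ((Real.cos (2 * (Real.pi / N) * (k : ℝ) + t) : ℝ) : ℂ) * (2 * z k)
        = (z k) ^ 2 + 1 := by
      rw [hz k, mul_comm Complex.I, Complex.exp_mul_I, Complex.ofReal_cos]
      linear_combination Complex.sin_sq_add_cos_sq ((2 * (Real.pi / N) * (k : ℝ) + t : ℝ) : ℂ)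
        - Complex.sin ((2 * (Real.pi / N) * (k : ℝ) + t : ℝ) : ℂ) ^ 2 * Complex.I_sq
    have hV : (((((1 + d ^ 2) * Real.cos (2 * (Real.pi / N))
            - 2 * d * Real.cos (2 * (Real.pi / N) * (k : ℝ) + t)) : ℝ) : ℂ)
          - ((((1 - d ^ 2) * Real.sin (2 * (Real.pi / N))) : ℝ) : ℂ) * Complex.I) * (E * z k)
        = (d : ℂ) ^ 2 * E ^ 2 * z k + z k - (d : ℂ) * E * ((z k) ^ 2 + 1) := by
      push_cast at hcosψ hcosβ hsinβ ⊢
      linear_combination ((1 + (d : ℂ) ^ 2) * (z k) / 2) * hcosβ - ((d : ℂ) * E) * hcosψ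
        - ((z k) / 2) * hsinβ + ((d : ℂ) ^ 2 * (z k) / 2) * hsinβ
    have hM : ((((1 + d ^ 2) - 2 * d * Real.cos (2 * (Real.pi / N) * (k : ℝ) + t)) : ℝ) : ℂ)
          * z k = (1 + (d : ℂ) ^ 2) * z k - (d : ℂ) * ((z k) ^ 2 + 1) := by
      push_cast at hcosψ ⊢
      linear_combination (-(d : ℂ)) * hcosψ
    have hR : (((-((1 - d ^ 2) ^ 2 * (2 - 2 * Real.cos (2 * (Real.pi / N))))) : ℝ) : ℂ) * E
        = (1 - (d : ℂ) ^ 2) ^ 2 * (E - 1) ^ 2 := by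
      push_cast at hcosβ ⊢
      linear_combination ((1 - (d : ℂ) ^ 2) ^ 2) * hcosβ
    have hb' : z k = z (k - 1) * E := by rw [hrec (k - 1), sub_add_cancel]
    have hc' : z (k + 1) = z k * E := (hrec k).symm
    have hcore := aux_core (d : ℂ) (z (k - 1)) (z k) (z (k + 1)) E hb' hc'
      (hzd (k - 1)) (hzd k) (hdz (k + 1)) (hdz k)
    have hXc : (starRingEnd ℂ) (w (k - 1) - w k) * (w (k + 1) - w k)
        = (((d : ℂ) * z (k - 1) - 1) / (z (k - 1) - (d : ℂ))
            - ((d : ℂ) * z k - 1) / (z k - (d : ℂ))) *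
          (((d : ℂ) - z (k + 1)) / (1 - (d : ℂ) * z (k + 1))
            - ((d : ℂ) - z k) / (1 - (d : ℂ) * z k)) := by
      rw [map_sub, hcw (k - 1), hcw k, hwj (k + 1), hwj k]
    have step : (starRingEnd ℂ) (w (k - 1) - w k) * (w (k + 1) - w k) *
        (((((((1 + d ^ 2) * Real.cos (2 * (Real.pi / N))
            - 2 * d * Real.cos (2 * (Real.pi / N) * (k : ℝ) + t)) : ℝ) : ℂ)
          - ((((1 - d ^ 2) * Real.sin (2 * (Real.pi / N))) : ℝ) : ℂ) * Complex.I) * (E * z k)) *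
          (((((1 + d ^ 2) - 2 * d * Real.cos (2 * (Real.pi / N) * (k : ℝ) + t)) : ℝ) : ℂ)
            * z k))
        = (1 - (d : ℂ) ^ 2) ^ 2 * (E - 1) ^ 2 * (z k) ^ 2 := by
      rw [hXc, hV, hM]
      exact hcore
    have final : (starRingEnd ℂ) (w (k - 1) - w k) * (w (k + 1) - w k) *
        ((((((1 + d ^ 2) * Real.cos (2 * (Real.pi / N))
            - 2 * d * Real.cos (2 * (Real.pi / N) * (k : ℝ) + t)) : ℝ) : ℂ)
          - ((((1 - d ^ 2) * Real.sin (2 * (Real.pi / N))) : ℝ) : ℂ) * Complex.I) *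
          ((((1 + d ^ 2) - 2 * d * Real.cos (2 * (Real.pi / N) * (k : ℝ) + t)) : ℝ) : ℂ)) *
        (E * (z k) ^ 2)
        = (((-((1 - d ^ 2) ^ 2 * (2 - 2 * Real.cos (2 * (Real.pi / N))))) : ℝ) : ℂ)
          * (E * (z k) ^ 2) := by
      calc (starRingEnd ℂ) (w (k - 1) - w k) * (w (k + 1) - w k) *
        ((((((1 + d ^ 2) * Real.cos (2 * (Real.pi / N))
            - 2 * d * Real.cos (2 * (Real.pi / N) * (k : ℝ) + t)) : ℝ) : ℂ)
          - ((((1 - d ^ 2) * Real.sin (2 * (Real.pi / N))) : ℝ) : ℂ) * Complex.I) *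
          ((((1 + d ^ 2) - 2 * d * Real.cos (2 * (Real.pi / N) * (k : ℝ) + t)) : ℝ) : ℂ)) *
        (E * (z k) ^ 2)
          = (starRingEnd ℂ) (w (k - 1) - w k) * (w (k + 1) - w k) *
        (((((((1 + d ^ 2) * Real.cos (2 * (Real.pi / N))
            - 2 * d * Real.cos (2 * (Real.pi / N) * (k : ℝ) + t)) : ℝ) : ℂ)
          - ((((1 - d ^ 2) * Real.sin (2 * (Real.pi / N))) : ℝ) : ℂ) * Complex.I) * (E * z k)) *
          (((((1 + d ^ 2) - 2 * d * Real.cos (2 * (Real.pi / N) * (k : ℝ) + t)) : ℝ) : ℂ)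
            * z k)) := by ring
        _ = (1 - (d : ℂ) ^ 2) ^ 2 * (E - 1) ^ 2 * (z k) ^ 2 := step
        _ = (((-((1 - d ^ 2) ^ 2 * (2 - 2 * Real.cos (2 * (Real.pi / N))))) : ℝ) : ℂ)
          * (E * (z k) ^ 2) := by linear_combination ((z k) ^ 2) * hR.symm
    have hEz2 : E * (z k) ^ 2 ≠ 0 := mul_ne_zero hE0 (pow_ne_zero 2 (hz0 k))
    have hPQM := mul_right_cancel₀ hEz2 final
    set X1 := (starRingEnd ℂ) (w (k - 1) - w k) * (w (k + 1) - w k) with hX1def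
    set Pr := (1 + d ^ 2) * Real.cos (2 * (Real.pi / N))
      - 2 * d * Real.cos (2 * (Real.pi / N) * (k : ℝ) + t) with hPr
    set Qr := (1 - d ^ 2) * Real.sin (2 * (Real.pi / N)) with hQr
    set Mr := (1 + d ^ 2) - 2 * d * Real.cos (2 * (Real.pi / N) * (k : ℝ) + t) with hMr
    set Rr := -((1 - d ^ 2) ^ 2 * (2 - 2 * Real.cos (2 * (Real.pi / N)))) with hRr
    obtain ⟨hre, him⟩ := Complex.ext_iff.mp hPQM
    simp only [Complex.mul_re, Complex.mul_im, Complex.ofReal_re, Complex.ofReal_im,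
      Complex.sub_re, Complex.sub_im, Complex.I_re, Complex.I_im,
      mul_zero, mul_one, zero_mul, sub_zero, zero_sub, neg_neg, neg_zero, add_zero,
      zero_add] at hre him
    have hre' : (X1.re * Pr + X1.im * Qr) * Mr = Rr := by linear_combination hre
    have him' : (X1.im * Pr - X1.re * Qr) * Mr = 0 := by linear_combination him
    have hM0 : (0 : ℝ) < Mr := by
      rw [hMr]
      have h1 : |d * Real.cos (2 * (Real.pi / N) * (k : ℝ) + t)| ≤ |d| := by
        rw [abs_mul]
        exact mul_le_of_le_one_right (abs_nonneg d) (Real.abs_cos_le_one _)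
      have h2 := abs_le.mp h1
      have h3 := abs_lt.mp hd
      nlinarith [sq_abs d, abs_nonneg d, sq_nonneg (1 - |d|)]
    have hRneg : Rr < 0 := by
      rw [hRr]
      have h5 : (0 : ℝ) < (1 - d ^ 2) ^ 2 := pow_pos (by nlinarith) 2
      have h6 : (0 : ℝ) < 2 - 2 * Real.cos (2 * (Real.pi / N)) := by linarith
      nlinarith [mul_pos h5 h6]
    have hQne : Qr ≠ 0 := hQpos.ne'
    have hxi : X1.im ≠ 0 := by
      intro h0
      have h1 : X1.re * (Qr * Mr) = 0 := by linear_combination (-1 : ℝ) * him' + (Pr * Mr) * h0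
      have h2 : X1.re = 0 := by
        rcases mul_eq_zero.mp h1 with h | h
        · exact h
        · exact absurd h (mul_ne_zero hQne hM0.ne')
      have h3 : Rr = 0 := by
        linear_combination (-1 : ℝ) * hre' + (Pr * Mr) * h2 + (Qr * Mr) * h0
      exact absurd h3 hRneg.ne
    have hPQ : X1.im * Pr = X1.re * Qr := by
      have h4 : X1.im * Pr - X1.re * Qr = 0 := by
        rcases mul_eq_zero.mp him' with h | h
        · exact h
        · exact absurd h hM0.ne'
      linarith
    rw [hθ k]
    have hang : EuclideanGeometry.angle (w (k - 1)) (w k) (w (k + 1))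
        = InnerProductGeometry.angle (w (k - 1) - w k) (w (k + 1) - w k) := by
      rw [EuclideanGeometry.angle, vsub_eq_sub, vsub_eq_sub]
    rw [hang, aux_cot_sq _ _ hxi, ← hX1def]
    rw [div_eq_div_iff (pow_ne_zero 2 hxi) (pow_ne_zero 2 hQne)]
    linear_combination (-(X1.im * Pr + X1.re * Qr)) * hPQ
  -- vanishing sums
  have hre1 : ∀ k : ℤ, (z k).re = Real.cos (2 * (Real.pi / N) * (k : ℝ) + t) := by
    intro k
    rw [hz k, mul_comm, Complex.exp_ofReal_mul_I_re]
  have hcos_sum : ∑ k ∈ Finset.Icc (1 : ℤ) (N : ℤ),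
      Real.cos (2 * (Real.pi / N) * (k : ℝ) + t) = 0 := by
    have h1 : ∑ k ∈ Finset.Icc (1 : ℤ) (N : ℤ), Real.cos (2 * (Real.pi / N) * (k : ℝ) + t)
        = (∑ k ∈ Finset.Icc (1 : ℤ) (N : ℤ), z k).re := by
      rw [Complex.re_sum]
      exact Finset.sum_congr rfl fun k _ => (hre1 k).symm
    have h2 : ∑ k ∈ Finset.Icc (1 : ℤ) (N : ℤ), z k
        = Complex.exp (Complex.I * (t : ℂ)) * ∑ k ∈ Finset.Icc (1 : ℤ) (N : ℤ), E ^ k := by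
      rw [Finset.mul_sum]
      exact Finset.sum_congr rfl fun k _ => hzk k
    rw [h1, h2, aux_sum_zpow N hN0 E hE1 hEN, mul_zero, Complex.zero_re]
  have hre2 : ∀ k : ℤ, ((z k) ^ 2).re = Real.cos (2 * (2 * (Real.pi / N) * (k : ℝ) + t)) := by
    intro k
    rw [hz k, ← Complex.exp_nat_mul]
    rw [show ((2 : ℕ) : ℂ) * (Complex.I * ((2 * (Real.pi / N) * (k : ℝ) + t : ℝ) : ℂ))
        = ((2 * (2 * (Real.pi / N) * (k : ℝ) + t) : ℝ) : ℂ) * Complex.I by push_cast; ring]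
    exact Complex.exp_ofReal_mul_I_re _
  have hzk2 : ∀ k : ℤ, (z k) ^ 2
      = Complex.exp (Complex.I * ((2 * t : ℝ) : ℂ)) * (E ^ 2) ^ k := by
    intro k
    rw [hzk k, mul_pow]
    congr 1
    · rw [← Complex.exp_nat_mul]
      congr 1
      push_cast
      ring
    · calc (E ^ k) ^ (2 : ℕ) = (E ^ k) ^ ((2 : ℕ) : ℤ) := by rw [zpow_natCast]
        _ = E ^ (k * ((2 : ℕ) : ℤ)) := by rw [zpow_mul]
        _ = E ^ (((2 : ℕ) : ℤ) * k) := by rw [mul_comm]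
        _ = (E ^ ((2 : ℕ) : ℤ)) ^ k := by rw [zpow_mul]
        _ = (E ^ (2 : ℕ)) ^ k := by rw [zpow_natCast]
  have hcos2_sum : ∑ k ∈ Finset.Icc (1 : ℤ) (N : ℤ),
      Real.cos (2 * (2 * (Real.pi / N) * (k : ℝ) + t)) = 0 := by
    have h1 : ∑ k ∈ Finset.Icc (1 : ℤ) (N : ℤ), Real.cos (2 * (2 * (Real.pi / N) * (k : ℝ) + t))
        = (∑ k ∈ Finset.Icc (1 : ℤ) (N : ℤ), (z k) ^ 2).re := by
      rw [Complex.re_sum]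
      exact Finset.sum_congr rfl fun k _ => (hre2 k).symm
    have h2 : ∑ k ∈ Finset.Icc (1 : ℤ) (N : ℤ), (z k) ^ 2
        = Complex.exp (Complex.I * ((2 * t : ℝ) : ℂ))
          * ∑ k ∈ Finset.Icc (1 : ℤ) (N : ℤ), (E ^ 2) ^ k := by
      rw [Finset.mul_sum]
      exact Finset.sum_congr rfl fun k _ => hzk2 k
    rw [h1, h2, aux_sum_zpow N hN0 (E ^ 2) hE2 hE2N, mul_zero, Complex.zero_re]
  -- assemble
  have hcard : (Finset.Icc (1 : ℤ) (N : ℤ)).card = N := by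
    rw [Int.card_Icc]
    simp
  have hexp : ∀ k : ℤ, ((1 + d ^ 2) * Real.cos (2 * (Real.pi / N))
        - 2 * d * Real.cos (2 * (Real.pi / N) * (k : ℝ) + t)) ^ 2
      = (((1 + d ^ 2) * Real.cos (2 * (Real.pi / N))) ^ 2 + 2 * d ^ 2)
        + (-(4 * d * ((1 + d ^ 2) * Real.cos (2 * (Real.pi / N)))))
            * Real.cos (2 * (Real.pi / N) * (k : ℝ) + t)
        + (2 * d ^ 2) * Real.cos (2 * (2 * (Real.pi / N) * (k : ℝ) + t)) := by
    intro k
    linear_combination (4 * d ^ 2) * Real.cos_sq (2 * (Real.pi / N) * (k : ℝ) + t)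
  have hsumP : ∑ k ∈ Finset.Icc (1 : ℤ) (N : ℤ),
      ((1 + d ^ 2) * Real.cos (2 * (Real.pi / N))
        - 2 * d * Real.cos (2 * (Real.pi / N) * (k : ℝ) + t)) ^ 2
      = (N : ℝ) * (((1 + d ^ 2) * Real.cos (2 * (Real.pi / N))) ^ 2 + 2 * d ^ 2) := by
    calc ∑ k ∈ Finset.Icc (1 : ℤ) (N : ℤ), ((1 + d ^ 2) * Real.cos (2 * (Real.pi / N))
        - 2 * d * Real.cos (2 * (Real.pi / N) * (k : ℝ) + t)) ^ 2
        = ∑ k ∈ Finset.Icc (1 : ℤ) (N : ℤ),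
          ((((1 + d ^ 2) * Real.cos (2 * (Real.pi / N))) ^ 2 + 2 * d ^ 2)
            + (-(4 * d * ((1 + d ^ 2) * Real.cos (2 * (Real.pi / N)))))
                * Real.cos (2 * (Real.pi / N) * (k : ℝ) + t)
            + (2 * d ^ 2) * Real.cos (2 * (2 * (Real.pi / N) * (k : ℝ) + t))) :=
          Finset.sum_congr rfl fun k _ => hexp k
      _ = (Finset.Icc (1 : ℤ) (N : ℤ)).card
            • (((1 + d ^ 2) * Real.cos (2 * (Real.pi / N))) ^ 2 + 2 * d ^ 2)
          + (-(4 * d * ((1 + d ^ 2) * Real.cos (2 * (Real.pi / N)))))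
            * ∑ k ∈ Finset.Icc (1 : ℤ) (N : ℤ), Real.cos (2 * (Real.pi / N) * (k : ℝ) + t)
          + (2 * d ^ 2) * ∑ k ∈ Finset.Icc (1 : ℤ) (N : ℤ),
              Real.cos (2 * (2 * (Real.pi / N) * (k : ℝ) + t)) := by
        rw [Finset.sum_add_distrib, Finset.sum_add_distrib, ← Finset.mul_sum, ← Finset.mul_sum,
          Finset.sum_const]
      _ = (N : ℝ) * (((1 + d ^ 2) * Real.cos (2 * (Real.pi / N))) ^ 2 + 2 * d ^ 2) := by
        rw [hcos_sum, hcos2_sum, hcard, nsmul_eq_mul]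
        ring
  calc ∑ k ∈ Finset.Icc (1 : ℤ) (N : ℤ), (Real.cos (θ k) / Real.sin (θ k)) ^ 2
      = ∑ k ∈ Finset.Icc (1 : ℤ) (N : ℤ),
        (((1 + d ^ 2) * Real.cos (2 * (Real.pi / N))
            - 2 * d * Real.cos (2 * (Real.pi / N) * (k : ℝ) + t)) ^ 2
          / ((1 - d ^ 2) * Real.sin (2 * (Real.pi / N))) ^ 2) :=
        Finset.sum_congr rfl fun k _ => hk k
    _ = (∑ k ∈ Finset.Icc (1 : ℤ) (N : ℤ),
          ((1 + d ^ 2) * Real.cos (2 * (Real.pi / N))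
            - 2 * d * Real.cos (2 * (Real.pi / N) * (k : ℝ) + t)) ^ 2)
          / ((1 - d ^ 2) * Real.sin (2 * (Real.pi / N))) ^ 2 := by
        rw [Finset.sum_div]
    _ = (N : ℝ) * (((1 + d ^ 2) * Real.cos (2 * (Real.pi / N))) ^ 2 + 2 * d ^ 2)
          / ((1 - d ^ 2) ^ 2 * (1 - Real.cos (2 * (Real.pi / N)) ^ 2)) := by
        rw [hsumP, mul_pow (1 - d ^ 2) (Real.sin (2 * (Real.pi / N))), Real.sin_sq]
    _ = (N : ℝ) * (((1 + d ^ 2) / (d ^ 2 - 1)) ^ 2 * (2 + Real.cos (4 * (Real.pi / N))) - 1)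
          / (1 - Real.cos (4 * (Real.pi / N))) := by
        rw [show (4 : ℝ) * (Real.pi / N) = 2 * (2 * (Real.pi / N)) by ring,
          Real.cos_two_mul (2 * (Real.pi / N))]
        have hne2 : d ^ 2 - 1 ≠ 0 := by nlinarith
        have hcc : 1 - Real.cos (2 * (Real.pi / N)) ^ 2 ≠ 0 := by
          nlinarith [mul_pos hsinβpos hsinβpos, Real.sin_sq (2 * (Real.pi / N))]
        have hcc2 : 1 - (2 * Real.cos (2 * (Real.pi / N)) ^ 2 - 1) ≠ 0 := by
          intro h
          apply hcc
          linarith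
        have hB : (1 - d ^ 2) ^ 2 * (1 - Real.cos (2 * (Real.pi / N)) ^ 2) ≠ 0 :=
          mul_ne_zero (pow_ne_zero 2 (by nlinarith)) hcc
        rw [div_eq_div_iff hB hcc2]
        have e : ((1 + d ^ 2) / (d ^ 2 - 1)) ^ 2 * (d ^ 2 - 1) ^ 2 = (1 + d ^ 2) ^ 2 := by
          rw [div_pow, div_mul_cancel₀]
          exact pow_ne_zero 2 hne2
        linear_combination (-(N : ℝ) * (2 + (2 * Real.cos (2 * (Real.pi / N)) ^ 2 - 1))
          * (1 - Real.cos (2 * (Real.pi / N)) ^ 2)) * e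
end

section
/- For every integer m with 1 ≤ m ≤ N − 1, the power sum over k = 1, …, N of cot^m(θ_k) does not depend on t: writing θ_k(t) for the interior angle at w_k when the parameter is t, for all real t and t′ one has Σ_k cot^m(θ_k(t)) = Σ_k cot^m(θ_k(t′)). -/
open Real Finset Polynomial


lemma cot_angle_eq (x y : ℂ) (h : ((starRingEnd ℂ) x * y).im ≠ 0) :
    Real.cos (InnerProductGeometry.angle x y) / Real.sin (InnerProductGeometry.angle x y)
      = ((starRingEnd ℂ) x * y).re / |((starRingEnd ℂ) x * y).im| := by
  set P := (starRingEnd ℂ) x * y with hP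
  have hP0 : P ≠ 0 := fun h0 => h (by rw [h0]; simp)
  have hA : ‖P‖ = ‖x‖ * ‖y‖ := by
    rw [hP, norm_mul, Complex.norm_conj]
  have hA0 : ‖P‖ ≠ 0 := (norm_ne_zero_iff.mpr hP0)
  have hq : (inner ℝ x y : ℝ) = P.re := by rw [Complex.inner, mul_comm, hP]
  have hcos : Real.cos (InnerProductGeometry.angle x y) = P.re / ‖P‖ := by
    rw [InnerProductGeometry.cos_angle, hq, hA]
  have him0 : |P.im| ≠ 0 := abs_ne_zero.2 h
  have hsin : Real.sin (InnerProductGeometry.angle x y) = |P.im| / ‖P‖ := by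
    rw [InnerProductGeometry.angle, Real.sin_arccos, hq, hA, ← hA]
    rw [show (1 : ℝ) - (P.re / ‖P‖)^2 = (P.im / ‖P‖)^2 by
      have h2 : (‖P‖)^2 = P.re^2 + P.im^2 := by
        rw [Complex.sq_norm, Complex.normSq_apply]; ring
      field_simp
      linarith
]
    rw [Real.sqrt_sq_eq_abs, abs_div, _root_.abs_of_nonneg (norm_nonneg P)]
  rw [hcos, hsin]
  field_simp


lemma sum_zpow_Icc (N : ℕ) (ω : ℂ) (hω0 : ω ≠ 0) :
    ∑ k ∈ Finset.Icc (1:ℤ) (N:ℤ), ω ^ k = ω * ∑ j ∈ Finset.range N, ω ^ j := by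
  have hmap : Finset.Icc (1:ℤ) (N:ℤ)
      = Finset.map ⟨fun n : ℕ => (n:ℤ)+1, (show Function.Injective (fun n : ℕ => (n:ℤ)+1) from fun a b h => by simpa using h)⟩ (Finset.range N) := by
    ext x
    simp only [Finset.mem_Icc, Finset.mem_map, Finset.mem_range, Function.Embedding.coeFn_mk]
    constructor
    · intro h; exact ⟨(x-1).toNat, by omega, by omega⟩
    · rintro ⟨a, ha, rfl⟩; omega
  rw [hmap, Finset.sum_map, Finset.mul_sum]
  refine Finset.sum_congr rfl fun j hj => ?_
  simp only [Function.Embedding.coeFn_mk]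
  rw [zpow_add₀ hω0, zpow_natCast, zpow_one, mul_comm]

lemma sum_exp_unit_zero (N : ℕ) (hN : 3 ≤ N) (r : ℤ) (hr0 : r ≠ 0) (hrN : r.natAbs < N) (t : ℝ) :
    ∑ k ∈ Finset.Icc (1:ℤ) (N:ℤ),
      Complex.exp ((r:ℂ) * (((2*(π/N)*(k:ℝ) + t : ℝ):ℂ) * Complex.I)) = 0 := by
  have hNR : (N:ℝ) ≠ 0 := by positivity
  set ω : ℂ := Complex.exp ((r:ℂ) * (((2*(π/N):ℝ):ℂ) * Complex.I)) with hω
  have hω0 : ω ≠ 0 := Complex.exp_ne_zero _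
  have hterm : ∀ k : ℤ, Complex.exp ((r:ℂ) * (((2*(π/N)*(k:ℝ) + t : ℝ):ℂ) * Complex.I))
      = Complex.exp ((r:ℂ) * (((t:ℝ):ℂ) * Complex.I)) * ω ^ k := by
    intro k
    rw [hω, ← Complex.exp_int_mul, ← Complex.exp_add]
    congr 1
    push_cast
    ring
  rw [Finset.sum_congr rfl fun k _ => hterm k, ← Finset.mul_sum]
  have hωN : ω ^ (N : ℕ) = 1 := by
    rw [hω, ← Complex.exp_nat_mul]
    rw [show (N:ℂ) * ((r:ℂ) * (((2*(π/N):ℝ):ℂ) * Complex.I)) = (r:ℂ) * (2*(π:ℂ)*Complex.I) by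
      have hNC : (N:ℂ) ≠ 0 := by exact_mod_cast hNR
      push_cast
      field_simp]
    exact Complex.exp_int_mul_two_pi_mul_I r
  have hω1 : ω ≠ 1 := by
    rw [hω, Ne, Complex.exp_eq_one_iff]
    rintro ⟨n, hn⟩
    have him := congrArg Complex.im hn
    simp [Complex.mul_im, Complex.mul_re] at him
    -- him : r * (2*(π/N)) = n * (2*π)  (roughly)
    have hπ : (0:ℝ) < π := Real.pi_pos
    have hrn : (r:ℝ) = (n:ℝ) * N := by
      field_simp at him
      nlinarith [him]
    have hrnN : r = n * N := by exact_mod_cast hrn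
    rcases eq_or_ne n 0 with h0 | h0
    · rw [h0, zero_mul] at hrnN; exact hr0 hrnN
    · have hna : r.natAbs = n.natAbs * N := by
        rw [hrnN, Int.natAbs_mul, Int.natAbs_natCast]
      have h1 : 1 ≤ n.natAbs := Int.natAbs_pos.mpr h0
      have : N ≤ r.natAbs := by rw [hna]; exact Nat.le_mul_of_pos_left N h1
      omega
  rw [sum_zpow_Icc N ω hω0, geom_sum_eq hω1, hωN]
  simp


lemma sum_pow_cos_invariant (N : ℕ) (hN : 3 ≤ N) (a b : ℝ) (m : ℕ) (hm : m < N) (t t' : ℝ) :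
    ∑ k ∈ Finset.Icc (1:ℤ) (N:ℤ), (a + b * Real.cos (2*(π/N)*(k:ℝ) + t))^m
      = ∑ k ∈ Finset.Icc (1:ℤ) (N:ℤ), (a + b * Real.cos (2*(π/N)*(k:ℝ) + t'))^m := by
  set p : Polynomial ℂ :=
    (Polynomial.C ((b:ℂ)/2) * Polynomial.X^2 + Polynomial.C (a:ℂ) * Polynomial.X
      + Polynomial.C ((b:ℂ)/2))^m with hp
  have hdeg : p.natDegree < 2*m+1 := by
    have h1 : (Polynomial.C ((b:ℂ)/2) * Polynomial.X^2 + Polynomial.C (a:ℂ) * Polynomial.X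
        + Polynomial.C ((b:ℂ)/2)).natDegree ≤ 2 := by
      apply le_trans (Polynomial.natDegree_add_le _ _)
      simp only [sup_le_iff]
      refine ⟨le_trans (Polynomial.natDegree_add_le _ _) ?_, by simp⟩
      simp only [sup_le_iff]
      constructor
      · exact le_trans (Polynomial.natDegree_C_mul_le _ _) (by simp)
      · exact le_trans (Polynomial.natDegree_C_mul_le _ _) (by simp [Polynomial.natDegree_X])
    calc p.natDegree ≤ m * 2 :=
          le_trans Polynomial.natDegree_pow_le (Nat.mul_le_mul_left m h1)
    _ < 2*m+1 := by omega
  have key : ∀ τ : ℝ, ((∑ k ∈ Finset.Icc (1:ℤ) (N:ℤ),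
      (a + b * Real.cos (2*(π/N)*(k:ℝ) + τ))^m : ℝ) : ℂ)
      = ∑ n ∈ Finset.range (2*m+1), ∑ k ∈ Finset.Icc (1:ℤ) (N:ℤ), p.coeff n *
            Complex.exp ((((n:ℕ):ℂ) - ((m:ℕ):ℂ)) *
              ((2*((π:ℂ)/(N:ℂ))*((k:ℤ):ℂ) + (τ:ℂ)) * Complex.I)) := by
    intro τ
    push_cast
    rw [Finset.sum_comm]
    refine Finset.sum_congr rfl fun k _ => ?_
    set X : ℂ := 2*((π:ℂ)/(N:ℂ))*((k:ℤ):ℂ) + (τ:ℂ) with hX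
    set s : ℂ := Complex.exp (X * Complex.I) with hs
    have hs0 : s ≠ 0 := Complex.exp_ne_zero _
    have hcos : Complex.cos X = (s + s⁻¹)/2 := by
      rw [hs, ← Complex.exp_neg]
      have h2 := Complex.two_cos (x := X)
      rw [show (-X*Complex.I) = -(X*Complex.I) by ring] at h2
      field_simp
      linear_combination h2
    have hzpow : ∀ n : ℕ, Complex.exp ((((n:ℕ):ℂ) - ((m:ℕ):ℂ)) * (X * Complex.I))
        = s ^ ((n:ℤ) - (m:ℤ)) := by
      intro n
      rw [hs, ← Complex.exp_int_mul]
      congr 1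
      push_cast
      ring
    rw [Finset.sum_congr rfl fun n _ => by rw [hzpow n]]
    have heval : ((a:ℂ) + (b:ℂ) * Complex.cos X)^m = s^(-(m:ℤ)) * p.eval s := by
      rw [hcos, hp, Polynomial.eval_pow]
      simp only [Polynomial.eval_add, Polynomial.eval_mul, Polynomial.eval_C,
        Polynomial.eval_pow, Polynomial.eval_X]
      rw [zpow_neg, zpow_natCast, ← inv_pow, ← mul_pow]
      congr 1
      field_simp
      ring
    rw [heval, Polynomial.eval_eq_sum_range' hdeg, Finset.mul_sum]
    refine Finset.sum_congr rfl fun n _ => ?_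
    rw [zpow_sub₀ hs0, zpow_natCast, zpow_natCast]
    field_simp
    rw [zpow_neg, zpow_natCast]; field_simp
  have hinj : Function.Injective (Complex.ofReal) := Complex.ofReal_injective
  apply hinj
  rw [key t, key t']
  refine Finset.sum_congr rfl fun n hn => ?_
  rcases eq_or_ne n m with rfl | hnm
  · simp
  · have hr0 : ((n:ℤ) - (m:ℤ)) ≠ 0 := by omega
    have hrN : ((n:ℤ) - (m:ℤ)).natAbs < N := by
      simp only [Finset.mem_range] at hn
      omega
    have h1 := sum_exp_unit_zero N hN _ hr0 hrN t
    have h2 := sum_exp_unit_zero N hN _ hr0 hrN t'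
    push_cast at h1 h2
    rw [← Finset.mul_sum, ← Finset.mul_sum, h1, h2]


set_option maxHeartbeats 2000000 in
lemma cot_theta (N : ℕ) (hN : 3 ≤ N) (d : ℝ) (hd : |d| < 1) (t : ℝ) (k : ℤ)
    (W : ℤ → ℂ)
    (hW : ∀ j : ℤ, W j = ((d : ℂ) * (starRingEnd ℂ) (Complex.exp (Complex.I *
        ((2 * (Real.pi / N) * ((j : ℤ) : ℝ) + t : ℝ) : ℂ))) - 1) /
      ((starRingEnd ℂ) (Complex.exp (Complex.I *
        ((2 * (Real.pi / N) * ((j : ℤ) : ℝ) + t : ℝ) : ℂ))) - (d : ℂ))) :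
    Real.cos (EuclideanGeometry.angle (W (k-1)) (W k) (W (k+1))) /
      Real.sin (EuclideanGeometry.angle (W (k-1)) (W k) (W (k+1)))
      = (2*d*Real.cos (2 * (π / N) * (k:ℝ) + t) - (1+d^2)*Real.cos (2 * (π / N)))
          / ((1-d^2)*Real.sin (2 * (π / N))) := by
  have hNR : (0:ℝ) < N := by positivity
  have hd1 : -1 < d := (abs_lt.mp hd).1
  have hd2 : d < 1 := (abs_lt.mp hd).2
  have hd3 : 0 < 1 - d^2 := by nlinarith
  have hπ : (0:ℝ) < π := Real.pi_pos
  have hαpos : 0 < 2 * (π / N) := by positivity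
  have hαlt : 2 * (π / N) < π := by
    rw [mul_div_assoc', div_lt_iff₀ hNR]
    have h3 : (3:ℝ) ≤ N := by exact_mod_cast hN
    nlinarith
  set B := Real.sin (2 * (π / N)) with hBdef
  have hB : 0 < B := Real.sin_pos_of_pos_of_lt_pi hαpos hαlt
  set A := Real.cos (2 * (π / N)) with hAdef
  have hAB : A^2 + B^2 = 1 := by
    rw [hAdef, hBdef]; rw [add_comm]; exact Real.sin_sq_add_cos_sq _
  have hA1 : A < 1 := by nlinarith
  set τ := 2 * (π / N) * (k:ℝ) + t with hτdef
  set s : ℂ := Complex.exp ((τ:ℂ) * Complex.I) with hs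
  set c : ℂ := Complex.exp (((2 * (π / N) : ℝ):ℂ) * Complex.I) with hc
  have hs0 : s ≠ 0 := Complex.exp_ne_zero _
  have hc0 : c ≠ 0 := Complex.exp_ne_zero _
  have habs : ∀ x : ℝ, ‖Complex.exp ((x:ℂ) * Complex.I)‖ = 1 := fun x => by
    rw [Complex.norm_exp]; simp
  have habs_s : ‖s‖ = 1 := habs τ
  have habs_c : ‖c‖ = 1 := habs _
  have hconj : ∀ x : ℝ, (starRingEnd ℂ) (Complex.exp ((x:ℂ) * Complex.I))
      = (Complex.exp ((x:ℂ) * Complex.I))⁻¹ := fun x => by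
    rw [← Complex.exp_conj, ← Complex.exp_neg]
    congr 1
    rw [map_mul, Complex.conj_ofReal, Complex.conj_I]
    ring
  have hconj_s : (starRingEnd ℂ) s = s⁻¹ := hconj τ
  have hconj_c : (starRingEnd ℂ) c = c⁻¹ := hconj _
  have hne : ∀ σ : ℂ, ‖σ‖ = 1 → (1:ℂ) - (d:ℂ) * σ ≠ 0 := by
    intro σ hσ h
    rw [sub_eq_zero] at h
    have h2 := congrArg Norm.norm h
    rw [norm_mul, Complex.norm_real, Real.norm_eq_abs, hσ, norm_one, mul_one] at h2
    rw [← h2] at hd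
    exact lt_irrefl _ hd
  have hmoeb : ∀ σ : ℂ, ‖σ‖ = 1 →
      ((d:ℂ) * (starRingEnd ℂ) σ - 1) / ((starRingEnd ℂ) σ - (d:ℂ))
        = ((d:ℂ) - σ) / (1 - (d:ℂ) * σ) := by
    intro σ hσ
    have hσ0 : σ ≠ 0 := by
      intro h; rw [h] at hσ; simp at hσ
    have hσc : (starRingEnd ℂ) σ = σ⁻¹ := (Complex.inv_eq_conj hσ).symm
    have h1 : (1:ℂ) - (d:ℂ) * σ ≠ 0 := hne σ hσ
    have h2 : σ⁻¹ - (d:ℂ) ≠ 0 := by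
      intro h
      apply h1
      have h3 := congrArg (fun z => σ * z) h
      simp only [mul_sub, mul_inv_cancel₀ hσ0, mul_zero] at h3
      linear_combination h3
    have hinv : σ⁻¹ * σ = 1 := inv_mul_cancel₀ hσ0
    rw [hσc, div_eq_div_iff h2 h1]
    linear_combination (1 - (d:ℂ)^2) * hinv
  -- values of W
  have hWk : W k = ((d:ℂ) - s) / (1 - (d:ℂ) * s) := by
    rw [hW k]
    rw [show Complex.exp (Complex.I * ((2 * (Real.pi / N) * ((k:ℤ):ℝ) + t : ℝ):ℂ)) = s by
      rw [hs, mul_comm]]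
    exact hmoeb s habs_s
  have hsm : Complex.exp (Complex.I * ((2 * (Real.pi / N) * (((k-1):ℤ):ℝ) + t : ℝ):ℂ))
      = s * c⁻¹ := by
    rw [hs, hc, ← Complex.exp_neg, ← Complex.exp_add]
    congr 1
    rw [hτdef]
    push_cast
    ring
  have hsp : Complex.exp (Complex.I * ((2 * (Real.pi / N) * (((k+1):ℤ):ℝ) + t : ℝ):ℂ))
      = s * c := by
    rw [hs, hc, ← Complex.exp_add]
    congr 1
    rw [hτdef]
    push_cast
    ring
  have habs_sm : ‖s * c⁻¹‖ = 1 := by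
    rw [norm_mul, norm_inv, habs_s, habs_c]; norm_num
  have habs_sp : ‖s * c‖ = 1 := by
    rw [norm_mul, habs_s, habs_c]; norm_num
  have hWm : W (k-1) = ((d:ℂ) - s * c⁻¹) / (1 - (d:ℂ) * (s * c⁻¹)) := by
    rw [hW (k-1), hsm]; exact hmoeb _ habs_sm
  have hWp : W (k+1) = ((d:ℂ) - s * c) / (1 - (d:ℂ) * (s * c)) := by
    rw [hW (k+1), hsp]; exact hmoeb _ habs_sp
  -- nonvanishing denominators
  have h1 : (1:ℂ) - (d:ℂ) * s ≠ 0 := hne s habs_s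
  have h2 : (1:ℂ) - (d:ℂ) * (s * c) ≠ 0 := hne _ habs_sp
  have h3 : (1:ℂ) - (d:ℂ) * (s * c⁻¹) ≠ 0 := hne _ habs_sm
  have h4 : (1:ℂ) - (d:ℂ) * (s⁻¹ * c) ≠ 0 := hne _ (by
    rw [norm_mul, norm_inv, habs_s, habs_c]; norm_num)
  have h5 : (1:ℂ) - (d:ℂ) * s⁻¹ ≠ 0 := hne _ (by rw [norm_inv, habs_s]; norm_num)
  have hne2 : ∀ σ : ℂ, ‖σ‖ = 1 → σ - (d:ℂ) ≠ 0 := by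
    intro σ hσ h
    rw [sub_eq_zero] at h
    have h2 := congrArg Norm.norm h
    rw [hσ, Complex.norm_real, Real.norm_eq_abs] at h2
    rw [h2] at hd
    exact lt_irrefl _ hd
  have h6 : s - (d:ℂ) ≠ 0 := hne2 s habs_s
  have h7 : s - (d:ℂ) * c ≠ 0 := by
    intro h
    rw [sub_eq_zero] at h
    have h2 := congrArg Norm.norm h
    rw [habs_s, norm_mul, Complex.norm_real, Real.norm_eq_abs, habs_c, mul_one] at h2
    rw [← h2] at hd
    exact lt_irrefl _ hd
  have h8 : s * c - (d:ℂ) ≠ 0 := hne2 _ habs_sp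
  have h9 : s * c⁻¹ - (d:ℂ) ≠ 0 := hne2 _ habs_sm
  -- the product P
  set P : ℂ := (starRingEnd ℂ) (W (k-1) - W k) * (W (k+1) - W k) with hPdef
  set G : ℂ := c + (d:ℂ)^2 * c⁻¹ - (d:ℂ) * (s + s⁻¹) with hG
  set G' : ℂ := c⁻¹ + (d:ℂ)^2 * c - (d:ℂ) * (s + s⁻¹) with hG'
  have hu : W (k-1) - W k
      = (1-(d:ℂ)^2) * (s - s * c⁻¹) / ((1 - (d:ℂ) * (s * c⁻¹)) * (1 - (d:ℂ) * s)) := by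
    rw [hWm, hWk, div_sub_div _ _ h3 h1]
    congr 1
    ring
  have hv : W (k+1) - W k
      = (1-(d:ℂ)^2) * (s - s * c) / ((1 - (d:ℂ) * (s * c)) * (1 - (d:ℂ) * s)) := by
    rw [hWp, hWk, div_sub_div _ _ h2 h1]
    congr 1
    ring
  have hcu : (starRingEnd ℂ) (W (k-1) - W k)
      = (1 - (d:ℂ)^2) * (s * (1 - c)) / ((s - (d:ℂ)*c) * (s - (d:ℂ))) := by
    rw [hu]
    simp only [map_div₀, map_sub, map_mul, map_one, map_pow, Complex.conj_ofReal,
      hconj_s, hconj_c, map_inv₀, inv_inv]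
    rw [div_eq_div_iff (mul_ne_zero h4 h5) (mul_ne_zero h7 h6)]
    field_simp
  have hPG : P * ((1 + (d:ℂ)^2 - (d:ℂ)*(s+s⁻¹)) * (G * G'))
      = ((1 - (d:ℂ)^2)^2 * (c + c⁻¹ - 2)) * G := by
    rw [hPdef, hcu, hv, hG, hG']
    rw [div_mul_div_comm, div_mul_eq_mul_div, div_eq_iff (by
      exact mul_ne_zero (mul_ne_zero h7 h6) (mul_ne_zero h2 h1))]
    field_simp
    ring
  -- trigonometric bridges
  have hcosτ : Complex.cos ((τ:ℝ):ℂ) = (s + s⁻¹)/2 := by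
    rw [hs, ← Complex.exp_neg]
    have h2 := Complex.two_cos (x := (τ:ℂ))
    rw [show (-(τ:ℂ) * Complex.I) = -((τ:ℂ) * Complex.I) by ring] at h2
    linear_combination h2 / 2
  have hAc : ((A : ℝ) : ℂ) = (c + c⁻¹)/2 := by
    rw [hAdef, Complex.ofReal_cos, hc, ← Complex.exp_neg]
    have h2 := Complex.two_cos (x := ((2 * (π / N):ℝ):ℂ))
    rw [show (-((2 * (π / N):ℝ):ℂ) * Complex.I) = -(((2 * (π / N):ℝ):ℂ) * Complex.I) by ring] at h2
    linear_combination h2 / 2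
  have hBI : ((B : ℝ) : ℂ) * Complex.I = (c - c⁻¹)/2 := by
    rw [hBdef, Complex.ofReal_sin, hc, ← Complex.exp_neg]
    have h2 := Complex.two_sin (x := ((2 * (π / N):ℝ):ℂ))
    rw [show (-((2 * (π / N):ℝ):ℂ) * Complex.I) = -(((2 * (π / N):ℝ):ℂ) * Complex.I) by ring] at h2
    linear_combination (Complex.I / 2) * h2 + ((Complex.exp (-(((2 * (π / N):ℝ):ℂ) * Complex.I))
      - Complex.exp (((2 * (π / N):ℝ):ℂ) * Complex.I))/2) * Complex.I_sq
  -- real quantities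
  set X : ℝ := (1+d^2)*A - 2*d*Real.cos τ with hXdef
  set Y : ℝ := (1-d^2)*B with hYdef
  have hY : 0 < Y := by rw [hYdef]; positivity
  have hm1 : 0 < 1 + d^2 - 2*d*Real.cos τ := by
    have habs1 : |d * Real.cos τ| < 1 := by
      rw [abs_mul]
      calc |d| * |Real.cos τ| ≤ |d| * 1 :=
            mul_le_mul_of_nonneg_left (Real.abs_cos_le_one τ) (abs_nonneg d)
        _ = |d| := mul_one _
        _ < 1 := hd
    have h1' : d * Real.cos τ < 1 := (abs_lt.mp habs1).2
    have hsc := Real.sin_sq_add_cos_sq τ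
    nlinarith [mul_pos (by linarith : (0:ℝ) < 1 - d * Real.cos τ)
      (by linarith : (0:ℝ) < 1 - d * Real.cos τ), sq_nonneg (d * Real.sin τ), hsc,
      sq_nonneg (Real.sin τ), sq_nonneg d, sq_nonneg (d*Real.sin τ - 1)]
  have hXY : 0 < X^2 + Y^2 := by nlinarith [sq_nonneg X]
  set M : ℝ := (1 + d^2 - 2*d*Real.cos τ) * (X^2 + Y^2) with hMdef
  have hM : 0 < M := mul_pos hm1 hXY
  set E : ℝ := (1-d^2)^2*(2*A - 2) with hEdef
  have hE : E < 0 := by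
    rw [hEdef]
    apply mul_neg_of_pos_of_neg
    · positivity
    · linarith
  -- bridges between G, G' and X, Y
  have hGXY : (X:ℂ) + (Y:ℂ) * Complex.I = G := by
    rw [hG, hXdef, hYdef]
    push_cast
    rw [show ((1:ℂ) - (d:ℂ)^2) * (B:ℂ) * Complex.I = ((1:ℂ) - (d:ℂ)^2) * ((B:ℂ) * Complex.I) by
      ring, hBI, hAc, hcosτ]
    ring
  have hG'XY : (X:ℂ) - (Y:ℂ) * Complex.I = G' := by
    rw [hG', hXdef, hYdef]
    push_cast
    rw [show ((1:ℂ) - (d:ℂ)^2) * (B:ℂ) * Complex.I = ((1:ℂ) - (d:ℂ)^2) * ((B:ℂ) * Complex.I) by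
      ring, hBI, hAc, hcosτ]
    ring
  have hGG' : G * G' = ((X^2 + Y^2 : ℝ):ℂ) := by
    rw [← hGXY, ← hG'XY]
    push_cast
    linear_combination (-(Y:ℂ)^2) * Complex.I_sq
  have hmc : (1:ℂ) + (d:ℂ)^2 - 2*(d:ℂ)*Complex.cos ((τ:ℝ):ℂ) = 1 + (d:ℂ)^2 - (d:ℂ)*(s+s⁻¹) := by
    rw [hcosτ]
    ring
  have h2Ac : ((1 - (d:ℂ)^2)^2 * (c + c⁻¹ - 2)) = ((E:ℝ):ℂ) := by
    rw [hEdef]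
    push_cast
    rw [hAc]
    ring
  have hP : P * ((M:ℝ):ℂ) = ((E:ℝ):ℂ) * ((X:ℂ) + (Y:ℂ) * Complex.I) := by
    rw [hMdef, hGXY]
    push_cast
    push_cast at hGG'
    rw [hmc, ← hGG', ← h2Ac]
    exact hPG
  have hM0 : ((M:ℝ):ℂ) ≠ 0 := by
    simp only [ne_eq, Complex.ofReal_eq_zero]
    exact ne_of_gt hM
  set r : ℝ := E / M with hrdef
  have hPv : P = ((r*X : ℝ):ℂ) + ((r*Y : ℝ):ℂ) * Complex.I := by
    have : P = (((E:ℝ):ℂ) * ((X:ℂ) + (Y:ℂ) * Complex.I)) / ((M:ℝ):ℂ) := by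
      rw [eq_div_iff hM0]
      exact hP
    rw [this, hrdef]
    push_cast
    field_simp
  have hre : P.re = r*X := by rw [hPv]; simp
  have him : P.im = r*Y := by rw [hPv]; simp
  have hr : r < 0 := div_neg_of_neg_of_pos hE hM
  have hrY : r * Y < 0 := mul_neg_of_neg_of_pos hr hY
  have him0 : P.im ≠ 0 := by rw [him]; exact ne_of_lt hrY
  have hang : EuclideanGeometry.angle (W (k-1)) (W k) (W (k+1))
      = InnerProductGeometry.angle (W (k-1) - W k) (W (k+1) - W k) := by
    rw [EuclideanGeometry.angle, vsub_eq_sub, vsub_eq_sub]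
  rw [hang, cot_angle_eq _ _ (by rw [← hPdef]; exact him0), ← hPdef, hre, him,
    abs_of_neg hrY]
  rw [div_eq_div_iff (by linarith) (by positivity)]
  rw [hXdef, hYdef]
  ring


/-- For `1 ≤ m ≤ N − 1`, the sum of the `m`-th powers of the cotangents of the
interior angles of the harmonic `N`-gon does not depend on the Poncelet
parameter `t`. -/
theorem sum_cot_pow_invariant (N : ℕ) (hN : 3 ≤ N) (d : ℝ) (hd : |d| < 1)
    (z w : ℝ → ℤ → ℂ) (θ : ℝ → ℤ → ℝ)
    (hz : ∀ (t : ℝ) (k : ℤ), z t k = Complex.exp (Complex.I *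
      ((2 * (Real.pi / N) * (k : ℝ) + t : ℝ) : ℂ)))
    (hw : ∀ (t : ℝ) (k : ℤ), w t k = ((d : ℂ) * (starRingEnd ℂ) (z t k) - 1) /
      ((starRingEnd ℂ) (z t k) - (d : ℂ)))
    (hθ : ∀ (t : ℝ) (k : ℤ),
      θ t k = EuclideanGeometry.angle (w t (k - 1)) (w t k) (w t (k + 1)))
    (m : ℕ) (hm1 : 1 ≤ m) (hmN : m ≤ N - 1) (t t' : ℝ) :
    ∑ k ∈ Finset.Icc (1 : ℤ) N, (Real.cos (θ t k) / Real.sin (θ t k)) ^ m =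
      ∑ k ∈ Finset.Icc (1 : ℤ) N, (Real.cos (θ t' k) / Real.sin (θ t' k)) ^ m := by
  have hmlt : m < N := by omega
  have hNR : (0:ℝ) < N := by positivity
  have hd1 : -1 < d := (abs_lt.mp hd).1
  have hd2 : d < 1 := (abs_lt.mp hd).2
  have hd3 : 0 < 1 - d^2 := by nlinarith
  have hπ : (0:ℝ) < π := Real.pi_pos
  have hαpos : 0 < 2 * (π / N) := by positivity
  have hαlt : 2 * (π / N) < π := by
    rw [mul_div_assoc', div_lt_iff₀ hNR]
    have h3 : (3:ℝ) ≤ N := by exact_mod_cast hN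
    nlinarith
  have hB : 0 < Real.sin (2 * (π / N)) := Real.sin_pos_of_pos_of_lt_pi hαpos hαlt
  set A : ℝ := Real.cos (2 * (π / N)) with hAdef
  set B : ℝ := Real.sin (2 * (π / N)) with hBdef
  have hden : (1-d^2) * B ≠ 0 := by positivity
  set a : ℝ := -((1+d^2)*A) / ((1-d^2)*B) with hadef
  set b : ℝ := 2*d / ((1-d^2)*B) with hbdef
  have hkey : ∀ (τ : ℝ) (k : ℤ), Real.cos (θ τ k) / Real.sin (θ τ k)
      = a + b * Real.cos (2 * (π / N) * (k:ℝ) + τ) := by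
    intro τ k
    rw [hθ τ k, cot_theta N hN d hd τ k (w τ) (fun j => by rw [hw τ j, hz τ j])]
    rw [hadef, hbdef, div_mul_eq_mul_div, ← add_div]
    congr 1
    ring
  calc ∑ k ∈ Finset.Icc (1 : ℤ) (N:ℤ), (Real.cos (θ t k) / Real.sin (θ t k)) ^ m
      = ∑ k ∈ Finset.Icc (1 : ℤ) (N:ℤ), (a + b * Real.cos (2 * (π / N) * (k:ℝ) + t))^m :=
        Finset.sum_congr rfl fun k _ => by rw [hkey t k]
    _ = ∑ k ∈ Finset.Icc (1 : ℤ) (N:ℤ), (a + b * Real.cos (2 * (π / N) * (k:ℝ) + t'))^m :=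
        sum_pow_cos_invariant N hN a b m hmlt t t'
    _ = ∑ k ∈ Finset.Icc (1 : ℤ) (N:ℤ), (Real.cos (θ t' k) / Real.sin (θ t' k)) ^ m :=
        Finset.sum_congr rfl fun k _ => by rw [hkey t' k]
end

section
/- Let N = 4. Then for every odd positive integer m, the sum over k = 1, …, 4 of cot^m(θ_k) equals 0. -/
open Real Finset

private lemma mulconj_form (a b c e : ℝ) :
    (starRingEnd ℂ) ((a:ℂ) + (b:ℝ)*Complex.I) * ((c:ℂ) + (e:ℝ)*Complex.I)
      = ((a*c + b*e : ℝ) : ℂ) + ((a*e - b*c : ℝ) : ℂ)*Complex.I := by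
  simp [map_add, map_mul, Complex.conj_ofReal, Complex.conj_I]
  ring_nf
  linear_combination (-(b:ℂ)*e) * Complex.I_sq

private lemma ne_form (r s : ℝ) (h : r^2 + s^2 ≠ 0) :
    ((r:ℂ) + (s:ℝ)*Complex.I) ≠ 0 := by
  intro hc
  rw [Complex.ext_iff] at hc
  simp at hc
  apply h
  rw [hc.1, hc.2]; ring

private lemma mul_form (p q r s : ℝ) :
    ((p:ℂ) + (q:ℝ)*Complex.I) * ((r^2+s^2 : ℝ) : ℂ)
      = (((p*r + q*s : ℝ) : ℂ) + ((q*r - p*s : ℝ) : ℂ)*Complex.I) * ((r:ℂ) + (s:ℝ)*Complex.I) := by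
  push_cast
  linear_combination ((p:ℂ)*(s:ℂ)^2 - (q:ℂ)*(r:ℂ)*(s:ℂ)) * Complex.I_sq

private lemma split_div (z : ℂ) (a b c : ℝ) (hc : c ≠ 0)
    (h : z * (c:ℂ) = (a:ℂ) + (b:ℝ)*Complex.I) :
    z = ((a/c : ℝ):ℂ) + ((b/c : ℝ):ℂ)*Complex.I := by
  have hc' : ((c:ℝ):ℂ) ≠ 0 := Complex.ofReal_ne_zero.mpr hc
  have : z = ((a:ℂ) + (b:ℝ)*Complex.I)/((c:ℝ):ℂ) := by
    rw [eq_div_iff hc']; exact h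
  rw [this]
  push_cast
  field_simp

private lemma cot_angle (u v : ℂ) (R M : ℝ)
    (h : (starRingEnd ℂ) u * v = (R : ℂ) + (M : ℂ)*Complex.I) (hM : M < 0) :
    Real.cos (InnerProductGeometry.angle u v) / Real.sin (InnerProductGeometry.angle u v)
      = -R / M := by
  have him : ((starRingEnd ℂ) u * v).im = M := by rw [h]; simp
  have hre : ((starRingEnd ℂ) u * v).re = R := by rw [h]; simp
  have hinner : (inner ℝ u v : ℝ) = R := by rw [Complex.inner, mul_comm, hre]
  have hu0 : u ≠ 0 := by
    intro hc; rw [hc] at him; simp at him; exact hM.ne him.symm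
  have hv0 : v ≠ 0 := by
    intro hc; rw [hc] at him; simp at him; exact hM.ne him.symm
  have hn : 0 < ‖u‖ * ‖v‖ := mul_pos (norm_pos_iff.mpr hu0) (norm_pos_iff.mpr hv0)
  have hsq : (inner ℝ u u : ℝ) * (inner ℝ v v : ℝ) - (inner ℝ u v : ℝ) * (inner ℝ u v : ℝ) = M^2 := by
    rw [hinner, real_inner_self_eq_norm_sq, real_inner_self_eq_norm_sq]
    have : ‖u‖^2 * ‖v‖^2 = Complex.normSq ((starRingEnd ℂ) u * v) := by
      rw [Complex.normSq_mul, Complex.normSq_conj, Complex.normSq_eq_norm_sq, Complex.normSq_eq_norm_sq]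
    rw [this, h]
    simp [Complex.normSq_apply]
    ring
  have hsin := InnerProductGeometry.sin_angle_mul_norm_mul_norm u v
  rw [hsq] at hsin
  have hsin' : Real.sin (InnerProductGeometry.angle u v) * (‖u‖ * ‖v‖) = -M := by
    rw [hsin, Real.sqrt_sq_eq_abs, abs_of_neg hM]
  have hcos := InnerProductGeometry.cos_angle_mul_norm_mul_norm u v
  rw [hinner] at hcos
  have hs : Real.sin (InnerProductGeometry.angle u v) = -M / (‖u‖ * ‖v‖) := by
    rw [eq_div_iff hn.ne']; exact hsin'
  have hc : Real.cos (InnerProductGeometry.angle u v) = R / (‖u‖ * ‖v‖) := by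
    rw [eq_div_iff hn.ne']; exact hcos
  have hau : ‖u‖ ≠ 0 := by simpa using hu0
  have hav : ‖v‖ ≠ 0 := by simpa using hv0
  rw [hs, hc]
  field_simp [hM.ne]

set_option maxHeartbeats 2000000 in
private lemma vertex_cot (d x y : ℝ) (hd2 : d^2 < 1) (hxy : x^2 + y^2 = 1) (g : ℂ)
    (hg : g = (x:ℝ) + (y:ℝ)*Complex.I) :
    Real.cos (EuclideanGeometry.angle
        (((d:ℂ) * (starRingEnd ℂ) (-Complex.I * g) - 1) / ((starRingEnd ℂ) (-Complex.I * g) - (d:ℂ)))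
        (((d:ℂ) * (starRingEnd ℂ) g - 1) / ((starRingEnd ℂ) g - (d:ℂ)))
        (((d:ℂ) * (starRingEnd ℂ) (Complex.I * g) - 1) / ((starRingEnd ℂ) (Complex.I * g) - (d:ℂ))))
      / Real.sin (EuclideanGeometry.angle
        (((d:ℂ) * (starRingEnd ℂ) (-Complex.I * g) - 1) / ((starRingEnd ℂ) (-Complex.I * g) - (d:ℂ)))
        (((d:ℂ) * (starRingEnd ℂ) g - 1) / ((starRingEnd ℂ) g - (d:ℂ)))
        (((d:ℂ) * (starRingEnd ℂ) (Complex.I * g) - 1) / ((starRingEnd ℂ) (Complex.I * g) - (d:ℂ))))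
      = 2*d*x/(1 - d^2) := by
  have hd1 : (0:ℝ) < 1 - d^2 := by nlinarith
  have hdA : (0:ℝ) < (y-d)^2 + x^2 := by nlinarith [sq_nonneg (1 - d*y), sq_nonneg (d*x), sq_nonneg (y-d), sq_nonneg x]
  have hdB : (0:ℝ) < (x-d)^2 + (-y)^2 := by nlinarith [sq_nonneg (1 - d*x), sq_nonneg (d*y), sq_nonneg (x-d), sq_nonneg y]
  have hdC : (0:ℝ) < (-y-d)^2 + (-x)^2 := by nlinarith [sq_nonneg (1 + d*y), sq_nonneg (d*x), sq_nonneg (y+d), sq_nonneg x]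
  have hg' : (starRingEnd ℂ) g = (x:ℝ) - (y:ℝ)*Complex.I := by
    rw [hg]; simp [Complex.conj_ofReal]; ring
  have eA1 : (d:ℂ) * (starRingEnd ℂ) (-Complex.I * g) - 1
      = ((d*y-1 : ℝ) : ℂ) + ((d*x : ℝ) : ℂ)*Complex.I := by
    simp only [map_mul, map_neg, Complex.conj_I, hg']
    push_cast
    linear_combination (-(d:ℂ)*y) * Complex.I_sq
  have eA2 : (starRingEnd ℂ) (-Complex.I * g) - (d:ℂ)
      = ((y-d : ℝ) : ℂ) + ((x : ℝ) : ℂ)*Complex.I := by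
    simp only [map_mul, map_neg, Complex.conj_I, hg']
    push_cast
    ring_nf
    linear_combination (-(y:ℂ)) * Complex.I_sq
  have eB1 : (d:ℂ) * (starRingEnd ℂ) g - 1
      = ((d*x-1 : ℝ) : ℂ) + ((-(d*y) : ℝ) : ℂ)*Complex.I := by
    rw [hg']; push_cast; ring
  have eB2 : (starRingEnd ℂ) g - (d:ℂ)
      = ((x-d : ℝ) : ℂ) + ((-y : ℝ) : ℂ)*Complex.I := by
    rw [hg']; push_cast; ring
  have eC1 : (d:ℂ) * (starRingEnd ℂ) (Complex.I * g) - 1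
      = ((-(d*y)-1 : ℝ) : ℂ) + ((-(d*x) : ℝ) : ℂ)*Complex.I := by
    simp only [map_mul, Complex.conj_I, hg']
    push_cast
    linear_combination ((d:ℂ)*y) * Complex.I_sq
  have eC2 : (starRingEnd ℂ) (Complex.I * g) - (d:ℂ)
      = ((-y-d : ℝ) : ℂ) + ((-x : ℝ) : ℂ)*Complex.I := by
    simp only [map_mul, Complex.conj_I, hg']
    push_cast
    ring_nf
    linear_combination ((y:ℂ)) * Complex.I_sq
  have hA' : (((d:ℂ) * (starRingEnd ℂ) (-Complex.I * g) - 1) / ((starRingEnd ℂ) (-Complex.I * g) - (d:ℂ))) * ((((y-d)^2+x^2) : ℝ) : ℂ) = ((((d*y-1)*(y-d) + (d*x)*x) : ℝ) : ℂ) + ((((d*x)*(y-d) - (d*y-1)*x) : ℝ) : ℂ)*Complex.I := by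
    rw [eA1, eA2, div_mul_eq_mul_div, div_eq_iff (ne_form (y-d) x hdA.ne')]
    exact mul_form (d*y-1) (d*x) (y-d) x
  have hB' : (((d:ℂ) * (starRingEnd ℂ) g - 1) / ((starRingEnd ℂ) g - (d:ℂ))) * ((((x-d)^2+(-y)^2) : ℝ) : ℂ) = ((((d*x-1)*(x-d) + (-(d*y))*(-y)) : ℝ) : ℂ) + ((((-(d*y))*(x-d) - (d*x-1)*(-y)) : ℝ) : ℂ)*Complex.I := by
    rw [eB1, eB2, div_mul_eq_mul_div, div_eq_iff (ne_form (x-d) (-y) hdB.ne')]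
    exact mul_form (d*x-1) (-(d*y)) (x-d) (-y)
  have hC' : (((d:ℂ) * (starRingEnd ℂ) (Complex.I * g) - 1) / ((starRingEnd ℂ) (Complex.I * g) - (d:ℂ))) * ((((-y-d)^2+(-x)^2) : ℝ) : ℂ) = ((((-(d*y)-1)*(-y-d) + (-(d*x))*(-x)) : ℝ) : ℂ) + ((((-(d*x))*(-y-d) - (-(d*y)-1)*(-x)) : ℝ) : ℂ)*Complex.I := by
    rw [eC1, eC2, div_mul_eq_mul_div, div_eq_iff (ne_form (-y-d) (-x) hdC.ne')]
    exact mul_form (-(d*y)-1) (-(d*x)) (-y-d) (-x)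
  have h1 : ((((d:ℂ) * (starRingEnd ℂ) (-Complex.I * g) - 1) / ((starRingEnd ℂ) (-Complex.I * g) - (d:ℂ))) - (((d:ℂ) * (starRingEnd ℂ) g - 1) / ((starRingEnd ℂ) g - (d:ℂ)))) * (((((y-d)^2+x^2) : ℝ) : ℂ) * ((((x-d)^2+(-y)^2) : ℝ) : ℂ))
      = (((((d*y-1)*(y-d) + (d*x)*x)*((x-d)^2+(-y)^2) - ((d*x-1)*(x-d) + (-(d*y))*(-y))*((y-d)^2+x^2)) : ℝ) : ℂ) + (((((d*x)*(y-d) - (d*y-1)*x)*((x-d)^2+(-y)^2) - ((-(d*y))*(x-d) - (d*x-1)*(-y))*((y-d)^2+x^2)) : ℝ) : ℂ)*Complex.I := by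
    have e : ((((d:ℂ) * (starRingEnd ℂ) (-Complex.I * g) - 1) / ((starRingEnd ℂ) (-Complex.I * g) - (d:ℂ))) - (((d:ℂ) * (starRingEnd ℂ) g - 1) / ((starRingEnd ℂ) g - (d:ℂ)))) * (((((y-d)^2+x^2) : ℝ) : ℂ) * ((((x-d)^2+(-y)^2) : ℝ) : ℂ))
        = (((d:ℂ) * (starRingEnd ℂ) (-Complex.I * g) - 1) / ((starRingEnd ℂ) (-Complex.I * g) - (d:ℂ))) * ((((y-d)^2+x^2) : ℝ) : ℂ) * ((((x-d)^2+(-y)^2) : ℝ) : ℂ)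
          - (((d:ℂ) * (starRingEnd ℂ) g - 1) / ((starRingEnd ℂ) g - (d:ℂ))) * ((((x-d)^2+(-y)^2) : ℝ) : ℂ) * ((((y-d)^2+x^2) : ℝ) : ℂ) := by ring
    rw [e, hA', hB']; push_cast; ring
  have h2 : ((((d:ℂ) * (starRingEnd ℂ) (Complex.I * g) - 1) / ((starRingEnd ℂ) (Complex.I * g) - (d:ℂ))) - (((d:ℂ) * (starRingEnd ℂ) g - 1) / ((starRingEnd ℂ) g - (d:ℂ)))) * (((((-y-d)^2+(-x)^2) : ℝ) : ℂ) * ((((x-d)^2+(-y)^2) : ℝ) : ℂ))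
      = (((((-(d*y)-1)*(-y-d) + (-(d*x))*(-x))*((x-d)^2+(-y)^2) - ((d*x-1)*(x-d) + (-(d*y))*(-y))*((-y-d)^2+(-x)^2)) : ℝ) : ℂ) + (((((-(d*x))*(-y-d) - (-(d*y)-1)*(-x))*((x-d)^2+(-y)^2) - ((-(d*y))*(x-d) - (d*x-1)*(-y))*((-y-d)^2+(-x)^2)) : ℝ) : ℂ)*Complex.I := by
    have e : ((((d:ℂ) * (starRingEnd ℂ) (Complex.I * g) - 1) / ((starRingEnd ℂ) (Complex.I * g) - (d:ℂ))) - (((d:ℂ) * (starRingEnd ℂ) g - 1) / ((starRingEnd ℂ) g - (d:ℂ)))) * (((((-y-d)^2+(-x)^2) : ℝ) : ℂ) * ((((x-d)^2+(-y)^2) : ℝ) : ℂ))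
        = (((d:ℂ) * (starRingEnd ℂ) (Complex.I * g) - 1) / ((starRingEnd ℂ) (Complex.I * g) - (d:ℂ))) * ((((-y-d)^2+(-x)^2) : ℝ) : ℂ) * ((((x-d)^2+(-y)^2) : ℝ) : ℂ)
          - (((d:ℂ) * (starRingEnd ℂ) g - 1) / ((starRingEnd ℂ) g - (d:ℂ))) * ((((x-d)^2+(-y)^2) : ℝ) : ℂ) * ((((-y-d)^2+(-x)^2) : ℝ) : ℂ) := by ring
    rw [e, hC', hB']; push_cast; ring
  have hc : (starRingEnd ℂ) ((((d:ℂ) * (starRingEnd ℂ) (-Complex.I * g) - 1) / ((starRingEnd ℂ) (-Complex.I * g) - (d:ℂ))) - (((d:ℂ) * (starRingEnd ℂ) g - 1) / ((starRingEnd ℂ) g - (d:ℂ)))) * ((((d:ℂ) * (starRingEnd ℂ) (Complex.I * g) - 1) / ((starRingEnd ℂ) (Complex.I * g) - (d:ℂ))) - (((d:ℂ) * (starRingEnd ℂ) g - 1) / ((starRingEnd ℂ) g - (d:ℂ)))) * (((((y-d)^2+x^2)*((x-d)^2+(-y)^2)*(((-y-d)^2+(-x)^2)*((x-d)^2+(-y)^2)))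 : ℝ) : ℂ)
      = ((((((d*y-1)*(y-d) + (d*x)*x)*((x-d)^2+(-y)^2) - ((d*x-1)*(x-d) + (-(d*y))*(-y))*((y-d)^2+x^2))*(((-(d*y)-1)*(-y-d) + (-(d*x))*(-x))*((x-d)^2+(-y)^2) - ((d*x-1)*(x-d) + (-(d*y))*(-y))*((-y-d)^2+(-x)^2)) + (((d*x)*(y-d) - (d*y-1)*x)*((x-d)^2+(-y)^2) - ((-(d*y))*(x-d) - (d*x-1)*(-y))*((y-d)^2+x^2))*(((-(d*x))*(-y-d) - (-(d*y)-1)*(-x))*((x-d)^2+(-y)^2) - ((-(d*y))*(x-d) - (d*x-1)*(-y))*((-y-d)^2+(-x)^2))) : ℝ) : ℂ) + ((((((d*y-1)*(y-d) + (d*x)*x)*((x-d)^2+(-y)^2) - ((d*x-1)*(x-d) + (-(d*y))*(-y))*((y-d)^2+x^2))*(((-(d*x))*(-y-d) - (-(d*y)-1)*(-x))*((x-d)^2+(-y)^2) - ((-(d*y))*(x-d) - (d*x-1)*(-y))*((-y-d)^2+(-x)^2)) - (((d*x)*(y-d) - (d*y-1)*x)*((x-d)^2+(-y)^2) - ((-(d*y))*(x-d)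 - (d*x-1)*(-y))*((y-d)^2+x^2))*(((-(d*y)-1)*(-y-d) + (-(d*x))*(-x))*((x-d)^2+(-y)^2) - ((d*x-1)*(x-d) + (-(d*y))*(-y))*((-y-d)^2+(-x)^2))) : ℝ) : ℂ)*Complex.I := by
    have e : (starRingEnd ℂ) ((((d:ℂ) * (starRingEnd ℂ) (-Complex.I * g) - 1) / ((starRingEnd ℂ) (-Complex.I * g) - (d:ℂ))) - (((d:ℂ) * (starRingEnd ℂ) g - 1) / ((starRingEnd ℂ) g - (d:ℂ)))) * ((((d:ℂ) * (starRingEnd ℂ) (Complex.I * g) - 1) / ((starRingEnd ℂ) (Complex.I * g) - (d:ℂ))) - (((d:ℂ) * (starRingEnd ℂ) g - 1) / ((starRingEnd ℂ) g - (d:ℂ)))) * (((((y-d)^2+x^2)*((x-d)^2+(-y)^2)*(((-y-d)^2+(-x)^2)*((x-d)^2+(-y)^2))) : ℝ) : ℂ)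
        = (starRingEnd ℂ) (((((d:ℂ) * (starRingEnd ℂ) (-Complex.I * g) - 1) / ((starRingEnd ℂ) (-Complex.I * g) - (d:ℂ))) - (((d:ℂ) * (starRingEnd ℂ) g - 1) / ((starRingEnd ℂ) g - (d:ℂ)))) * (((((y-d)^2+x^2) : ℝ) : ℂ) * ((((x-d)^2+(-y)^2) : ℝ) : ℂ)))
          * (((((d:ℂ) * (starRingEnd ℂ) (Complex.I * g) - 1) / ((starRingEnd ℂ) (Complex.I * g) - (d:ℂ))) - (((d:ℂ) * (starRingEnd ℂ) g - 1) / ((starRingEnd ℂ) g - (d:ℂ)))) * (((((-y-d)^2+(-x)^2) : ℝ) : ℂ) * ((((x-d)^2+(-y)^2) : ℝ) : ℂ))) := by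
      simp only [map_mul, Complex.conj_ofReal]
      push_cast
      ring
    rw [e, h1, h2, mulconj_form]
  have hDD : (0:ℝ) < (((y-d)^2+x^2)*((x-d)^2+(-y)^2)*(((-y-d)^2+(-x)^2)*((x-d)^2+(-y)^2))) := by positivity
  have hDne : (((((y-d)^2+x^2)*((x-d)^2+(-y)^2)*(((-y-d)^2+(-x)^2)*((x-d)^2+(-y)^2))) : ℝ) : ℂ) ≠ 0 := Complex.ofReal_ne_zero.mpr hDD.ne'
  have hcc : (starRingEnd ℂ) ((((d:ℂ) * (starRingEnd ℂ) (-Complex.I * g) - 1) / ((starRingEnd ℂ) (-Complex.I * g) - (d:ℂ))) - (((d:ℂ) * (starRingEnd ℂ) g - 1) / ((starRingEnd ℂ) g - (d:ℂ)))) * ((((d:ℂ) * (starRingEnd ℂ) (Complex.I * g) - 1) / ((starRingEnd ℂ) (Complex.I * g) - (d:ℂ))) - (((d:ℂ) * (starRingEnd ℂ) g - 1) / ((starRingEnd ℂ) g - (d:ℂ))))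
      = ((((((d*y-1)*(y-d) + (d*x)*x)*((x-d)^2+(-y)^2) - ((d*x-1)*(x-d) + (-(d*y))*(-y))*((y-d)^2+x^2))*(((-(d*y)-1)*(-y-d) + (-(d*x))*(-x))*((x-d)^2+(-y)^2) - ((d*x-1)*(x-d) + (-(d*y))*(-y))*((-y-d)^2+(-x)^2)) + (((d*x)*(y-d) - (d*y-1)*x)*((x-d)^2+(-y)^2) - ((-(d*y))*(x-d) - (d*x-1)*(-y))*((y-d)^2+x^2))*(((-(d*x))*(-y-d) - (-(d*y)-1)*(-x))*((x-d)^2+(-y)^2) - ((-(d*y))*(x-d) - (d*x-1)*(-y))*((-y-d)^2+(-x)^2)))/(((y-d)^2+x^2)*((x-d)^2+(-y)^2)*(((-y-d)^2+(-x)^2)*((x-d)^2+(-y)^2))) : ℝ) : ℂ) + ((((((d*y-1)*(y-d) + (d*x)*x)*((x-d)^2+(-y)^2) - ((d*x-1)*(x-d) + (-(d*y))*(-y))*((y-d)^2+x^2))*(((-(d*x))*(-y-d) - (-(d*y)-1)*(-x))*((x-d)^2+(-y)^2) - ((-(d*y))*(x-d) - (d*x-1)*(-y))*((-y-d)^2+(-x)^2))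 - (((d*x)*(y-d) - (d*y-1)*x)*((x-d)^2+(-y)^2) - ((-(d*y))*(x-d) - (d*x-1)*(-y))*((y-d)^2+x^2))*(((-(d*y)-1)*(-y-d) + (-(d*x))*(-x))*((x-d)^2+(-y)^2) - ((d*x-1)*(x-d) + (-(d*y))*(-y))*((-y-d)^2+(-x)^2)))/(((y-d)^2+x^2)*((x-d)^2+(-y)^2)*(((-y-d)^2+(-x)^2)*((x-d)^2+(-y)^2))) : ℝ) : ℂ)*Complex.I := by
    exact split_div _ _ _ _ hDD.ne' hc
  have hQ : (0:ℝ) < ((d^2-1)^2+4*d^2*x^2) := by nlinarith [mul_pos hd1 hd1, sq_nonneg (d*x)]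
  have hI1 : (((((d*y-1)*(y-d) + (d*x)*x)*((x-d)^2+(-y)^2) - ((d*x-1)*(x-d) + (-(d*y))*(-y))*((y-d)^2+x^2))*(((-(d*x))*(-y-d) - (-(d*y)-1)*(-x))*((x-d)^2+(-y)^2) - ((-(d*y))*(x-d) - (d*x-1)*(-y))*((-y-d)^2+(-x)^2)) - (((d*x)*(y-d) - (d*y-1)*x)*((x-d)^2+(-y)^2) - ((-(d*y))*(x-d) - (d*x-1)*(-y))*((y-d)^2+x^2))*(((-(d*y)-1)*(-y-d) + (-(d*x))*(-x))*((x-d)^2+(-y)^2) - ((d*x-1)*(x-d) + (-(d*y))*(-y))*((-y-d)^2+(-x)^2)))) * (((d^2-1)^2+4*d^2*x^2)) = -2*(1-d^2)^3*(((y-d)^2+x^2)*((x-d)^2+(-y)^2)*((-y-d)^2+(-x)^2)) := by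
    linear_combination ((-2:ℝ)*d^6 + (6:ℝ)*d^8 - (6:ℝ)*d^10 + (2:ℝ)*d^12 + (2:ℝ)*y^4*d^2 - (6:ℝ)*y^4*d^4 + (6:ℝ)*y^4*d^6 - (2:ℝ)*y^4*d^8 + (4:ℝ)*x^1*d^5 - (12:ℝ)*x^1*d^7 + (12:ℝ)*x^1*d^9 - (4:ℝ)*x^1*d^11 - (4:ℝ)*x^1*y^2*d^3 + (12:ℝ)*x^1*y^2*d^5 - (12:ℝ)*x^1*y^2*d^7 + (4:ℝ)*x^1*y^2*d^9 - (8:ℝ)*x^2*d^4 + (24:ℝ)*x^2*d^6 - (24:ℝ)*x^2*d^8 + (8:ℝ)*x^2*d^10 - (4:ℝ)*x^2*y^2*d^2 + (4:ℝ)*x^2*y^2*d^4 + (4:ℝ)*x^2*y^2*d^6 - (4:ℝ)*x^2*y^2*d^8 - (8:ℝ)*x^2*y^4*d^2 + (16:ℝ)*x^2*y^4*d^4 - (8:ℝ)*x^2*y^4*d^6 + (12:ℝ)*x^3*d^3 - (36:ℝ)*x^3*d^5 + (36:ℝ)*x^3*d^7 - (12:ℝ)*x^3*d^9 + (16:ℝ)*x^3*y^2*d^3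 - (32:ℝ)*x^3*y^2*d^5 + (16:ℝ)*x^3*y^2*d^7 - (6:ℝ)*x^4*d^2 + (10:ℝ)*x^4*d^4 - (2:ℝ)*x^4*d^6 - (2:ℝ)*x^4*d^8 - (16:ℝ)*x^4*y^2*d^2 + (32:ℝ)*x^4*y^2*d^4 - (16:ℝ)*x^4*y^2*d^6 + (16:ℝ)*x^5*d^3 - (32:ℝ)*x^5*d^5 + (16:ℝ)*x^5*d^7 - (8:ℝ)*x^6*d^2 + (16:ℝ)*x^6*d^4 - (8:ℝ)*x^6*d^6) * hxy
  have hM0 : (((((d*y-1)*(y-d) + (d*x)*x)*((x-d)^2+(-y)^2) - ((d*x-1)*(x-d) + (-(d*y))*(-y))*((y-d)^2+x^2))*(((-(d*x))*(-y-d) - (-(d*y)-1)*(-x))*((x-d)^2+(-y)^2) - ((-(d*y))*(x-d) - (d*x-1)*(-y))*((-y-d)^2+(-x)^2)) - (((d*x)*(y-d) - (d*y-1)*x)*((x-d)^2+(-y)^2) - ((-(d*y))*(x-d) - (d*x-1)*(-y))*((y-d)^2+x^2))*(((-(d*y)-1)*(-y-d) + (-(d*x))*(-x))*((x-d)^2+(-y)^2)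 - ((d*x-1)*(x-d) + (-(d*y))*(-y))*((-y-d)^2+(-x)^2)))) < 0 := by
    by_contra hcon
    push_neg at hcon
    nlinarith [mul_nonneg hcon hQ.le, mul_pos (mul_pos (mul_pos hd1 hd1) hd1) (mul_pos (mul_pos hdA hdB) hdC)]
  have hMdiv : (((((d*y-1)*(y-d) + (d*x)*x)*((x-d)^2+(-y)^2) - ((d*x-1)*(x-d) + (-(d*y))*(-y))*((y-d)^2+x^2))*(((-(d*x))*(-y-d) - (-(d*y)-1)*(-x))*((x-d)^2+(-y)^2) - ((-(d*y))*(x-d) - (d*x-1)*(-y))*((-y-d)^2+(-x)^2)) - (((d*x)*(y-d) - (d*y-1)*x)*((x-d)^2+(-y)^2) - ((-(d*y))*(x-d) - (d*x-1)*(-y))*((y-d)^2+x^2))*(((-(d*y)-1)*(-y-d) + (-(d*x))*(-x))*((x-d)^2+(-y)^2) - ((d*x-1)*(x-d) + (-(d*y))*(-y))*((-y-d)^2+(-x)^2))))/((((y-d)^2+x^2)*((x-d)^2+(-y)^2)*(((-y-d)^2+(-x)^2)*((x-d)^2+(-y)^2)))) < 0 := div_neg_of_neg_of_pos hM0 hD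D
  have hcot := cot_angle ((((d:ℂ) * (starRingEnd ℂ) (-Complex.I * g) - 1) / ((starRingEnd ℂ) (-Complex.I * g) - (d:ℂ))) - (((d:ℂ) * (starRingEnd ℂ) g - 1) / ((starRingEnd ℂ) g - (d:ℂ)))) ((((d:ℂ) * (starRingEnd ℂ) (Complex.I * g) - 1) / ((starRingEnd ℂ) (Complex.I * g) - (d:ℂ))) - (((d:ℂ) * (starRingEnd ℂ) g - 1) / ((starRingEnd ℂ) g - (d:ℂ)))) (((((d*y-1)*(y-d) + (d*x)*x)*((x-d)^2+(-y)^2) - ((d*x-1)*(x-d) + (-(d*y))*(-y))*((y-d)^2+x^2))*(((-(d*y)-1)*(-y-d) + (-(d*x))*(-x))*((x-d)^2+(-y)^2) - ((d*x-1)*(x-d) + (-(d*y))*(-y))*((-y-d)^2+(-x)^2)) + (((d*x)*(y-d) - (d*y-1)*x)*((x-d)^2+(-y)^2) - ((-(d*y))*(x-d) - (d*x-1)*(-y))*((y-d)^2+x^2))*(((-(d*x))*(-y-d) - (-(d*y)-1)*(-x))*((x-d)^2+(-y)^2) - ((-(d*y))*(x-d) - (d*x-1)*(-y))*((-y-d)^2+(-x)^2)))/(((y-d)^2+x^2)*((x-d)^2+(-y)^2)*(((-y-d)^2+(-x)^2)*((x-d)^2+(-y)^2))))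 (((((d*y-1)*(y-d) + (d*x)*x)*((x-d)^2+(-y)^2) - ((d*x-1)*(x-d) + (-(d*y))*(-y))*((y-d)^2+x^2))*(((-(d*x))*(-y-d) - (-(d*y)-1)*(-x))*((x-d)^2+(-y)^2) - ((-(d*y))*(x-d) - (d*x-1)*(-y))*((-y-d)^2+(-x)^2)) - (((d*x)*(y-d) - (d*y-1)*x)*((x-d)^2+(-y)^2) - ((-(d*y))*(x-d) - (d*x-1)*(-y))*((y-d)^2+x^2))*(((-(d*y)-1)*(-y-d) + (-(d*x))*(-x))*((x-d)^2+(-y)^2) - ((d*x-1)*(x-d) + (-(d*y))*(-y))*((-y-d)^2+(-x)^2)))/(((y-d)^2+x^2)*((x-d)^2+(-y)^2)*(((-y-d)^2+(-x)^2)*((x-d)^2+(-y)^2)))) hcc hMdiv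
  unfold EuclideanGeometry.angle
  simp only [vsub_eq_sub]
  rw [hcot, ← neg_div, div_div_div_cancel_right₀ hDD.ne']
  rw [div_eq_div_iff hM0.ne hd1.ne']
  linear_combination ((4:ℝ)*x^1*y^2*d^3 - (8:ℝ)*x^1*y^2*d^5 + (4:ℝ)*x^1*y^2*d^7 + (4:ℝ)*x^1*y^4*d^1 - (8:ℝ)*x^1*y^4*d^3 + (4:ℝ)*x^1*y^4*d^5 - (8:ℝ)*x^2*y^2*d^2 + (16:ℝ)*x^2*y^2*d^4 - (8:ℝ)*x^2*y^2*d^6 + (4:ℝ)*x^3*d^3 - (8:ℝ)*x^3*d^5 + (4:ℝ)*x^3*d^7 + (8:ℝ)*x^3*y^2*d^1 - (16:ℝ)*x^3*y^2*d^3 + (8:ℝ)*x^3*y^2*d^5 - (8:ℝ)*x^4*d^2 + (16:ℝ)*x^4*d^4 - (8:ℝ)*x^4*d^6 + (4:ℝ)*x^5*d^1 - (8:ℝ)*x^5*d^3 + (4:ℝ)*x^5*d^5) * hxy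

/-- For `N = 4` and every odd positive integer `m`, the sum over `k = 1, …, 4`
of `cot^m(θ_k)` vanishes. -/
theorem sum_cot_odd_pow_quadrilateral (d t : ℝ) (hd : |d| < 1)
    (z w : ℤ → ℂ) (θ : ℤ → ℝ)
    (hz : ∀ k : ℤ, z k = Complex.exp (Complex.I *
      ((2 * (Real.pi / 4) * (k : ℝ) + t : ℝ) : ℂ)))
    (hw : ∀ k : ℤ, w k = ((d : ℂ) * (starRingEnd ℂ) (z k) - 1) /
      ((starRingEnd ℂ) (z k) - (d : ℂ)))
    (hθ : ∀ k : ℤ, θ k = EuclideanGeometry.angle (w (k - 1)) (w k) (w (k + 1)))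
    (m : ℕ) (hm : 1 ≤ m) (hodd : Odd m) :
    ∑ k ∈ Finset.Icc (1 : ℤ) 4, (Real.cos (θ k) / Real.sin (θ k)) ^ m = 0 := by
  have hd2 : d^2 < 1 := by
    have := abs_lt.mp hd
    nlinarith
  have hI : Complex.exp (Complex.I * ((π/2 : ℝ) : ℂ)) = Complex.I := by
    rw [mul_comm, Complex.exp_mul_I, ← Complex.ofReal_cos, ← Complex.ofReal_sin]
    simp
  have hz4 : ∀ k : ℤ, z (k+1) = Complex.I * z k := by
    intro k
    rw [hz (k+1), hz k,
      show Complex.I * ((2 * (Real.pi / 4) * ((k+1 : ℤ) : ℝ) + t : ℝ) : ℂ)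
        = Complex.I * ((π/2 : ℝ) : ℂ) + Complex.I * ((2 * (Real.pi / 4) * ((k : ℤ) : ℝ) + t : ℝ) : ℂ)
        by push_cast; ring,
      Complex.exp_add, hI]
  have key : ∀ k : ℤ, Real.cos (θ k) / Real.sin (θ k)
      = 2*d*(Real.cos (2 * (Real.pi / 4) * (k : ℝ) + t))/(1 - d^2) := by
    intro k
    have hk1 : z (k+1) = Complex.I * z k := hz4 k
    have hkm' : z k = Complex.I * z (k-1) := by
      have := hz4 (k-1)
      rwa [sub_add_cancel] at this
    have hkm : z (k-1) = -Complex.I * z k := by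
      rw [hkm']
      linear_combination (z (k-1)) * Complex.I_sq
    have hgk : z k = ((Real.cos (2 * (Real.pi / 4) * (k : ℝ) + t) : ℝ) : ℂ)
        + ((Real.sin (2 * (Real.pi / 4) * (k : ℝ) + t) : ℝ) : ℂ) * Complex.I := by
      rw [hz k, mul_comm, Complex.exp_mul_I, ← Complex.ofReal_cos, ← Complex.ofReal_sin]
    rw [hθ k, hw (k-1), hw k, hw (k+1), hkm, hk1]
    exact vertex_cot d _ _ hd2 (Real.cos_sq_add_sin_sq _) (z k) hgk
  rw [show Finset.Icc (1 : ℤ) 4 = {1, 2, 3, 4} from rfl]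
  rw [Finset.sum_insert (by decide), Finset.sum_insert (by decide),
    Finset.sum_insert (by decide), Finset.sum_singleton]
  rw [key 1, key 2, key 3, key 4]
  push_cast
  have h31 : Real.cos (2 * (Real.pi / 4) * (3:ℝ) + t)
      = -Real.cos (2 * (Real.pi / 4) * (1:ℝ) + t) := by
    rw [show 2 * (Real.pi / 4) * (3:ℝ) + t = (2 * (Real.pi / 4) * (1:ℝ) + t) + π by ring,
      Real.cos_add_pi]
  have h42 : Real.cos (2 * (Real.pi / 4) * (4:ℝ) + t)
      = -Real.cos (2 * (Real.pi / 4) * (2:ℝ) + t) := by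
    rw [show 2 * (Real.pi / 4) * (4:ℝ) + t = (2 * (Real.pi / 4) * (2:ℝ) + t) + π by ring,
      Real.cos_add_pi]
  rw [h31, h42,
    show 2*d*(-Real.cos (2 * (Real.pi / 4) * (1:ℝ) + t))/(1-d^2)
      = -(2*d*(Real.cos (2 * (Real.pi / 4) * (1:ℝ) + t))/(1-d^2)) by ring,
    show 2*d*(-Real.cos (2 * (Real.pi / 4) * (2:ℝ) + t))/(1-d^2)
      = -(2*d*(Real.cos (2 * (Real.pi / 4) * (2:ℝ) + t))/(1-d^2)) by ring,
    hodd.neg_pow, hodd.neg_pow]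
  ring
end

section
/- Let K = x0³/(x0² + 1) (a real point, the symmedian point of the harmonic family), and set a_h = (x0² + 1)²/|1 − x0²|, b_h = x0² + 1, x_h = x0·(3x0⁴ + 3x0² + 2)/(x0⁴ − 1), a_H = a_h/cos α, b_H = b_h/cos α, x_H = x_h. For each index k, if h_k is the pole of the line through w_k and w_{k+1} with respect to the unit circle centered at K, then h_k lies on the ellipse E_H, i.e., (Re(h_k) − x_H)²/a_H² + (Im(h_k))²/b_H² = 1. -/
open Real
set_option maxHeartbeats 1000000

lemma w_coords_aux (x0 : ℝ) (hx1 : |x0| < 1) (zz : ℂ) (c s : ℝ)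
    (hre : zz.re = c) (him : zz.im = s) (hp : c^2 + s^2 = 1) :
    0 < 1 - 2*x0*c + x0^2 ∧
    ((x0:ℂ) + (zz - (x0:ℂ))/((‖zz - (x0:ℂ)‖^2 : ℝ) : ℂ)).re
      = x0 + (c - x0)/(1 - 2*x0*c + x0^2) ∧
    ((x0:ℂ) + (zz - (x0:ℂ))/((‖zz - (x0:ℂ)‖^2 : ℝ) : ℂ)).im
      = s/(1 - 2*x0*c + x0^2) := by
  have hc1 : c^2 ≤ 1 := by nlinarith [sq_nonneg s]
  have hxc : x0 * c < 1 := by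
    have h1 : |x0 * c| < 1 := by
      rw [abs_mul]
      calc |x0| * |c| ≤ |x0| * 1 := by
            apply mul_le_mul_of_nonneg_left _ (abs_nonneg x0)
            rw [← Real.sqrt_one, show |c| = Real.sqrt (c^2) by rw [Real.sqrt_sq_eq_abs]]
            exact Real.sqrt_le_sqrt hc1
        _ < 1 := by rw [mul_one]; exact hx1
    exact lt_of_le_of_lt (le_abs_self _) h1
  have hd : 0 < 1 - 2*x0*c + x0^2 := by nlinarith [sq_nonneg (1 - x0*c), sq_nonneg (x0*s)]
  refine ⟨hd, ?_, ?_⟩ <;>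
  · have habs : (‖zz - (x0:ℂ)‖^2 : ℝ) = 1 - 2*x0*c + x0^2 := by
      rw [Complex.sq_norm, Complex.normSq_apply, Complex.sub_re, Complex.sub_im,
        Complex.ofReal_re, Complex.ofReal_im, hre, him]
      linear_combination hp
    rw [habs]
    simp only [Complex.add_re, Complex.add_im, Complex.ofReal_re, Complex.ofReal_im,
      Complex.div_ofReal_re, Complex.div_ofReal_im, Complex.sub_re, Complex.sub_im, hre, him]
    try ring

/-- The poles of the sides of the harmonic polygon, with respect to the unit
circle centered at the symmedian point `K = x0³/(x0² + 1)`, lie on the outer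
ellipse `E_H` of the Poncelet homothetic family. -/
theorem pole_of_side_on_outer_homothetic_ellipse (N : ℕ) (hN : 3 ≤ N)
    (x0 t : ℝ) (hx0 : 0 < |x0|) (hx1 : |x0| < 1)
    (z w : ℤ → ℂ)
    (hz : ∀ k : ℤ, z k = Complex.exp (Complex.I *
      ((2 * (Real.pi / N) * (k : ℝ) + t : ℝ) : ℂ)))
    (hw : ∀ k : ℤ, w k = (x0 : ℂ) + (z k - (x0 : ℂ)) / (‖z k - (x0 : ℂ)‖ ^ 2 : ℝ))
    (K : ℂ) (hK : K = ((x0 ^ 3 / (x0 ^ 2 + 1) : ℝ) : ℂ))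
    (aH bH xH : ℝ)
    (haH : aH = ((x0 ^ 2 + 1) ^ 2 / |1 - x0 ^ 2|) / Real.cos (Real.pi / N))
    (hbH : bH = (x0 ^ 2 + 1) / Real.cos (Real.pi / N))
    (hxH : xH = x0 * (3 * x0 ^ 4 + 3 * x0 ^ 2 + 2) / (x0 ^ 4 - 1))
    (k : ℤ) (h : ℂ)
    (hpole1 : (((starRingEnd ℂ) (w k - K)) * (h - K)).re = 1)
    (hpole2 : (((starRingEnd ℂ) (w (k + 1) - K)) * (h - K)).re = 1) :
    (h.re - xH) ^ 2 / aH ^ 2 + h.im ^ 2 / bH ^ 2 = 1 := by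
  have hNR : (3:ℝ) ≤ (N:ℝ) := by exact_mod_cast hN
  have hNpos : (0:ℝ) < N := by linarith
  set α : ℝ := Real.pi / N with hα
  have hαpos : 0 < α := div_pos Real.pi_pos hNpos
  have hαle : α ≤ Real.pi / 3 := by
    apply div_le_div_of_nonneg_left Real.pi_pos.le (by norm_num) hNR
  have hca : 0 < Real.cos α := by
    apply Real.cos_pos_of_mem_Ioo
    constructor <;> linarith [Real.pi_pos]
  have hsa : 0 < Real.sin α := by
    apply Real.sin_pos_of_pos_of_lt_pi hαpos; linarith [Real.pi_pos]
  set θ1 : ℝ := 2 * α * (k : ℝ) + t with hθ1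
  set θ2 : ℝ := 2 * α * ((k : ℝ) + 1) + t with hθ2
  set φ : ℝ := θ1 + α with hφ
  have hθ2' : θ2 = θ1 + 2 * α := by rw [hθ2, hθ1]; ring
  set c1 := Real.cos θ1 with hc1; set s1 := Real.sin θ1 with hs1
  set c2 := Real.cos θ2 with hc2; set s2 := Real.sin θ2 with hs2
  set ca := Real.cos α with hcadef; set sa := Real.sin α with hsadef
  set cφ := Real.cos φ with hcφ; set sφ := Real.sin φ with hsφ
  -- trig identities
  have hss : s2 - s1 = 2 * sa * cφ := by
    rw [hs2, hs1, Real.sin_sub_sin]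
    have e1 : (θ2 - θ1)/2 = α := by rw [hθ2']; ring
    have e2 : (θ2 + θ1)/2 = φ := by rw [hθ2', hφ]; ring
    rw [e1, e2]
  have hcc : c1 - c2 = 2 * sφ * sa := by
    rw [hc1, hc2, Real.cos_sub_cos]
    have e1 : (θ1 - θ2)/2 = -α := by rw [hθ2']; ring
    have e2 : (θ1 + θ2)/2 = φ := by rw [hθ2', hφ]; ring
    rw [e1, e2, Real.sin_neg]; ring
  have hS : s2 * c1 - c2 * s1 = 2 * sa * ca := by
    have h0 := Real.sin_sub θ2 θ1
    have e1 : θ2 - θ1 = 2*α := by rw [hθ2']; ring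
    rw [e1, Real.sin_two_mul] at h0
    rw [hs2, hc1, hc2, hs1, ← h0]
  have pyth1 : c1^2 + s1^2 = 1 := by
    rw [hc1, hs1]; exact Real.cos_sq_add_sin_sq θ1
  have pyth2 : c2^2 + s2^2 = 1 := by
    rw [hc2, hs2]; exact Real.cos_sq_add_sin_sq θ2
  have pythφ : cφ^2 + sφ^2 = 1 := by
    rw [hcφ, hsφ]; exact Real.cos_sq_add_sin_sq φ
  -- z coordinates
  have hzk : (z k).re = c1 ∧ (z k).im = s1 := by
    rw [hz k]
    have e : Complex.I * ((2 * (Real.pi / N) * (k : ℝ) + t : ℝ) : ℂ)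
        = ((θ1 : ℝ) : ℂ) * Complex.I := by
      rw [hθ1, hα]; push_cast; ring
    rw [e]
    exact ⟨Complex.exp_ofReal_mul_I_re _, Complex.exp_ofReal_mul_I_im _⟩
  have hzk2 : (z (k+1)).re = c2 ∧ (z (k+1)).im = s2 := by
    rw [hz (k+1)]
    have e : Complex.I * ((2 * (Real.pi / N) * ((k+1 : ℤ) : ℝ) + t : ℝ) : ℂ)
        = ((θ2 : ℝ) : ℂ) * Complex.I := by
      rw [hθ2, hα]; push_cast; ring
    rw [e]
    exact ⟨Complex.exp_ofReal_mul_I_re _, Complex.exp_ofReal_mul_I_im _⟩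
  -- w coordinates
  obtain ⟨hd1, hw1re, hw1im⟩ := w_coords_aux x0 hx1 (z k) c1 s1 hzk.1 hzk.2 pyth1
  obtain ⟨hd2, hw2re, hw2im⟩ := w_coords_aux x0 hx1 (z (k+1)) c2 s2 hzk2.1 hzk2.2 pyth2
  rw [← hw k] at hw1re hw1im
  rw [← hw (k+1)] at hw2re hw2im
  -- basic nonvanishing
  have hx2 : x0^2 < 1 := by
    have h1 : |x0| * |x0| < 1 * 1 :=
      mul_lt_mul'' hx1 hx1 (abs_nonneg x0) (abs_nonneg x0)
    rw [abs_mul_abs_self] at h1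
    calc x0^2 = x0 * x0 := sq x0 ▸ rfl
      _ < 1 * 1 := h1
      _ = 1 := by norm_num
  have h1mx : (0:ℝ) < 1 - x0^2 := by linarith
  have h1px : (0:ℝ) < x0^2 + 1 := by positivity
  have hd1' : (1 - 2*x0*c1 + x0^2) ≠ 0 := ne_of_gt hd1
  have hd2' : (1 - 2*x0*c2 + x0^2) ≠ 0 := ne_of_gt hd2
  have h1px' : (x0^2 + 1) ≠ 0 := ne_of_gt h1px
  have h1mx' : (1 - x0^2) ≠ 0 := ne_of_gt h1mx
  have hca' : ca ≠ 0 := ne_of_gt hca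
  have hsa' : sa ≠ 0 := ne_of_gt hsa
  -- pole equations in real coordinates
  have e1 : (x0 + (c1 - x0)/(1 - 2*x0*c1 + x0^2) - x0^3/(x0^2+1)) * (h.re - x0^3/(x0^2+1))
      + (s1/(1 - 2*x0*c1 + x0^2)) * h.im = 1 := by
    have := hpole1
    rw [hK] at this
    simp only [Complex.mul_re, Complex.conj_re, Complex.conj_im, Complex.sub_re,
      Complex.sub_im, Complex.ofReal_re, Complex.ofReal_im, hw1re, hw1im] at this
    linear_combination this
  have e2 : (x0 + (c2 - x0)/(1 - 2*x0*c2 + x0^2) - x0^3/(x0^2+1)) * (h.re - x0^3/(x0^2+1))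
      + (s2/(1 - 2*x0*c2 + x0^2)) * h.im = 1 := by
    have := hpole2
    rw [hK] at this
    simp only [Complex.mul_re, Complex.conj_re, Complex.conj_im, Complex.sub_re,
      Complex.sub_im, Complex.ofReal_re, Complex.ofReal_im, hw2re, hw2im] at this
    linear_combination this
  -- clear denominators in pole equations
  have E1 : (1 - x0^2)*c1*((x0^2+1)*h.re - x0^3) + (x0^2+1)^2*s1*h.im
      = (x0^2+1)^2*(1 - 2*x0*c1 + x0^2) := by
    have hdn : (1 - x0*c1*2 + x0^2) ≠ 0 := by intro h0; apply hd1'; linarith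
    field_simp at e1
    apply mul_left_cancel₀ hd1'
    linear_combination (1 - 2*x0*c1 + x0^2) * e1
  have E2 : (1 - x0^2)*c2*((x0^2+1)*h.re - x0^3) + (x0^2+1)^2*s2*h.im
      = (x0^2+1)^2*(1 - 2*x0*c2 + x0^2) := by
    have hdn : (1 - x0*c2*2 + x0^2) ≠ 0 := by intro h0; apply hd2'; linarith
    field_simp at e2
    apply mul_left_cancel₀ hd2'
    linear_combination (1 - 2*x0*c2 + x0^2) * e2
  -- solve the linear system
  have hds : (1 - 2*x0*c1 + x0^2)*s2 - (1 - 2*x0*c2 + x0^2)*s1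
      = 2*sa*((1+x0^2)*cφ - 2*x0*ca) := by
    linear_combination (1+x0^2)*hss - 2*x0*hS
  have hX0 : (1 - x0^2)*(s2*c1 - c2*s1)*((x0^2+1)*h.re - x0^3)
      = (x0^2+1)^2*((1 - 2*x0*c1 + x0^2)*s2 - (1 - 2*x0*c2 + x0^2)*s1) := by
    linear_combination s2*E1 - s1*E2
  rw [hS, hds] at hX0
  have hXv : ((x0^2+1)*h.re - x0^3) * ((1 - x0^2)*ca)
      = (x0^2+1)^2*((1+x0^2)*cφ - 2*x0*ca) := by
    have h2sa : (2*sa : ℝ) ≠ 0 := by positivity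
    apply mul_left_cancel₀ h2sa
    linear_combination hX0
  have hY0 : (x0^2+1)^2*(s2*c1 - c2*s1)*h.im = (x0^2+1)^2*((1+x0^2)*(c1 - c2)) := by
    linear_combination c1*E2 - c2*E1
  rw [hS, hcc] at hY0
  have hYv : h.im * ca = (x0^2+1)*sφ := by
    have h2sa : ((x0^2+1)^2*(2*sa) : ℝ) ≠ 0 := by positivity
    apply mul_left_cancel₀ h2sa
    linear_combination hY0
  -- explicit coordinates of the pole
  have hx4 : x0^4 - 1 ≠ 0 := by
    have h1 : x0^2 * x0^2 < 1 * 1 :=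
      mul_lt_mul'' hx2 hx2 (sq_nonneg x0) (sq_nonneg x0)
    have h2 : x0^4 = x0^2 * x0^2 := by ring
    have : x0^4 - 1 < 0 := by rw [h2]; linarith
    exact ne_of_lt this
  have hxH' : xH * (x0^4 - 1) = x0*(3*x0^4 + 3*x0^2 + 2) := by
    rw [hxH]; field_simp
  have hre2 : (h.re - xH)*((1-x0^2)*ca) = (x0^2+1)^2*cφ := by
    apply mul_left_cancel₀ h1px'
    linear_combination hXv + ca*hxH'
  have him : h.im = (x0^2+1)*sφ/ca := by
    field_simp
    linear_combination hYv
  have hreE : h.re - xH = (x0^2+1)^2*cφ/((1-x0^2)*ca) :=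
    (eq_div_iff (mul_ne_zero h1mx' hca')).mpr hre2
  -- final ellipse equation
  have habs2 : |1 - x0^2| = 1 - x0^2 := abs_of_pos h1mx
  have e_a : aH^2 = (x0^2+1)^4/((1-x0^2)^2*ca^2) := by
    rw [haH, habs2]; field_simp
  have e_b : bH^2 = (x0^2+1)^2/ca^2 := by
    rw [hbH]; field_simp
  calc (h.re - xH)^2/aH^2 + h.im^2/bH^2 = cφ^2 + sφ^2 := by
        rw [hreE, him, e_a, e_b]
        field_simp
    _ = 1 := pythφ
end

section
/- Let K = x0³/(x0² + 1), and set a_h = (x0² + 1)²/|1 − x0²|, b_h = x0² + 1, x_h = x0·(3x0⁴ + 3x0² + 2)/(x0⁴ − 1). For each index k let h_k be the pole of the line through w_k and w_{k+1} with respect to the unit circle centered at K. Then for each k the line through h_k and h_{k+1} is tangent to the ellipse E_h given by (x − x_h)²/a_h² + y²/b_h² = 1, i.e., it meets E_h in exactly one point. -/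
open Real

set_option maxHeartbeats 1000000

/-- The lines joining consecutive poles (of the sides of the harmonic polygon,
with respect to the unit circle centered at the symmedian point
`K = x0³/(x0² + 1)`) are tangent to the inner ellipse `E_h` of the Poncelet
homothetic family: each such line meets `E_h` in exactly one point. -/
theorem pole_polygon_tangent_inner_homothetic_ellipse (N : ℕ) (hN : 3 ≤ N)
    (x0 t : ℝ) (hx0 : 0 < |x0|) (hx1 : |x0| < 1)
    (z w : ℤ → ℂ)
    (hz : ∀ k : ℤ, z k = Complex.exp (Complex.I *
      ((2 * (Real.pi / N) * (k : ℝ) + t : ℝ) : ℂ)))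
    (hw : ∀ k : ℤ, w k = (x0 : ℂ) + (z k - (x0 : ℂ)) / ((‖z k - (x0 : ℂ)‖) ^ 2 : ℝ))
    (K : ℂ) (hK : K = ((x0 ^ 3 / (x0 ^ 2 + 1) : ℝ) : ℂ))
    (ah bh xh : ℝ)
    (hah : ah = (x0 ^ 2 + 1) ^ 2 / |1 - x0 ^ 2|)
    (hbh : bh = x0 ^ 2 + 1)
    (hxh : xh = x0 * (3 * x0 ^ 4 + 3 * x0 ^ 2 + 2) / (x0 ^ 4 - 1))
    (h : ℤ → ℂ)
    (hpole : ∀ k : ℤ, (((starRingEnd ℂ) (w k - K)) * (h k - K)).re = 1 ∧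
      (((starRingEnd ℂ) (w (k + 1) - K)) * (h k - K)).re = 1)
    (k : ℤ) :
    ∃! p : ℂ, (∃ s : ℝ, p = h k + s • (h (k + 1) - h k)) ∧
      (p.re - xh) ^ 2 / ah ^ 2 + p.im ^ 2 / bh ^ 2 = 1 := by
  set α := Real.pi / (N : ℝ) with hαdef
  have hx2 : x0 ^ 2 < 1 := by nlinarith [sq_abs x0, abs_nonneg x0]
  have hd : (0:ℝ) < 1 - x0 ^ 2 := by linarith
  have hc : (0:ℝ) < x0 ^ 2 + 1 := by positivity
  have hNpos : (0:ℝ) < (N:ℝ) := by positivity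
  have hN3 : (3:ℝ) ≤ (N:ℝ) := by exact_mod_cast hN
  have hα0 : 0 < α := by positivity
  have hα3 : α ≤ Real.pi / 3 := by
    rw [hαdef]
    exact div_le_div_of_nonneg_left Real.pi_pos.le (by norm_num) hN3
  have hca : 0 < Real.cos α := by
    apply Real.cos_pos_of_mem_Ioo
    constructor <;> nlinarith [Real.pi_pos]
  have hsa : 0 < Real.sin α := by
    apply Real.sin_pos_of_pos_of_lt_pi hα0
    nlinarith [Real.pi_pos]
  have hs2 : 0 < Real.sin (2 * α) := by
    apply Real.sin_pos_of_pos_of_lt_pi (by linarith)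
    nlinarith [Real.pi_pos]
  -- coordinates of z
  have hz' : ∀ j : ℤ, (z j).re = Real.cos (2 * α * (j:ℝ) + t) ∧
      (z j).im = Real.sin (2 * α * (j:ℝ) + t) := by
    intro j
    rw [hz j, mul_comm]
    exact ⟨Complex.exp_ofReal_mul_I_re _, Complex.exp_ofReal_mul_I_im _⟩
  -- the squared distance
  have hm : ∀ θ : ℝ, (0:ℝ) < 1 - 2 * x0 * Real.cos θ + x0 ^ 2 := by
    intro θ
    have h1 : x0 * Real.cos θ ≤ |x0| := by
      calc x0 * Real.cos θ ≤ |x0 * Real.cos θ| := le_abs_self _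
        _ = |x0| * |Real.cos θ| := abs_mul _ _
        _ ≤ |x0| * 1 := by
            exact mul_le_mul_of_nonneg_left (Real.abs_cos_le_one θ) (abs_nonneg x0)
        _ = |x0| := mul_one _
    nlinarith [sq_abs x0, sq_nonneg (1 - |x0|)]
  have habs : ∀ j : ℤ, (‖z j - (x0:ℂ)‖) ^ 2 =
      1 - 2 * x0 * Real.cos (2 * α * (j:ℝ) + t) + x0 ^ 2 := by
    intro j
    rw [Complex.sq_norm, Complex.normSq_apply]
    simp only [Complex.sub_re, Complex.sub_im, Complex.ofReal_re, Complex.ofReal_im,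
      (hz' j).1, (hz' j).2]
    linear_combination Real.sin_sq_add_cos_sq (2 * α * (j:ℝ) + t)
  have hw' : ∀ j : ℤ, (w j).re = x0 + (Real.cos (2 * α * (j:ℝ) + t) - x0) /
        (1 - 2 * x0 * Real.cos (2 * α * (j:ℝ) + t) + x0 ^ 2) ∧
      (w j).im = Real.sin (2 * α * (j:ℝ) + t) /
        (1 - 2 * x0 * Real.cos (2 * α * (j:ℝ) + t) + x0 ^ 2) := by
    intro j
    rw [hw j, habs j]
    constructor
    · rw [Complex.add_re, Complex.div_ofReal_re, Complex.sub_re, Complex.ofReal_re, (hz' j).1]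
    · rw [Complex.add_im, Complex.div_ofReal_im, Complex.sub_im, Complex.ofReal_im, (hz' j).2,
        sub_zero, zero_add]
  have hKre : K.re = x0 ^ 3 / (x0 ^ 2 + 1) := by rw [hK, Complex.ofReal_re]
  have hKim : K.im = 0 := by rw [hK, Complex.ofReal_im]
  -- cleaned pole equations
  have hE : ∀ j i : ℤ, (((starRingEnd ℂ) (w i - K)) * (h j - K)).re = 1 →
      (1 - x0 ^ 2) * Real.cos (2 * α * (i:ℝ) + t) * ((x0 ^ 2 + 1) * (h j).re - x0 ^ 3) +
        (x0 ^ 2 + 1) ^ 2 * Real.sin (2 * α * (i:ℝ) + t) * (h j).im =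
      (x0 ^ 2 + 1) ^ 2 * (1 - 2 * x0 * Real.cos (2 * α * (i:ℝ) + t) + x0 ^ 2) := by
    intro j i hp
    have hre : (((starRingEnd ℂ) (w i - K)) * (h j - K)).re =
        ((w i).re - K.re) * ((h j).re - K.re) + ((w i).im - K.im) * ((h j).im - K.im) := by
      simp [Complex.mul_re, Complex.sub_re, Complex.sub_im]
      ring
    rw [hre, (hw' i).1, (hw' i).2, hKre, hKim] at hp
    have hmne : (1 - 2 * x0 * Real.cos (2 * α * (i:ℝ) + t) + x0 ^ 2) ≠ 0 := (hm _).ne'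
    generalize hM : (1 - 2 * x0 * Real.cos (2 * α * (i:ℝ) + t) + x0 ^ 2) = M at hp hmne ⊢
    field_simp at hp
    subst hM
    refine mul_left_cancel₀ hmne ?_
    linear_combination (1 - 2 * x0 * Real.cos (2 * α * (i:ℝ) + t) + x0 ^ 2) * hp
  have hdne : (1 - x0 ^ 2) ≠ 0 := hd.ne'
  have hcne : (x0 ^ 2 + 1) ≠ 0 := hc.ne'
  have hcane : Real.cos α ≠ 0 := hca.ne'
  have hxh' : xh = x0 ^ 3 / (x0 ^ 2 + 1) - 2 * (x0 ^ 2 + 1) * x0 / (1 - x0 ^ 2) := by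
    have h1 : x0 ^ 4 - 1 ≠ 0 := by nlinarith
    rw [hxh]
    field_simp
    ring
  -- explicit formula for the poles h j
  have hform : ∀ j : ℤ, (h j).re = xh + (x0 ^ 2 + 1) ^ 2 / ((1 - x0 ^ 2) * Real.cos α) *
        Real.cos (2 * α * (j:ℝ) + t + α) ∧
      (h j).im = (x0 ^ 2 + 1) / Real.cos α * Real.sin (2 * α * (j:ℝ) + t + α) := by
    intro j
    have E1 := hE j j (hpole j).1
    have E2 := hE j (j + 1) (hpole j).2
    have hcast : ((j + 1 : ℤ) : ℝ) = (j : ℝ) + 1 := by push_cast; ring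
    rw [hcast, show 2 * α * ((j:ℝ) + 1) + t = 2 * α * (j:ℝ) + t + 2 * α by ring] at E2
    set θ := 2 * α * (j:ℝ) + t with hθ
    set cHr : ℝ := (x0 ^ 2 + 1) ^ 3 * Real.cos (θ + α) / ((1 - x0 ^ 2) * Real.cos α)
        - 2 * (x0 ^ 2 + 1) ^ 2 * x0 / (1 - x0 ^ 2) with hcHr
    set cHi : ℝ := (x0 ^ 2 + 1) * Real.sin (θ + α) / Real.cos α with hcHi
    have key1 : Real.cos (θ + α) * Real.cos θ + Real.sin (θ + α) * Real.sin θ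
        = Real.cos α := by
      have h1 := Real.cos_sub (θ + α) θ
      rw [show θ + α - θ = α by ring] at h1
      linarith
    have key2 : Real.cos (θ + 2 * α) * Real.cos (θ + α) +
        Real.sin (θ + 2 * α) * Real.sin (θ + α) = Real.cos α := by
      have h1 := Real.cos_sub (θ + 2 * α) (θ + α)
      rw [show θ + 2 * α - (θ + α) = α by ring] at h1
      linarith
    have key3 : Real.sin (θ + 2 * α) * Real.cos θ - Real.cos (θ + 2 * α) * Real.sin θ
        = Real.sin (2 * α) := by
      have h1 := Real.sin_sub (θ + 2 * α) θ
      rw [show θ + 2 * α - θ = 2 * α by ring] at h1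
      linarith
    have EC1 : (1 - x0 ^ 2) * Real.cos θ * cHr + (x0 ^ 2 + 1) ^ 2 * Real.sin θ * cHi =
        (x0 ^ 2 + 1) ^ 2 * (1 - 2 * x0 * Real.cos θ + x0 ^ 2) := by
      rw [hcHr, hcHi]
      field_simp
      linear_combination (x0 ^ 2 + 1) * key1
    have EC2 : (1 - x0 ^ 2) * Real.cos (θ + 2 * α) * cHr +
        (x0 ^ 2 + 1) ^ 2 * Real.sin (θ + 2 * α) * cHi =
        (x0 ^ 2 + 1) ^ 2 * (1 - 2 * x0 * Real.cos (θ + 2 * α) + x0 ^ 2) := by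
      rw [hcHr, hcHi]
      field_simp
      linear_combination (x0 ^ 2 + 1) * key2
    set X : ℝ := (x0 ^ 2 + 1) * (h j).re - x0 ^ 3 - cHr with hX
    set Y : ℝ := (h j).im - cHi with hY
    have F1 : (1 - x0 ^ 2) * Real.cos θ * X + (x0 ^ 2 + 1) ^ 2 * Real.sin θ * Y = 0 := by
      rw [hX, hY]; linear_combination E1 - EC1
    have F2 : (1 - x0 ^ 2) * Real.cos (θ + 2 * α) * X +
        (x0 ^ 2 + 1) ^ 2 * Real.sin (θ + 2 * α) * Y = 0 := by
      rw [hX, hY]; linear_combination E2 - EC2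
    have hdetne : (1 - x0 ^ 2) * (x0 ^ 2 + 1) ^ 2 * Real.sin (2 * α) ≠ 0 := by positivity
    have hX0 : X = 0 := by
      have hdet : (1 - x0 ^ 2) * (x0 ^ 2 + 1) ^ 2 * Real.sin (2 * α) * X = 0 := by
        linear_combination ((x0 ^ 2 + 1) ^ 2 * Real.sin (θ + 2 * α)) * F1 -
          ((x0 ^ 2 + 1) ^ 2 * Real.sin θ) * F2 - ((1 - x0 ^ 2) * (x0 ^ 2 + 1) ^ 2 * X) * key3
      exact (mul_eq_zero.mp hdet).resolve_left hdetne
    have hY0 : Y = 0 := by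
      have hdet : (1 - x0 ^ 2) * (x0 ^ 2 + 1) ^ 2 * Real.sin (2 * α) * Y = 0 := by
        linear_combination ((1 - x0 ^ 2) * Real.cos θ) * F2 -
          ((1 - x0 ^ 2) * Real.cos (θ + 2 * α)) * F1 -
          ((1 - x0 ^ 2) * (x0 ^ 2 + 1) ^ 2 * Y) * key3
      exact (mul_eq_zero.mp hdet).resolve_left hdetne
    constructor
    · refine mul_left_cancel₀ hcne ?_
      have h1 : (x0 ^ 2 + 1) * (h j).re = x0 ^ 3 + cHr := by
        rw [hX] at hX0; linarith
      rw [h1, hxh', hcHr]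
      field_simp
      ring
    · have h1 : (h j).im = cHi := by rw [hY] at hY0; linarith
      rw [h1, hcHi]; ring
  -- specialize to k and k+1
  have hk0 := hform k
  have hk1 := hform (k + 1)
  have hcast : ((k + 1 : ℤ) : ℝ) = (k : ℝ) + 1 := by push_cast; ring
  rw [hcast, show 2 * α * ((k:ℝ) + 1) + t + α = 2 * α * (k:ℝ) + t + α + 2 * α by ring] at hk1
  set φ := 2 * α * (k:ℝ) + t + α with hφ
  have hah' : ah = (x0 ^ 2 + 1) ^ 2 / (1 - x0 ^ 2) := by rw [hah, abs_of_pos hd]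
  have hahpos : 0 < ah := by rw [hah']; positivity
  have hbhpos : 0 < bh := by rw [hbh]; positivity
  have hahne : ah ≠ 0 := hahpos.ne'
  have hbhne : bh ≠ 0 := hbhpos.ne'
  have e1 : Real.cos φ = Real.cos (φ + α) * Real.cos α + Real.sin (φ + α) * Real.sin α := by
    have h1 := Real.cos_sub (φ + α) α
    rw [show φ + α - α = φ by ring] at h1
    linarith
  have e2 : Real.sin φ = Real.sin (φ + α) * Real.cos α - Real.cos (φ + α) * Real.sin α := by
    have h1 := Real.sin_sub (φ + α) α
    rw [show φ + α - α = φ by ring] at h1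
    linarith
  have e3 : Real.cos (φ + 2 * α) = Real.cos (φ + α) * Real.cos α -
      Real.sin (φ + α) * Real.sin α := by
    have h1 := Real.cos_add (φ + α) α
    rw [show φ + α + α = φ + 2 * α by ring] at h1
    linarith
  have e4 : Real.sin (φ + 2 * α) = Real.sin (φ + α) * Real.cos α +
      Real.cos (φ + α) * Real.sin α := by
    have h1 := Real.sin_add (φ + α) α
    rw [show φ + α + α = φ + 2 * α by ring] at h1
    linarith
  have hline : ∀ s : ℝ, (h k + s • (h (k + 1) - h k)).re =
      xh + ah / Real.cos α * (Real.cos (φ + α) * Real.cos α +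
        (1 - 2 * s) * (Real.sin (φ + α) * Real.sin α)) ∧
      (h k + s • (h (k + 1) - h k)).im =
      bh / Real.cos α * (Real.sin (φ + α) * Real.cos α -
        (1 - 2 * s) * (Real.cos (φ + α) * Real.sin α)) := by
    intro s
    constructor
    · rw [Complex.add_re, Complex.smul_re, smul_eq_mul, Complex.sub_re, hk0.1, hk1.1, e1, e3, hah']
      field_simp
      ring
    · rw [Complex.add_im, Complex.smul_im, smul_eq_mul, Complex.sub_im, hk0.2, hk1.2, e2, e4, hbh]
      field_simp
      ring
  have hmid : h k + (1/2 : ℝ) • (h (k + 1) - h k) =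
      (⟨xh + ah * Real.cos (φ + α), bh * Real.sin (φ + α)⟩ : ℂ) := by
    apply Complex.ext
    · rw [(hline (1/2)).1]
      show _ = xh + ah * Real.cos (φ + α)
      field_simp
      ring
    · rw [(hline (1/2)).2]
      show _ = bh * Real.sin (φ + α)
      field_simp
      ring
  refine ⟨(⟨xh + ah * Real.cos (φ + α), bh * Real.sin (φ + α)⟩ : ℂ), ⟨⟨1/2, hmid.symm⟩, ?_⟩, ?_⟩
  · show (xh + ah * Real.cos (φ + α) - xh) ^ 2 / ah ^ 2 +
      (bh * Real.sin (φ + α)) ^ 2 / bh ^ 2 = 1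
    field_simp
    linear_combination (ah ^ 2) * Real.sin_sq_add_cos_sq (φ + α)
  · rintro p ⟨⟨s, rfl⟩, hel⟩
    rw [(hline s).1, (hline s).2] at hel
    have step1 : (xh + ah / Real.cos α * (Real.cos (φ + α) * Real.cos α +
        (1 - 2 * s) * (Real.sin (φ + α) * Real.sin α)) - xh) ^ 2 / ah ^ 2 =
        (Real.cos (φ + α) * Real.cos α +
          (1 - 2 * s) * (Real.sin (φ + α) * Real.sin α)) ^ 2 / Real.cos α ^ 2 := by
      field_simp
      ring
    have step2 : (bh / Real.cos α * (Real.sin (φ + α) * Real.cos α -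
        (1 - 2 * s) * (Real.cos (φ + α) * Real.sin α))) ^ 2 / bh ^ 2 =
        (Real.sin (φ + α) * Real.cos α -
          (1 - 2 * s) * (Real.cos (φ + α) * Real.sin α)) ^ 2 / Real.cos α ^ 2 := by
      field_simp
    rw [step1, step2] at hel
    have hel3 : (Real.cos (φ + α) * Real.cos α +
          (1 - 2 * s) * (Real.sin (φ + α) * Real.sin α)) ^ 2 +
        (Real.sin (φ + α) * Real.cos α -
          (1 - 2 * s) * (Real.cos (φ + α) * Real.sin α)) ^ 2 = Real.cos α ^ 2 := by
      field_simp at hel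
      linarith
    have hq : (1 - 2 * s) ^ 2 * Real.sin α ^ 2 = 0 := by
      linear_combination hel3 - (Real.cos α ^ 2 + (1 - 2 * s) ^ 2 * Real.sin α ^ 2) *
        Real.sin_sq_add_cos_sq (φ + α)
    have hsane : Real.sin α ^ 2 ≠ 0 := by positivity
    have h1 : (1 - 2 * s) = 0 :=
      sq_eq_zero_iff.mp ((mul_eq_zero.mp hq).resolve_right hsane)
    have hs12 : s = 1/2 := by linarith
    rw [hs12]
    exact hmid
end
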